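/- arXiv:2211.02015 — 5 statements merged into one kernel-verified Lean document; each statement's English description precedes it below -/
import Mathlib

section
/- Let H be a connected bipartite graph, let (A, B, φ) be a nice triple of H, and let R ⊆ V(H) be admissible for (A, B, φ). Then for any graph G: hom(H, G; R)² ≤ hom(H, G; ψ_{A,B,φ}(R)) · hom(H, G; ψ_{B,A,φ}(R)); in particular, hom(H, G; R)² ≤ hom(H, G; ψ_{A,B,φ}(R)) · hom(H, G). -/
open SimpleGraph

/-- `hom(H, G)`: the number of graph homomorphisms from `H` to `G`. -/
noncomputable def homCount {α β : Type} (H : SimpleGraph α) (G : SimpleGraph β) : ℕ :=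
  Nat.card (H →g G)

/-- `hom(H, G; R)`: homomorphisms mapping all of `R` to one common vertex. -/
noncomputable def homCountOn {α β : Type} (H : SimpleGraph α) (G : SimpleGraph β)
    (R : Set α) : ℕ :=
  Nat.card {f : H →g G // ∃ v : β, ∀ u ∈ R, f u = v}

/-- The fixed-point set `F_φ` of a graph automorphism `φ`. -/
def FixedSet {V : Type} {H : SimpleGraph V} (φ : H ≃g H) : Set V := {v | φ v = v}

/-- `(A, B, φ)` is a nice triple of `H`: `φ` is an involutive automorphism; `A`, `B` and
`F_φ` partition `V(H)`; `F_φ` separates `A` and `B` (every walk from `A` to `B` meets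
`F_φ`); and `φ(A) = B`. -/
def IsNiceTriple {V : Type} (H : SimpleGraph V) (A B : Set V) (φ : H ≃g H) : Prop :=
  (∀ v, φ (φ v) = v) ∧
  Disjoint A B ∧ Disjoint A (FixedSet φ) ∧ Disjoint B (FixedSet φ) ∧
  A ∪ B ∪ FixedSet φ = Set.univ ∧
  (∀ a ∈ A, ∀ b ∈ B, ∀ w : H.Walk a b, ∃ v ∈ w.support, v ∈ FixedSet φ) ∧
  ⇑φ '' A = B

/-- `H` is bipartite with parts `X₁` and `X₂`. -/
def IsBipartitionOf {V : Type} (H : SimpleGraph V) (X₁ X₂ : Set V) : Prop :=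
  Disjoint X₁ X₂ ∧ X₁ ∪ X₂ = Set.univ ∧
  ∀ ⦃u v⦄, H.Adj u v → (u ∈ X₁ ∧ v ∈ X₂) ∨ (u ∈ X₂ ∧ v ∈ X₁)

/-- `R` is admissible for the nice triple `(A, B, φ)` (relative to the bipartition
`X₁, X₂` of `H`): all vertices of `R` lie in the same part, and `R` meets both
`A ∪ F_φ` and `B ∪ F_φ`. -/
def IsAdmissible {V : Type} {H : SimpleGraph V} (X₁ X₂ A B : Set V) (φ : H ≃g H)
    (R : Set V) : Prop :=
  (R ⊆ X₁ ∨ R ⊆ X₂) ∧ (R ∩ (A ∪ FixedSet φ)).Nonempty ∧ (R ∩ (B ∪ FixedSet φ)).Nonempty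

/-- `ψ_{A,B,φ}(R) = (R ∩ (A ∪ F_φ)) ∪ φ(R ∩ A)`. -/
def psiSet {V : Type} {H : SimpleGraph V} (A : Set V) (φ : H ≃g H) (R : Set V) : Set V :=
  (R ∩ (A ∪ FixedSet φ)) ∪ ⇑φ '' (R ∩ A)

/-- `H` (connected bipartite, with parts `X₁, X₂`) is reflective: every two-element
subset `R` of a part `X` can be transformed into `X` by a sequence of reflections
`R_{j+1} = ψ_{A_j,B_j,φ_j}(R_j)` along nice triples for which `R_j` is admissible. -/
def IsReflective {V : Type} (H : SimpleGraph V) (X₁ X₂ : Set V) : Prop :=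
  ∀ X : Set V, X = X₁ ∨ X = X₂ → ∀ R : Set V, R ⊆ X → R.ncard = 2 →
    ∃ (m : ℕ) (A B : ℕ → Set V) (φ : ℕ → (H ≃g H)) (Rs : ℕ → Set V),
      Rs 0 = R ∧ Rs m = X ∧
      ∀ j < m, IsNiceTriple H (A j) (B j) (φ j) ∧
        IsAdmissible X₁ X₂ (A j) (B j) (φ j) (Rs j) ∧
        Rs (j + 1) = psiSet (A j) (φ j) (Rs j)

section Aux

variable {V W : Type} (H : SimpleGraph V) (G : SimpleGraph W)

noncomputable def sideCnt (F S Rs : Set V) (τ : ↥F → W) (v : W) : ℕ :=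
  Nat.card {g : V → W //
    (∀ ⦃u w : V⦄, H.Adj u w → u ∈ S → w ∈ S → G.Adj (g u) (g w)) ∧
    (∀ x : ↥F, g x = τ x) ∧
    (∀ u, u ∈ Rs → u ∈ S → g u = v) ∧
    (∀ u, u ∉ S → g u = v)}

lemma sideCnt_congr (F S R1 R2 : Set V) (h : ∀ u ∈ S, (u ∈ R1 ↔ u ∈ R2))
    (τ : ↥F → W) (v : W) :
    sideCnt H G F S R1 τ v = sideCnt H G F S R2 τ v := by
  apply Nat.card_congr
  apply Equiv.subtypeEquivRight
  intro g
  constructor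
  · rintro ⟨h1, h2, h3, h4⟩
    exact ⟨h1, h2, fun u hu hus => h3 u ((h u hus).mpr hu) hus, h4⟩
  · rintro ⟨h1, h2, h3, h4⟩
    exact ⟨h1, h2, fun u hu hus => h3 u ((h u hus).mp hu) hus, h4⟩

lemma fiber_card (F SA SB : Set V)
    (hcov : ∀ u : V, u ∈ SA ∨ u ∈ SB)
    (hFA : F ⊆ SA) (hFB : F ⊆ SB)
    (hint : ∀ u, u ∈ SA → u ∈ SB → u ∈ F)
    (hedge : ∀ ⦃u w⦄, H.Adj u w → (u ∈ SA ∧ w ∈ SA) ∨ (u ∈ SB ∧ w ∈ SB))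
    (Rs : Set V) (τ : ↥F → W) (v : W) :
    Nat.card {f : H →g G // (∀ x : ↥F, f x = τ x) ∧ ∀ u ∈ Rs, f u = v}
      = sideCnt H G F SA Rs τ v * sideCnt H G F SB Rs τ v := by
  classical
  rw [sideCnt, sideCnt, ← Nat.card_prod]
  apply Nat.card_congr
  refine
    { toFun := fun f =>
        (⟨fun u => if u ∈ SA then f.1 u else v,
          fun u w huw hu hw => by dsimp only; simp only [if_pos hu, if_pos hw]; exact f.1.map_adj huw,
          fun x => by dsimp only; rw [if_pos (hFA x.2)]; exact f.2.1 x,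
          fun u hu hus => by dsimp only; rw [if_pos hus]; exact f.2.2 u hu,
          fun u hu => by dsimp only; rw [if_neg hu]⟩,
         ⟨fun u => if u ∈ SB then f.1 u else v,
          fun u w huw hu hw => by dsimp only; simp only [if_pos hu, if_pos hw]; exact f.1.map_adj huw,
          fun x => by dsimp only; rw [if_pos (hFB x.2)]; exact f.2.1 x,
          fun u hu hus => by dsimp only; rw [if_pos hus]; exact f.2.2 u hu,
          fun u hu => by dsimp only; rw [if_neg hu]⟩)
      invFun := fun g =>
        ⟨⟨fun u => if u ∈ SA then g.1.1 u else g.2.1 u, by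
          intro u w huw
          have hBg : ∀ z, z ∈ SB →
              (if z ∈ SA then g.1.1 z else g.2.1 z) = g.2.1 z := by
            intro z hz
            by_cases h : z ∈ SA
            · rw [if_pos h]
              have hzF : z ∈ F := hint z h hz
              exact (g.1.2.2.1 ⟨z, hzF⟩).trans (g.2.2.2.1 ⟨z, hzF⟩).symm
            · rw [if_neg h]
          rcases hedge huw with ⟨hu, hw⟩ | ⟨hu, hw⟩
          · rw [if_pos hu, if_pos hw]
            exact g.1.2.1 huw hu hw
          · rw [hBg u hu, hBg w hw]
            exact g.2.2.1 huw hu hw⟩, by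
            intro x
            show (if (x : V) ∈ SA then g.1.1 x else g.2.1 x) = τ x
            rw [if_pos (hFA x.2)]
            exact g.1.2.2.1 x, by
            intro u hu
            show (if u ∈ SA then g.1.1 u else g.2.1 u) = v
            by_cases hsa : u ∈ SA
            · rw [if_pos hsa]; exact g.1.2.2.2.1 u hu hsa
            · have hsb : u ∈ SB := (hcov u).resolve_left hsa
              rw [if_neg hsa]; exact g.2.2.2.2.1 u hu hsb⟩
      left_inv := fun f => Subtype.ext (DFunLike.ext _ _ fun u => by
        show (if u ∈ SA then (if u ∈ SA then f.1 u else v)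
              else (if u ∈ SB then f.1 u else v)) = f.1 u
        by_cases hsa : u ∈ SA
        · simp [hsa]
        · have hsb : u ∈ SB := (hcov u).resolve_left hsa
          simp [hsa, hsb])
      right_inv := fun g => by
        have h1 : (fun u => if u ∈ SA then
            (if u ∈ SA then g.1.1 u else g.2.1 u) else v) = g.1.1 := by
          funext u
          by_cases hsa : u ∈ SA
          · simp [hsa]
          · rw [if_neg hsa]; exact (g.1.2.2.2.2 u hsa).symm
        have h2 : (fun u => if u ∈ SB then
            (if u ∈ SA then g.1.1 u else g.2.1 u) else v) = g.2.1 := by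
          funext u
          by_cases hsb : u ∈ SB
          · rw [if_pos hsb]
            by_cases hsa : u ∈ SA
            · rw [if_pos hsa]
              have hzF : u ∈ F := hint u hsa hsb
              exact (g.1.2.2.1 ⟨u, hzF⟩).trans (g.2.2.2.1 ⟨u, hzF⟩).symm
            · rw [if_neg hsa]
          · rw [if_neg hsb]; exact (g.2.2.2.2.2 u hsb).symm
        exact Prod.ext (Subtype.ext h1) (Subtype.ext h2) }

lemma homCountOn_eq_sum [Fintype V] [Fintype W] (F SA SB : Set V) [Fintype ↥F]
    [DecidableEq ↥F]
    (hcov : ∀ u : V, u ∈ SA ∨ u ∈ SB)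
    (hFA : F ⊆ SA) (hFB : F ⊆ SB)
    (hint : ∀ u, u ∈ SA → u ∈ SB → u ∈ F)
    (hedge : ∀ ⦃u w⦄, H.Adj u w → (u ∈ SA ∧ w ∈ SA) ∨ (u ∈ SB ∧ w ∈ SB))
    (Rs : Set V) (r₀ : V) (hr₀ : r₀ ∈ Rs) :
    homCountOn H G Rs
      = ∑ p : (↥F → W) × W,
          sideCnt H G F SA Rs p.1 p.2 * sideCnt H G F SB Rs p.1 p.2 := by
  classical
  letI : Fintype (H →g G) := Fintype.ofFinite _
  rw [homCountOn, Nat.card_eq_fintype_card, Fintype.card_subtype]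
  rw [Finset.card_eq_sum_card_fiberwise
      (f := fun f : H →g G => ((fun x : ↥F => f x, f r₀) : (↥F → W) × W))
      (t := Finset.univ) (fun f _ => Finset.mem_univ _)]
  refine Finset.sum_congr rfl fun p _ => ?_
  rw [← fiber_card H G F SA SB hcov hFA hFB hint hedge Rs p.1 p.2,
    Nat.card_eq_fintype_card, Fintype.card_subtype]
  congr 1
  ext f
  simp only [Finset.mem_filter, Finset.mem_univ, true_and]
  constructor
  · rintro ⟨⟨v', hv'⟩, hkey⟩
    have hτ : (fun x : ↥F => f x) = p.1 := congrArg Prod.fst hkey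
    have hr : f r₀ = p.2 := congrArg Prod.snd hkey
    exact ⟨fun x => congrFun hτ x,
      fun u hu => (hv' u hu).trans ((hv' r₀ hr₀).symm.trans hr)⟩
  · rintro ⟨h1, h2⟩
    exact ⟨⟨p.2, h2⟩, Prod.ext (funext fun x => h1 x) (h2 r₀ hr₀)⟩

lemma sideCnt_psi (A B : Set V) (φ : H ≃g H)
    (hinv : ∀ u, φ (φ u) = u)
    (hAB : Disjoint A B) (hAF : Disjoint A (FixedSet φ))
    (hA : ∀ u ∈ A, φ u ∈ B) (hB : ∀ u ∈ B, φ u ∈ A)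
    (R : Set V) (τ : ↥(FixedSet φ) → W) (v : W) :
    sideCnt H G (FixedSet φ) (B ∪ FixedSet φ) (psiSet A φ R) τ v
      = sideCnt H G (FixedSet φ) (A ∪ FixedSet φ) R τ v := by
  classical
  have hSA : ∀ u ∈ A ∪ FixedSet φ, φ u ∈ B ∪ FixedSet φ := by
    rintro u (h | h)
    · exact Or.inl (hA u h)
    · rw [show φ u = u from h]; exact Or.inr h
  have hSB : ∀ u ∈ B ∪ FixedSet φ, φ u ∈ A ∪ FixedSet φ := by
    rintro u (h | h)
    · exact Or.inl (hB u h)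
    · rw [show φ u = u from h]; exact Or.inr h
  have hpsiSB : ∀ u, u ∈ psiSet A φ R → u ∈ B ∪ FixedSet φ →
      φ u ∈ R ∧ φ u ∈ A ∪ FixedSet φ := by
    rintro u (⟨huR, hAorF⟩ | ⟨r, ⟨hrR, hrA⟩, rfl⟩) hu
    · have huF : u ∈ FixedSet φ := by
        rcases hAorF with h | h
        · rcases hu with h' | h'
          · exact absurd h' (Set.disjoint_left.mp hAB h)
          · exact absurd h' (Set.disjoint_left.mp hAF h)
        · exact h
      constructor
      · rw [show φ u = u from huF]; exact huR
      · rw [show φ u = u from huF]; exact Or.inr huF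
    · constructor
      · rw [hinv r]; exact hrR
      · rw [hinv r]; exact Or.inl hrA
  have hRpsi : ∀ u, u ∈ R → u ∈ A ∪ FixedSet φ →
      φ u ∈ psiSet A φ R ∧ φ u ∈ B ∪ FixedSet φ := by
    intro u huR hu
    rcases hu with h | h
    · exact ⟨Or.inr ⟨u, ⟨huR, h⟩, rfl⟩, Or.inl (hA u h)⟩
    · constructor
      · rw [show φ u = u from h]; exact Or.inl ⟨huR, Or.inr h⟩
      · rw [show φ u = u from h]; exact Or.inr h
  rw [sideCnt, sideCnt]
  apply Nat.card_congr
  refine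
    { toFun := fun g =>
        ⟨fun u => if u ∈ A ∪ FixedSet φ then g.1 (φ u) else v, by
          intro u w huw hu hw
          dsimp only
          rw [if_pos hu, if_pos hw]
          exact g.2.1 (φ.map_adj_iff.mpr huw) (hSA u hu) (hSA w hw), by
          intro x
          dsimp only
          rw [if_pos (Set.mem_union_right _ x.2), show φ (x : V) = x from x.2]
          exact g.2.2.1 x, by
          intro u huR hu
          dsimp only
          rw [if_pos hu]
          obtain ⟨h1, h2⟩ := hRpsi u huR hu
          exact g.2.2.2.1 (φ u) h1 h2, by
          intro u hu
          dsimp only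
          rw [if_neg hu]⟩
      invFun := fun g =>
        ⟨fun u => if u ∈ B ∪ FixedSet φ then g.1 (φ u) else v, by
          intro u w huw hu hw
          dsimp only
          rw [if_pos hu, if_pos hw]
          exact g.2.1 (φ.map_adj_iff.mpr huw) (hSB u hu) (hSB w hw), by
          intro x
          dsimp only
          rw [if_pos (Set.mem_union_right _ x.2), show φ (x : V) = x from x.2]
          exact g.2.2.1 x, by
          intro u hupsi hu
          dsimp only
          rw [if_pos hu]
          obtain ⟨h1, h2⟩ := hpsiSB u hupsi hu
          exact g.2.2.2.1 (φ u) h1 h2, by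
          intro u hu
          dsimp only
          rw [if_neg hu]⟩
      left_inv := fun g => Subtype.ext (funext fun u => by
        show (if u ∈ B ∪ FixedSet φ then
            (if φ u ∈ A ∪ FixedSet φ then g.1 (φ (φ u)) else v) else v) = g.1 u
        by_cases hu : u ∈ B ∪ FixedSet φ
        · rw [if_pos hu, if_pos (hSB u hu), hinv u]
        · rw [if_neg hu]; exact (g.2.2.2.2 u hu).symm)
      right_inv := fun g => Subtype.ext (funext fun u => by
        show (if u ∈ A ∪ FixedSet φ then
            (if φ u ∈ B ∪ FixedSet φ then g.1 (φ (φ u)) else v) else v) = g.1 u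
        by_cases hu : u ∈ A ∪ FixedSet φ
        · rw [if_pos hu, if_pos (hSA u hu), hinv u]
        · rw [if_neg hu]; exact (g.2.2.2.2 u hu).symm) }

end Aux

/-- For a connected bipartite `H`, a nice triple `(A, B, φ)` and an admissible set `R`:
`hom(H,G;R)² ≤ hom(H,G;ψ_{A,B,φ}(R)) · hom(H,G;ψ_{B,A,φ}(R))`, and in particular
`hom(H,G;R)² ≤ hom(H,G;ψ_{A,B,φ}(R)) · hom(H,G)`, for any graph `G`. -/
theorem hom_sq_le_of_nice_triple {V W : Type} [Fintype V] [Fintype W]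
    (H : SimpleGraph V) (X₁ X₂ : Set V) (hbip : IsBipartitionOf H X₁ X₂)
    (hconn : H.Connected) (A B : Set V) (φ : H ≃g H)
    (hnice : IsNiceTriple H A B φ) (R : Set V)
    (hadm : IsAdmissible X₁ X₂ A B φ R) (G : SimpleGraph W) :
    homCountOn H G R ^ 2 ≤
      homCountOn H G (psiSet A φ R) * homCountOn H G (psiSet B φ R)
    ∧
    homCountOn H G R ^ 2 ≤ homCountOn H G (psiSet A φ R) * homCount H G := by
  classical
  obtain ⟨hinv, hAB, hAF, hBF, hcover, hsep, hφA⟩ := hnice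
  have hA' : ∀ u ∈ A, φ u ∈ B := fun u hu => hφA ▸ Set.mem_image_of_mem _ hu
  have hB' : ∀ u ∈ B, φ u ∈ A := by
    intro u hu
    rw [← hφA] at hu
    obtain ⟨a, ha, rfl⟩ := hu
    rw [hinv a]; exact ha
  have htri : ∀ u : V, u ∈ A ∨ u ∈ B ∨ u ∈ FixedSet φ := by
    intro u
    have hu : u ∈ A ∪ B ∪ FixedSet φ := by rw [hcover]; exact Set.mem_univ u
    rcases hu with (h | h) | h
    · exact Or.inl h
    · exact Or.inr (Or.inl h)
    · exact Or.inr (Or.inr h)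
  have hnoAB : ∀ ⦃a⦄, a ∈ A → ∀ ⦃b⦄, b ∈ B → ¬ H.Adj a b := by
    intro a ha b hb hadj
    obtain ⟨x, hx, hxF⟩ := hsep a ha b hb hadj.toWalk
    simp only [Adj.toWalk, Walk.support_cons, Walk.support_nil, List.mem_cons,
      List.mem_singleton, List.not_mem_nil, or_false] at hx
    rcases hx with rfl | rfl
    · exact Set.disjoint_left.mp hAF ha hxF
    · exact Set.disjoint_left.mp hBF hb hxF
  have hcov : ∀ u : V, u ∈ A ∪ FixedSet φ ∨ u ∈ B ∪ FixedSet φ := by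
    intro u
    rcases htri u with h | h | h
    · exact Or.inl (Set.mem_union_left _ h)
    · exact Or.inr (Set.mem_union_left _ h)
    · exact Or.inl (Set.mem_union_right _ h)
  have hFA : FixedSet φ ⊆ A ∪ FixedSet φ := Set.subset_union_right
  have hFB : FixedSet φ ⊆ B ∪ FixedSet φ := Set.subset_union_right
  have hint : ∀ u, u ∈ A ∪ FixedSet φ → u ∈ B ∪ FixedSet φ → u ∈ FixedSet φ := by
    rintro u (h | h) (h' | h')
    · exact absurd h' (Set.disjoint_left.mp hAB h)
    · exact h'
    · exact h
    · exact h
  have hedge : ∀ ⦃u w⦄, H.Adj u w →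
      (u ∈ A ∪ FixedSet φ ∧ w ∈ A ∪ FixedSet φ) ∨
      (u ∈ B ∪ FixedSet φ ∧ w ∈ B ∪ FixedSet φ) := by
    intro u w huw
    rcases htri u with hu | hu | hu <;> rcases htri w with hw | hw | hw
    · exact Or.inl ⟨Or.inl hu, Or.inl hw⟩
    · exact absurd huw (hnoAB hu hw)
    · exact Or.inl ⟨Or.inl hu, Or.inr hw⟩
    · exact absurd huw.symm (hnoAB hw hu)
    · exact Or.inr ⟨Or.inl hu, Or.inl hw⟩
    · exact Or.inr ⟨Or.inl hu, Or.inr hw⟩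
    · exact Or.inl ⟨Or.inr hu, Or.inl hw⟩
    · exact Or.inr ⟨Or.inr hu, Or.inl hw⟩
    · exact Or.inl ⟨Or.inr hu, Or.inr hw⟩
  have hpsiA : ∀ u ∈ A ∪ FixedSet φ, (u ∈ psiSet A φ R ↔ u ∈ R) := by
    intro u hu
    constructor
    · rintro (⟨h, _⟩ | ⟨r, ⟨hrR, hrA⟩, rfl⟩)
      · exact h
      · exfalso
        have hφrB : φ r ∈ B := hA' r hrA
        rcases hu with h | h
        · exact Set.disjoint_left.mp hAB h hφrB
        · exact Set.disjoint_left.mp hBF hφrB h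
    · intro h
      exact Set.mem_union_left _ ⟨h, hu⟩
  have hpsiB : ∀ u ∈ B ∪ FixedSet φ, (u ∈ psiSet B φ R ↔ u ∈ R) := by
    intro u hu
    constructor
    · rintro (⟨h, _⟩ | ⟨r, ⟨hrR, hrB⟩, rfl⟩)
      · exact h
      · exfalso
        have hφrA : φ r ∈ A := hB' r hrB
        rcases hu with h | h
        · exact Set.disjoint_left.mp hAB hφrA h
        · exact Set.disjoint_left.mp hAF hφrA h
    · intro h
      exact Set.mem_union_left _ ⟨h, hu⟩
  obtain ⟨r₀, hr₀⟩ := hadm.2.1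
  obtain ⟨r₂, hr₂⟩ := hadm.2.2
  have eqR : homCountOn H G R
      = ∑ p : (↥(FixedSet φ) → W) × W,
          sideCnt H G (FixedSet φ) (A ∪ FixedSet φ) R p.1 p.2 *
          sideCnt H G (FixedSet φ) (B ∪ FixedSet φ) R p.1 p.2 :=
    homCountOn_eq_sum H G _ _ _ hcov hFA hFB hint hedge R r₀ hr₀.1
  have eqA : homCountOn H G (psiSet A φ R)
      = ∑ p : (↥(FixedSet φ) → W) × W,
          sideCnt H G (FixedSet φ) (A ∪ FixedSet φ) R p.1 p.2 ^ 2 := by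
    rw [homCountOn_eq_sum H G _ _ _ hcov hFA hFB hint hedge (psiSet A φ R) r₀
      (Set.mem_union_left _ hr₀)]
    refine Finset.sum_congr rfl fun p _ => ?_
    rw [sideCnt_congr H G _ _ _ _ hpsiA p.1 p.2,
      sideCnt_psi H G A B φ hinv hAB hAF hA' hB' R p.1 p.2, sq]
  have eqB : homCountOn H G (psiSet B φ R)
      = ∑ p : (↥(FixedSet φ) → W) × W,
          sideCnt H G (FixedSet φ) (B ∪ FixedSet φ) R p.1 p.2 ^ 2 := by
    rw [homCountOn_eq_sum H G _ _ _ hcov hFA hFB hint hedge (psiSet B φ R) r₂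
      (Set.mem_union_left _ hr₂)]
    refine Finset.sum_congr rfl fun p _ => ?_
    rw [sideCnt_psi H G B A φ hinv hAB.symm hBF hB' hA' R p.1 p.2,
      sideCnt_congr H G _ _ _ _ hpsiB p.1 p.2, sq]
  have key1 : homCountOn H G R ^ 2 ≤
      homCountOn H G (psiSet A φ R) * homCountOn H G (psiSet B φ R) := by
    rw [eqR, eqA, eqB]
    exact Finset.sum_mul_sq_le_sq_mul_sq Finset.univ _ _
  have hle : homCountOn H G (psiSet B φ R) ≤ homCount H G := by
    rw [homCountOn, homCount]
    exact Nat.card_le_card_of_injective Subtype.val Subtype.val_injective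
  exact ⟨key1, key1.trans (Nat.mul_le_mul_left _ hle)⟩
end

section
/- Let H be a reflective connected bipartite graph and let R ⊆ X be a set of size two, where X is one of the parts of the bipartition of H. Then there is a positive integer s such that for every graph G with hom(H, G) > 0: hom(H, G; X) ≥ hom(H, G; R)^s / hom(H, G)^{s-1}. -/
set_option maxHeartbeats 1600000


open SimpleGraph

open Finset
open scoped Classical

namespace RefAux

variable {V W : Type} [Fintype V] [Fintype W]

/-- Homomorphism predicate on plain functions. -/
def IsHomFun (H : SimpleGraph V) (G : SimpleGraph W) (f : V → W) : Prop :=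
  ∀ ⦃u v⦄, H.Adj u v → G.Adj (f u) (f v)

/-- Partial homomorphism predicate: only edges inside `S` must be respected. -/
def IsHomOn (H : SimpleGraph V) (G : SimpleGraph W) (S : Set V) (f : V → W) : Prop :=
  ∀ ⦃u v⦄, H.Adj u v → u ∈ S → v ∈ S → G.Adj (f u) (f v)

noncomputable def homFin (H : SimpleGraph V) (G : SimpleGraph W) : Finset (V → W) :=
  univ.filter (fun f => IsHomFun H G f)

noncomputable def conFin (H : SimpleGraph V) (G : SimpleGraph W) (R : Set V) :
    Finset (V → W) :=
  univ.filter (fun f => IsHomFun H G f ∧ ∃ v, ∀ u ∈ R, f u = v)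

/-- Extensions on one side: functions that are partial homs on `S`, agree with `g` on
`Fx`, map `T` to `v` and are `c₀` outside `S`. -/
noncomputable def extFin (H : SimpleGraph V) (G : SimpleGraph W) (S Fx : Set V)
    (g : Fx → W) (T : Set V) (v c₀ : W) : Finset (V → W) :=
  univ.filter (fun f => IsHomOn H G S f ∧ (∀ u, ∀ h : u ∈ Fx, f u = g ⟨u, h⟩) ∧
    (∀ u ∈ T, f u = v) ∧ (∀ u ∉ S, f u = c₀))

lemma homCount_eq (H : SimpleGraph V) (G : SimpleGraph W) :
    homCount H G = (homFin H G).card := by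
  have e : (H →g G) ≃ {f : V → W // IsHomFun H G f} :=
    { toFun := fun f => ⟨f, fun _ _ h => f.map_adj h⟩
      invFun := fun f => ⟨f.1, fun h => f.2 h⟩
      left_inv := fun f => rfl
      right_inv := fun f => rfl }
  rw [homCount, Nat.card_congr e, Nat.card_eq_fintype_card, homFin]
  exact Fintype.card_subtype _

lemma homCountOn_eq (H : SimpleGraph V) (G : SimpleGraph W) (R : Set V) :
    homCountOn H G R = (conFin H G R).card := by
  have e : {f : H →g G // ∃ v : W, ∀ u ∈ R, f u = v} ≃
      {f : V → W // IsHomFun H G f ∧ ∃ v, ∀ u ∈ R, f u = v} :=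
    { toFun := fun f => ⟨f.1, fun _ _ h => f.1.map_adj h, f.2⟩
      invFun := fun f => ⟨⟨f.1, fun h => f.2.1 h⟩, f.2.2⟩
      left_inv := fun f => rfl
      right_inv := fun f => rfl }
  rw [homCountOn, Nat.card_congr e, Nat.card_eq_fintype_card, conFin]
  exact Fintype.card_subtype _

/-- The middle finset in the splitting lemma. -/
noncomputable def glueFin (H : SimpleGraph V) (G : SimpleGraph W) (Fx : Set V)
    (g : Fx → W) (TA TB : Set V) (v : W) : Finset (V → W) :=
  univ.filter (fun f => IsHomFun H G f ∧ (∀ u, ∀ h : u ∈ Fx, f u = g ⟨u, h⟩) ∧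
    (∀ u ∈ TA, f u = v) ∧ (∀ u ∈ TB, f u = v))

/-- The product (splitting) decomposition of homomorphisms along the separator. -/
lemma card_split (H : SimpleGraph V) (G : SimpleGraph W) (A B Fx : Set V)
    (hAB : Disjoint A B) (hAF : Disjoint A Fx) (hBF : Disjoint B Fx)
    (hcov : A ∪ B ∪ Fx = Set.univ)
    (hnoAB : ∀ a ∈ A, ∀ b ∈ B, ¬ H.Adj a b)
    (g : Fx → W) (TA TB : Set V) (hTA : TA ⊆ A ∪ Fx) (hTB : TB ⊆ B ∪ Fx) (v c₀ : W) :
    (glueFin H G Fx g TA TB v).card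
      = (extFin H G (A ∪ Fx) Fx g TA v c₀).card *
          (extFin H G (B ∪ Fx) Fx g TB v c₀).card := by
  have hmem : ∀ u : V, u ∈ A ∨ u ∈ B ∨ u ∈ Fx := by
    intro u
    have h := Set.eq_univ_iff_forall.mp hcov u
    simp only [Set.mem_union] at h
    tauto
  have hnAB : ∀ u, u ∈ A ∪ Fx → u ∈ B ∪ Fx → u ∈ Fx := by
    intro u hu hv
    rcases hu with hu | hu
    · rcases hv with hv | hv
      · exact absurd hv (Set.disjoint_left.mp hAB hu)
      · exact absurd hv (Set.disjoint_left.mp hAF hu)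
    · exact hu
  rw [← Finset.card_product, glueFin]
  apply Finset.card_nbij'
    (i := fun f => (fun u => if u ∈ A ∪ Fx then f u else c₀,
                    fun u => if u ∈ B ∪ Fx then f u else c₀))
    (j := fun p => fun u => if u ∈ A ∪ Fx then p.1 u else p.2 u)
  · intro f hf
    simp only [Finset.mem_coe, Finset.mem_filter, Finset.mem_univ, true_and] at hf
    obtain ⟨hhom, hg, hA', hB'⟩ := hf
    simp only [Finset.mem_coe, Finset.mem_product, extFin, Finset.mem_filter, Finset.mem_univ, true_and]
    refine ⟨⟨?_, ?_, ?_, ?_⟩, ?_, ?_, ?_, ?_⟩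
    · intro u w hadj hu hw
      simp only [if_pos hu, if_pos hw]
      exact hhom hadj
    · intro u h
      beta_reduce
      rw [if_pos (Set.mem_union_right A h)]
      exact hg u h
    · intro u hu
      beta_reduce
      rw [if_pos (hTA hu)]
      exact hA' u hu
    · intro u hu
      beta_reduce
      exact if_neg hu
    · intro u w hadj hu hw
      simp only [if_pos hu, if_pos hw]
      exact hhom hadj
    · intro u h
      beta_reduce
      rw [if_pos (Set.mem_union_right B h)]
      exact hg u h
    · intro u hu
      beta_reduce
      rw [if_pos (hTB hu)]
      exact hB' u hu
    · intro u hu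
      beta_reduce
      exact if_neg hu
  · intro p hp
    simp only [Finset.mem_coe, Finset.mem_product, extFin, Finset.mem_filter, Finset.mem_univ,
      true_and] at hp
    obtain ⟨⟨h1hom, h1g, h1T, h1n⟩, h2hom, h2g, h2T, h2n⟩ := hp
    have hqB : ∀ u ∈ B ∪ Fx,
        (if u ∈ A ∪ Fx then p.1 u else p.2 u) = p.2 u := by
      intro u hu
      by_cases h : u ∈ A ∪ Fx
      · have hF : u ∈ Fx := hnAB u h hu
        rw [if_pos h, h1g u hF, h2g u hF]
      · rw [if_neg h]
    simp only [Finset.mem_coe, Finset.mem_filter, Finset.mem_univ, true_and]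
    refine ⟨?_, ?_, ?_, ?_⟩
    · intro u w hadj
      beta_reduce
      rcases hmem u with hu | hu | hu
      · have hw : w ∈ A ∪ Fx := by
          rcases hmem w with h | h | h
          · exact Or.inl h
          · exact absurd hadj (hnoAB u hu w h)
          · exact Or.inr h
        have hu' : u ∈ A ∪ Fx := Or.inl hu
        rw [if_pos hu', if_pos hw]
        exact h1hom hadj hu' hw
      · have hw : w ∈ B ∪ Fx := by
          rcases hmem w with h | h | h
          · exact absurd hadj.symm (hnoAB w h u hu)
          · exact Or.inl h
          · exact Or.inr h
        have hu' : u ∈ B ∪ Fx := Or.inl hu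
        rw [hqB u hu', hqB w hw]
        exact h2hom hadj hu' hw
      · rcases hmem w with h | h | h
        · have hu' : u ∈ A ∪ Fx := Or.inr hu
          have hw : w ∈ A ∪ Fx := Or.inl h
          rw [if_pos hu', if_pos hw]
          exact h1hom hadj hu' hw
        · have hu' : u ∈ B ∪ Fx := Or.inr hu
          have hw : w ∈ B ∪ Fx := Or.inl h
          rw [hqB u hu', hqB w hw]
          exact h2hom hadj hu' hw
        · have hu' : u ∈ A ∪ Fx := Or.inr hu
          have hw : w ∈ A ∪ Fx := Or.inr h
          rw [if_pos hu', if_pos hw]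
          exact h1hom hadj hu' hw
    · intro u h
      beta_reduce
      rw [if_pos (Set.mem_union_right A h)]
      exact h1g u h
    · intro u hu
      beta_reduce
      rw [if_pos (hTA hu)]
      exact h1T u hu
    · intro u hu
      beta_reduce
      rw [hqB u (hTB hu)]
      exact h2T u hu
  · intro f hf
    funext u
    beta_reduce
    by_cases h : u ∈ A ∪ Fx
    · simp [h]
    · have hb : u ∈ B ∪ Fx := by
        rcases hmem u with h' | h' | h'
        · exact absurd (Or.inl h' : u ∈ A ∪ Fx) h
        · exact Or.inl h'
        · exact absurd (Or.inr h' : u ∈ A ∪ Fx) h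
      simp [h, hb]
  · intro p hp
    simp only [Finset.mem_coe, Finset.mem_product, extFin, Finset.mem_filter, Finset.mem_univ,
      true_and] at hp
    obtain ⟨⟨h1hom, h1g, h1T, h1n⟩, h2hom, h2g, h2T, h2n⟩ := hp
    have hqB : ∀ u ∈ B ∪ Fx,
        (if u ∈ A ∪ Fx then p.1 u else p.2 u) = p.2 u := by
      intro u hu
      by_cases h : u ∈ A ∪ Fx
      · have hF : u ∈ Fx := hnAB u h hu
        rw [if_pos h, h1g u hF, h2g u hF]
      · rw [if_neg h]
    have e1 : (fun u => if u ∈ A ∪ Fx then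
        (if u ∈ A ∪ Fx then p.1 u else p.2 u) else c₀) = p.1 := by
      funext u
      beta_reduce
      by_cases h : u ∈ A ∪ Fx
      · simp [h]
      · rw [if_neg h, (h1n u h).symm]
    have e2 : (fun u => if u ∈ B ∪ Fx then
        (if u ∈ A ∪ Fx then p.1 u else p.2 u) else c₀) = p.2 := by
      funext u
      beta_reduce
      by_cases h : u ∈ B ∪ Fx
      · rw [if_pos h, hqB u h]
      · rw [if_neg h, (h2n u h).symm]
    exact Prod.ext e1 e2

/-- The reflection (twist) bijection between the two sides. -/
lemma card_twist (H : SimpleGraph V) (G : SimpleGraph W) (φ : H ≃g H)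
    (hinv : ∀ x, φ (φ x) = x) (A B : Set V) (himg : ⇑φ '' A = B)
    (g : FixedSet φ → W) (T : Set V) (hT : T ⊆ B ∪ FixedSet φ) (v c₀ : W) :
    (extFin H G (B ∪ FixedSet φ) (FixedSet φ) g T v c₀).card
      = (extFin H G (A ∪ FixedSet φ) (FixedSet φ) g (⇑φ '' T) v c₀).card := by
  have hφF : ∀ x ∈ FixedSet φ, φ x = x := fun x hx => hx
  have hφA : ∀ a ∈ A, (φ : V → V) a ∈ B := by
    intro a ha
    rw [← himg]
    exact ⟨a, ha, rfl⟩
  have hφB : ∀ b ∈ B, (φ : V → V) b ∈ A := by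
    intro b hb
    rw [← himg] at hb
    obtain ⟨a, ha, rfl⟩ := hb
    rw [hinv a]
    exact ha
  have hAtoB : ∀ u, u ∈ A ∪ FixedSet φ → (φ : V → V) u ∈ B ∪ FixedSet φ := by
    intro u hu
    rcases hu with hu | hu
    · exact Or.inl (hφA u hu)
    · rw [hφF u hu]; exact Or.inr hu
  have hBtoA : ∀ u, u ∈ B ∪ FixedSet φ → (φ : V → V) u ∈ A ∪ FixedSet φ := by
    intro u hu
    rcases hu with hu | hu
    · exact Or.inl (hφB u hu)
    · rw [hφF u hu]; exact Or.inr hu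
  apply Finset.card_nbij'
    (i := fun f => fun u => if u ∈ A ∪ FixedSet φ then f ((φ : V → V) u) else c₀)
    (j := fun f => fun u => if u ∈ B ∪ FixedSet φ then f ((φ : V → V) u) else c₀)
  · intro f hf
    simp only [Finset.mem_coe, extFin, Finset.mem_filter, Finset.mem_univ, true_and] at hf ⊢
    obtain ⟨hhom, hg, hTv, hn⟩ := hf
    refine ⟨?_, ?_, ?_, ?_⟩
    · intro u w hadj hu hw
      beta_reduce
      rw [if_pos hu, if_pos hw]
      exact hhom (φ.map_adj_iff.mpr hadj) (hAtoB u hu) (hAtoB w hw)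
    · intro u h
      beta_reduce
      rw [if_pos (Set.mem_union_right A h), hφF u h]
      exact hg u h
    · rintro u ⟨t, ht, rfl⟩
      rw [if_pos (hBtoA t (hT ht)), hinv t]
      exact hTv t ht
    · intro u hu
      beta_reduce
      exact if_neg hu
  · intro f hf
    simp only [Finset.mem_coe, extFin, Finset.mem_filter, Finset.mem_univ, true_and] at hf ⊢
    obtain ⟨hhom, hg, hTv, hn⟩ := hf
    refine ⟨?_, ?_, ?_, ?_⟩
    · intro u w hadj hu hw
      beta_reduce
      rw [if_pos hu, if_pos hw]
      exact hhom (φ.map_adj_iff.mpr hadj) (hBtoA u hu) (hBtoA w hw)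
    · intro u h
      beta_reduce
      rw [if_pos (Set.mem_union_right B h), hφF u h]
      exact hg u h
    · intro u hu
      beta_reduce
      rw [if_pos (hT hu)]
      exact hTv ((φ : V → V) u) ⟨u, hu, rfl⟩
    · intro u hu
      beta_reduce
      exact if_neg hu
  · intro f hf
    simp only [Finset.mem_coe, extFin, Finset.mem_filter, Finset.mem_univ, true_and] at hf
    obtain ⟨hhom, hg, hTv, hn⟩ := hf
    funext u
    beta_reduce
    by_cases h : u ∈ B ∪ FixedSet φ
    · rw [if_pos h, if_pos (hBtoA u h), hinv u]
    · rw [if_neg h, (hn u h).symm]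
  · intro f hf
    simp only [Finset.mem_coe, extFin, Finset.mem_filter, Finset.mem_univ, true_and] at hf
    obtain ⟨hhom, hg, hTv, hn⟩ := hf
    funext u
    beta_reduce
    by_cases h : u ∈ A ∪ FixedSet φ
    · rw [if_pos h, if_pos (hAtoB u h), hinv u]
    · rw [if_neg h, (hn u h).symm]

/-- The key reflection inequality: one step of the Cauchy–Schwarz argument. -/
lemma step (H : SimpleGraph V) (G : SimpleGraph W) [Nonempty W]
    (A B : Set V) (φ : H ≃g H) (R : Set V)
    (hnice : IsNiceTriple H A B φ)
    (h1 : (R ∩ (A ∪ FixedSet φ)).Nonempty) (h2 : (R ∩ (B ∪ FixedSet φ)).Nonempty) :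
    (conFin H G R).card ^ 2 ≤ (conFin H G (psiSet A φ R)).card * (homFin H G).card := by
  obtain ⟨hinv, hAB, hAF, hBF, hcov, hsep, himg⟩ := hnice
  obtain ⟨r₀, hr₀R, hr₀AF⟩ := h1
  obtain ⟨r₁, hr₁R, hr₁BF⟩ := h2
  set Fx := FixedSet φ with hFxdef
  have hφF : ∀ x ∈ Fx, (φ : V → V) x = x := fun x hx => hx
  have hmem : ∀ u : V, u ∈ A ∨ u ∈ B ∨ u ∈ Fx := by
    intro u
    have h := Set.eq_univ_iff_forall.mp hcov u
    simp only [Set.mem_union] at h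
    tauto
  have hnoAB : ∀ a ∈ A, ∀ b ∈ B, ¬ H.Adj a b := by
    intro a ha b hb hadj
    obtain ⟨x, hx, hxF⟩ := hsep a ha b hb hadj.toWalk
    simp only [Adj.toWalk, Walk.support_cons, Walk.support_nil, List.mem_cons,
      List.mem_singleton, List.not_mem_nil, or_false] at hx
    rcases hx with rfl | rfl
    · exact Set.disjoint_left.mp hAF ha hxF
    · exact Set.disjoint_left.mp hBF hb hxF
  set c₀ : W := Classical.arbitrary W with hc₀
  set aa : (Fx → W) → W → ℕ :=
    fun g v => (extFin H G (A ∪ Fx) Fx g (R ∩ (A ∪ Fx)) v c₀).card with haa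
  set bb : (Fx → W) → W → ℕ :=
    fun g v => (extFin H G (B ∪ Fx) Fx g (R ∩ (B ∪ Fx)) v c₀).card with hbb
  set cc : (Fx → W) → ℕ :=
    fun g => (extFin H G (B ∪ Fx) Fx g (∅ : Set V) c₀ c₀).card with hcc
  -- D0 : decomposition of hom(H,G;R)
  have D0 : (conFin H G R).card = ∑ g : Fx → W, ∑ v : W, aa g v * bb g v := by
    rw [Finset.card_eq_sum_card_fiberwise
      (f := fun f : V → W => ((fun u : Fx => f u), f r₀))
      (t := (univ : Finset ((Fx → W) × W))) (fun x _ => mem_univ _),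
      Fintype.sum_prod_type]
    refine Finset.sum_congr rfl fun g _ => Finset.sum_congr rfl fun v _ => ?_
    have hfib : (conFin H G R).filter
        (fun f => ((fun u : Fx => f u), f r₀) = (g, v))
        = glueFin H G Fx g (R ∩ (A ∪ Fx)) (R ∩ (B ∪ Fx)) v := by
      ext f
      simp only [conFin, glueFin, Finset.mem_filter, Finset.mem_univ, true_and,
        Prod.mk.injEq]
      constructor
      · rintro ⟨⟨hhom, w, hw⟩, hg, hv⟩
        refine ⟨hhom, fun u h => congrFun hg ⟨u, h⟩, ?_, ?_⟩
        · intro u hu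
          rw [hw u hu.1, ← hv, hw r₀ hr₀R]
        · intro u hu
          rw [hw u hu.1, ← hv, hw r₀ hr₀R]
      · rintro ⟨hhom, hg, hTA, hTB⟩
        have hcst : ∀ u ∈ R, f u = v := by
          intro u hu
          rcases hmem u with h | h | h
          · exact hTA u ⟨hu, Or.inl h⟩
          · exact hTB u ⟨hu, Or.inl h⟩
          · exact hTA u ⟨hu, Or.inr h⟩
        exact ⟨⟨hhom, v, hcst⟩, funext fun u => hg u.1 u.2, hcst r₀ hr₀R⟩
    rw [hfib]
    exact card_split H G A B Fx hAB hAF hBF hcov hnoAB g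
      (R ∩ (A ∪ Fx)) (R ∩ (B ∪ Fx)) Set.inter_subset_right Set.inter_subset_right v c₀
  -- image identity used for D0'
  have himgTB : (φ : V → V) '' ((φ : V → V) '' (R ∩ A) ∪ (R ∩ Fx)) = R ∩ (A ∪ Fx) := by
    rw [Set.image_union]
    have e1 : (φ : V → V) '' ((φ : V → V) '' (R ∩ A)) = R ∩ A := by
      ext x
      constructor
      · rintro ⟨y, ⟨z, hz, rfl⟩, rfl⟩
        rw [hinv z]
        exact hz
      · intro hx
        exact ⟨(φ : V → V) x, ⟨x, hx, rfl⟩, hinv x⟩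
    have e2 : (φ : V → V) '' (R ∩ Fx) = R ∩ Fx := by
      ext x
      constructor
      · rintro ⟨y, hy, rfl⟩
        rw [hφF y hy.2]
        exact hy
      · intro hx
        exact ⟨x, hx, hφF x hx.2⟩
    rw [e1, e2, ← Set.inter_union_distrib_left]
  have hTB'sub : (φ : V → V) '' (R ∩ A) ∪ (R ∩ Fx) ⊆ B ∪ Fx := by
    rintro u (⟨a, ha, rfl⟩ | hu)
    · left
      rw [← himg]
      exact ⟨a, ha.2, rfl⟩
    · exact Or.inr hu.2
  have hr₀psi : r₀ ∈ psiSet A φ R := Or.inl ⟨hr₀R, hr₀AF⟩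
  -- D0' : decomposition of hom(H,G;ψ(R))
  have D0' : (conFin H G (psiSet A φ R)).card = ∑ g : Fx → W, ∑ v : W, aa g v ^ 2 := by
    rw [Finset.card_eq_sum_card_fiberwise
      (f := fun f : V → W => ((fun u : Fx => f u), f r₀))
      (t := (univ : Finset ((Fx → W) × W))) (fun x _ => mem_univ _),
      Fintype.sum_prod_type]
    refine Finset.sum_congr rfl fun g _ => Finset.sum_congr rfl fun v _ => ?_
    have hfib : (conFin H G (psiSet A φ R)).filter
        (fun f => ((fun u : Fx => f u), f r₀) = (g, v))
        = glueFin H G Fx g (R ∩ (A ∪ Fx)) ((φ : V → V) '' (R ∩ A) ∪ (R ∩ Fx)) v := by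
      ext f
      simp only [conFin, glueFin, Finset.mem_filter, Finset.mem_univ, true_and,
        Prod.mk.injEq]
      constructor
      · rintro ⟨⟨hhom, w, hw⟩, hg, hv⟩
        have hwv : ∀ u ∈ psiSet A φ R, f u = v := by
          intro u hu
          rw [hw u hu, ← hv, hw r₀ hr₀psi]
        refine ⟨hhom, fun u h => congrFun hg ⟨u, h⟩, ?_, ?_⟩
        · intro u hu
          exact hwv u (Or.inl hu)
        · rintro u (hu | hu)
          · exact hwv u (Or.inr hu)
          · exact hwv u (Or.inl ⟨hu.1, Or.inr hu.2⟩)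
      · rintro ⟨hhom, hg, hTA, hTB⟩
        have hcst : ∀ u ∈ psiSet A φ R, f u = v := by
          rintro u (hu | hu)
          · exact hTA u hu
          · exact hTB u (Or.inl hu)
        exact ⟨⟨hhom, v, hcst⟩, funext fun u => hg u.1 u.2, hcst r₀ hr₀psi⟩
    rw [hfib, card_split H G A B Fx hAB hAF hBF hcov hnoAB g
      (R ∩ (A ∪ Fx)) ((φ : V → V) '' (R ∩ A) ∪ (R ∩ Fx))
      Set.inter_subset_right hTB'sub v c₀,
      card_twist H G φ hinv A B himg g _ hTB'sub v c₀, himgTB, pow_two]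
  -- D1 : decomposition of hom(H,G)
  have D1 : (homFin H G).card = ∑ g : Fx → W, cc g * cc g := by
    rw [Finset.card_eq_sum_card_fiberwise
      (f := fun f : V → W => (fun u : Fx => f u))
      (t := (univ : Finset (Fx → W))) (fun x _ => mem_univ _)]
    refine Finset.sum_congr rfl fun g _ => ?_
    have hfib : (homFin H G).filter (fun f => (fun u : Fx => f u) = g)
        = glueFin H G Fx g (∅ : Set V) (∅ : Set V) c₀ := by
      ext f
      simp only [homFin, glueFin, Finset.mem_filter, Finset.mem_univ, true_and,
        Set.mem_empty_iff_false, false_implies, implies_true, and_true]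
      constructor
      · rintro ⟨hhom, hg⟩
        exact ⟨hhom, fun u h => congrFun hg ⟨u, h⟩⟩
      · rintro ⟨hhom, hg⟩
        exact ⟨hhom, funext fun u => hg u.1 u.2⟩
    have htw : (extFin H G (B ∪ Fx) Fx g (∅ : Set V) c₀ c₀).card
        = (extFin H G (A ∪ Fx) Fx g (∅ : Set V) c₀ c₀).card := by
      have h' := card_twist H G φ hinv A B himg g ∅ (Set.empty_subset _) c₀ c₀
      rwa [Set.image_empty] at h'
    rw [hfib, card_split H G A B Fx hAB hAF hBF hcov hnoAB g ∅ ∅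
      (Set.empty_subset _) (Set.empty_subset _) c₀ c₀, ← htw]
  -- D2 : the B-side sums are dominated
  have D2 : ∀ g : Fx → W, ∑ v : W, bb g v ≤ cc g := by
    intro g
    have hM : (univ.filter (fun f : V → W => IsHomOn H G (B ∪ Fx) f ∧
        (∀ u, ∀ h : u ∈ Fx, f u = g ⟨u, h⟩) ∧
        (∃ w, ∀ u ∈ R ∩ (B ∪ Fx), f u = w) ∧ (∀ u ∉ B ∪ Fx, f u = c₀))).card
        = ∑ v : W, bb g v := by
      rw [Finset.card_eq_sum_card_fiberwise (f := fun f : V → W => f r₁)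
        (t := (univ : Finset W)) (fun x _ => mem_univ _)]
      refine Finset.sum_congr rfl fun v _ => ?_
      have hfib : (univ.filter (fun f : V → W => IsHomOn H G (B ∪ Fx) f ∧
          (∀ u, ∀ h : u ∈ Fx, f u = g ⟨u, h⟩) ∧
          (∃ w, ∀ u ∈ R ∩ (B ∪ Fx), f u = w) ∧
          (∀ u ∉ B ∪ Fx, f u = c₀))).filter (fun f => f r₁ = v)
          = extFin H G (B ∪ Fx) Fx g (R ∩ (B ∪ Fx)) v c₀ := by
        ext f
        simp only [extFin, Finset.mem_filter, Finset.mem_univ, true_and]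
        constructor
        · rintro ⟨⟨hhom, hg, ⟨w, hw⟩, hn⟩, hv⟩
          refine ⟨hhom, hg, ?_, hn⟩
          intro u hu
          rw [hw u hu, ← hv, hw r₁ ⟨hr₁R, hr₁BF⟩]
        · rintro ⟨hhom, hg, hT, hn⟩
          exact ⟨⟨hhom, hg, ⟨v, hT⟩, hn⟩, hT r₁ ⟨hr₁R, hr₁BF⟩⟩
      rw [hfib]
    rw [← hM]
    apply Finset.card_le_card
    intro f hf
    simp only [Finset.mem_filter, Finset.mem_univ, true_and, extFin,
      Set.mem_empty_iff_false, false_implies, implies_true, true_and] at hf ⊢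
    exact ⟨hf.1, hf.2.1, hf.2.2.2⟩
  -- combine
  have hb2 : ∑ g : Fx → W, ∑ v : W, bb g v ^ 2 ≤ (homFin H G).card := by
    rw [D1]
    apply Finset.sum_le_sum
    intro g _
    have h1' : ∑ v : W, bb g v ^ 2 ≤ (∑ v : W, bb g v) * (∑ v : W, bb g v) := by
      rw [Finset.sum_mul]
      apply Finset.sum_le_sum
      intro v _
      rw [pow_two]
      exact Nat.mul_le_mul_left _
        (Finset.single_le_sum (fun _ _ => Nat.zero_le _) (mem_univ v))
    exact le_trans h1' (Nat.mul_le_mul (D2 g) (D2 g))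
  have CS : (∑ g : Fx → W, ∑ v : W, aa g v * bb g v) ^ 2
      ≤ (∑ g : Fx → W, ∑ v : W, aa g v ^ 2) * (∑ g : Fx → W, ∑ v : W, bb g v ^ 2) := by
    have h := Finset.sum_mul_sq_le_sq_mul_sq (univ : Finset ((Fx → W) × W))
      (fun p => aa p.1 p.2) (fun p => bb p.1 p.2)
    simpa [Fintype.sum_prod_type] using h
  calc (conFin H G R).card ^ 2
      = (∑ g : Fx → W, ∑ v : W, aa g v * bb g v) ^ 2 := by rw [D0]
    _ ≤ (∑ g : Fx → W, ∑ v : W, aa g v ^ 2) * (∑ g : Fx → W, ∑ v : W, bb g v ^ 2) := CS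
    _ = (conFin H G (psiSet A φ R)).card * (∑ g : Fx → W, ∑ v : W, bb g v ^ 2) := by
        rw [D0']
    _ ≤ (conFin H G (psiSet A φ R)).card * (homFin H G).card :=
        Nat.mul_le_mul_left _ hb2

lemma pow_chain (N m : ℕ) (c : ℕ → ℕ) (h : ∀ j < m, c j ^ 2 ≤ c (j + 1) * N) :
    c 0 ^ 2 ^ m ≤ c m * N ^ (2 ^ m - 1) := by
  induction m with
  | zero => simpa using le_rfl
  | succ k ih =>
    have ihk := ih (fun j hj => h j (Nat.lt_succ_of_lt hj))
    have h2 : 1 ≤ 2 ^ k := Nat.one_le_pow k 2 (by norm_num)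
    calc c 0 ^ 2 ^ (k + 1) = (c 0 ^ 2 ^ k) ^ 2 := by rw [← pow_mul, pow_succ]
      _ ≤ (c k * N ^ (2 ^ k - 1)) ^ 2 := Nat.pow_le_pow_left ihk 2
      _ = c k ^ 2 * (N ^ (2 ^ k - 1)) ^ 2 := mul_pow _ _ _
      _ ≤ (c (k + 1) * N) * (N ^ (2 ^ k - 1)) ^ 2 :=
          mul_le_mul_left (h k (Nat.lt_succ_self k)) _
      _ = c (k + 1) * N ^ (2 ^ (k + 1) - 1) := by
          have e2 : 2 ^ (k + 1) = 2 ^ k * 2 := pow_succ 2 k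
          have e : 2 ^ (k + 1) - 1 = (2 ^ k - 1) * 2 + 1 := by omega
          rw [mul_assoc, ← pow_mul, ← pow_succ', e]

end RefAux

/-- If `H` is a reflective connected bipartite graph and `R ⊆ X` has size two, where `X`
is one of the parts of `H`, then there is a positive integer `s` such that for every
graph `G` with `hom(H, G) > 0`:
`hom(H, G; X) ≥ hom(H, G; R)^s / hom(H, G)^(s-1)`. -/
theorem hom_part_ge_of_reflective {V : Type} [Fintype V] (H : SimpleGraph V)
    (X₁ X₂ : Set V) (hbip : IsBipartitionOf H X₁ X₂) (hconn : H.Connected)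
    (hrefl : IsReflective H X₁ X₂) (X : Set V) (hX : X = X₁ ∨ X = X₂)
    (R : Set V) (hRX : R ⊆ X) (hR : R.ncard = 2) :
    ∃ s : ℕ, 0 < s ∧ ∀ (W : Type) [Fintype W] (G : SimpleGraph W),
      0 < homCount H G →
      (homCountOn H G R : ℝ) ^ s / (homCount H G : ℝ) ^ (s - 1) ≤
        (homCountOn H G X : ℝ) := by
  obtain ⟨m, A, B, φ, Rs, h0, hm, hstep⟩ := hrefl X hX R hRX hR
  refine ⟨2 ^ m, Nat.pow_pos (by norm_num), ?_⟩
  intro W _ G hpos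
  have hRne : R.Nonempty := Set.nonempty_of_ncard_ne_zero (by rw [hR]; norm_num)
  obtain ⟨r, hr⟩ := hRne
  have hVne : Nonempty V := ⟨r⟩
  have hhne : Nonempty (H →g G) := by
    rw [homCount] at hpos
    exact (Nat.card_pos_iff.mp hpos).1
  have hWne : Nonempty W := ⟨(Classical.arbitrary (H →g G)) r⟩
  have key : (RefAux.conFin H G R).card ^ 2 ^ m
      ≤ (RefAux.conFin H G X).card * (RefAux.homFin H G).card ^ (2 ^ m - 1) := by
    have hc := RefAux.pow_chain (RefAux.homFin H G).card m
      (fun j => (RefAux.conFin H G (Rs j)).card) ?_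
    · simpa only [h0, hm] using hc
    · intro j hj
      obtain ⟨hnice, hadm, hpsi⟩ := hstep j hj
      simp only [hpsi]
      exact RefAux.step H G (A j) (B j) (φ j) (Rs j) hnice hadm.2.1 hadm.2.2
  have hpos' : 0 < (RefAux.homFin H G).card := by
    rw [← RefAux.homCount_eq]
    exact hpos
  rw [RefAux.homCount_eq H G, RefAux.homCountOn_eq H G R, RefAux.homCountOn_eq H G X]
  rw [div_le_iff₀ (by positivity)]
  exact_mod_cast key
end

section
/- Let H be a reflective connected bipartite graph which satisfies Sidorenko's conjecture, and let K ≥ 1. Then there are positive constants c = c(H) and C = C(H, K) such that: if G is a K-almost regular bipartite n-vertex graph with edge density p satisfying n^{v(H)} · p^{e(H)} ≥ C · n · (pn)^t, where t is the size of the larger part of the bipartition of H, then G contains at least c · n^{v(H)} · p^{e(H)} copies of H. -/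
open SimpleGraph

/-- `H` satisfies Sidorenko's conjecture: for every `n`-vertex graph `G` with edge
density `p`, `hom(H, G) ≥ n^(v(H)) · p^(e(H))`. -/
def SatisfiesSidorenko {V : Type} [Fintype V] (H : SimpleGraph V) : Prop :=
  ∀ (n : ℕ) (G : SimpleGraph (Fin n)) (p : ℝ),
    (G.edgeSet.ncard : ℝ) = p * (n : ℝ) ^ 2 / 2 →
    (n : ℝ) ^ (Fintype.card V) * p ^ (H.edgeSet.ncard) ≤ (homCount H G : ℝ)

/-- The number of copies of `H` in `G`, i.e. the number of subgraphs of `G`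
isomorphic to `H`. -/
noncomputable def copyCount {α β : Type} (H : SimpleGraph α) (G : SimpleGraph β) : ℕ :=
  Set.ncard {G' : G.Subgraph | Nonempty (H ≃g G'.coe)}

/-- The degree of the vertex `v` in `G`. -/
noncomputable def deg {V : Type} (G : SimpleGraph V) (v : V) : ℕ :=
  (G.neighborSet v).ncard

/-- `G` is bipartite. -/
def IsBipartite {V : Type} (G : SimpleGraph V) : Prop :=
  ∃ X : Set V, ∀ ⦃u v⦄, G.Adj u v → (u ∈ X ↔ v ∉ X)

open Classical in
noncomputable instance fintypeGraphHom {V W : Type} [Fintype V] [Fintype W]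
    (H : SimpleGraph V) (G : SimpleGraph W) : Fintype (H →g G) :=
  Fintype.ofInjective (fun f => (f : V → W)) DFunLike.coe_injective

section Glue
open Classical

variable {V : Type} {n : ℕ} {H : SimpleGraph V} {G : SimpleGraph (Fin n)}

/-- classical piecewise -/
noncomputable def pcw (S : Set V) (f₁ f₂ : V → Fin n) : V → Fin n :=
  fun x => @ite _ (x ∈ S) (Classical.dec _) (f₁ x) (f₂ x)

lemma pcw_mem {S : Set V} {f₁ f₂ : V → Fin n} {x : V} (hx : x ∈ S) :
    pcw S f₁ f₂ x = f₁ x := if_pos hx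

lemma pcw_not {S : Set V} {f₁ f₂ : V → Fin n} {x : V} (hx : x ∉ S) :
    pcw S f₁ f₂ x = f₂ x := if_neg hx

/-- glue two homs along a set `S`: `f₁` on `S`, `f₂` off `S` (if it is a hom). -/
noncomputable def glHom (S : Set V) (f₁ f₂ : H →g G) : H →g G :=
  @dite _ (∀ ⦃x y⦄, H.Adj x y → G.Adj (pcw S f₁ f₂ x) (pcw S f₁ f₂ y)) (Classical.dec _)
  (fun h => RelHom.mk (pcw S f₁ f₂) (fun {x y} hadj => h hadj))
  (fun _ => f₁)

/-- compose with the automorphism φ. -/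
def tauHom (φ : H ≃g H) (f : H →g G) : H →g G := f.comp φ.toEmbedding.toHom

@[simp] lemma tauHom_apply (φ : H ≃g H) (f : H →g G) (x : V) : tauHom φ f x = f (φ x) := rfl

variable {A B : Set V} {φ : H ≃g H}

namespace IsNiceTriple

variable (hn : IsNiceTriple H A B φ)
include hn

lemma invol (x : V) : φ (φ x) = x := hn.1 x

lemma mem_B_of_not {x : V} (hx : x ∉ A ∪ FixedSet φ) : x ∈ B := by
  have h5 := hn.2.2.2.2.1
  have hxu : x ∈ A ∪ B ∪ FixedSet φ := h5 ▸ Set.mem_univ x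
  rcases hxu with (h | h) | h
  · exact absurd (Set.mem_union_left _ h) hx
  · exact h
  · exact absurd (Set.mem_union_right _ h) hx

lemma not_S_of_B {x : V} (hx : x ∈ B) : x ∉ A ∪ FixedSet φ := by
  rintro (h | h)
  · exact Set.disjoint_right.mp hn.2.1 hx h
  · exact Set.disjoint_left.mp hn.2.2.2.1 hx h

lemma phi_mem_B {x : V} (hx : x ∈ A) : φ x ∈ B := by
  have h7 := hn.2.2.2.2.2.2
  exact h7 ▸ Set.mem_image_of_mem _ hx

lemma phi_mem_A {x : V} (hx : x ∈ B) : φ x ∈ A := by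
  have h7 := hn.2.2.2.2.2.2
  rw [← h7] at hx
  obtain ⟨a, ha, hax⟩ := hx
  rw [← hax, hn.1 a]; exact ha

lemma no_edge {a b : V} (ha : a ∈ A) (hb : b ∈ B) : ¬ H.Adj a b := by
  intro hadj
  obtain ⟨v, hv, hvF⟩ := hn.2.2.2.2.2.1 a ha b hb (SimpleGraph.Walk.cons hadj SimpleGraph.Walk.nil)
  simp only [SimpleGraph.Walk.support_cons, SimpleGraph.Walk.support_nil,
    List.mem_cons, List.mem_singleton, List.not_mem_nil] at hv
  rcases hv with rfl | rfl | h
  · exact Set.disjoint_left.mp hn.2.2.1 ha hvF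
  · exact Set.disjoint_left.mp hn.2.2.2.1 hb hvF
  · exact h.elim

variable {f₁ f₂ : H →g G} (hagree : ∀ x ∈ FixedSet φ, f₁ x = f₂ x)
include hagree

lemma gl_cond : ∀ ⦃x y⦄, H.Adj x y →
      G.Adj (pcw (A ∪ FixedSet φ) f₁ f₂ x) (pcw (A ∪ FixedSet φ) f₁ f₂ y) := by
  intro x y hadj
  by_cases hx : x ∈ A ∪ FixedSet φ <;> by_cases hy : y ∈ A ∪ FixedSet φ <;>
    simp only [pcw_mem, pcw_not, hx, hy, not_false_iff]
  · exact f₁.map_adj hadj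
  · have hyB := hn.mem_B_of_not hy
    rcases hx with hxA | hxF
    · exact absurd hadj (hn.no_edge hxA hyB)
    · rw [hagree x hxF]; exact f₂.map_adj hadj
  · have hxB := hn.mem_B_of_not hx
    rcases hy with hyA | hyF
    · exact absurd hadj.symm (hn.no_edge hyA hxB)
    · rw [hagree y hyF]; exact f₂.map_adj hadj
  · exact f₂.map_adj hadj

lemma gl_coe :
    ⇑(glHom (A ∪ FixedSet φ) f₁ f₂) = pcw (A ∪ FixedSet φ) f₁ f₂ := by
  have h : glHom (A ∪ FixedSet φ) f₁ f₂ = RelHom.mk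
      (pcw (A ∪ FixedSet φ) (⇑f₁) (⇑f₂))
      (fun {x y} hadj => hn.gl_cond hagree hadj) := by
    unfold glHom; exact dif_pos (hn.gl_cond hagree)
  rw [h]; rfl

lemma gl_apply_mem {x : V} (hx : x ∈ A ∪ FixedSet φ) :
    glHom (A ∪ FixedSet φ) f₁ f₂ x = f₁ x := by
  rw [hn.gl_coe hagree]; exact pcw_mem hx

lemma gl_apply_not {x : V} (hx : x ∉ A ∪ FixedSet φ) :
    glHom (A ∪ FixedSet φ) f₁ f₂ x = f₂ x := by
  rw [hn.gl_coe hagree]; exact pcw_not hx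

end IsNiceTriple
end Glue
section Step

variable {V : Type} {n : ℕ} {H : SimpleGraph V} {G : SimpleGraph (Fin n)}
variable {A B : Set V} {φ : H ≃g H}

/-- A-side symmetrization of a hom. -/
noncomputable def rhoA (A : Set V) (φ : H ≃g H) (f : H →g G) : H →g G :=
  glHom (A ∪ FixedSet φ) f (tauHom φ f)

/-- B-side symmetrization of a hom. -/
noncomputable def rhoB (A : Set V) (φ : H ≃g H) (f : H →g G) : H →g G :=
  glHom (A ∪ FixedSet φ) (tauHom φ f) f

namespace IsNiceTriple

variable (hn : IsNiceTriple H A B φ)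
include hn

lemma hag_tau (f : H →g G) : ∀ x ∈ FixedSet φ, f x = tauHom φ f x := by
  intro x hx
  have h : φ x = x := hx
  rw [tauHom_apply, h]

lemma hag_tau' (f : H →g G) : ∀ x ∈ FixedSet φ, tauHom φ f x = f x := by
  intro x hx; exact (hn.hag_tau f x hx).symm

lemma mem_S_of_not_B {x : V} (hx : x ∉ B) : x ∈ A ∪ FixedSet φ := by
  have h5 := hn.2.2.2.2.1
  have hxu : x ∈ A ∪ B ∪ FixedSet φ := h5 ▸ Set.mem_univ x
  rcases hxu with (h | h) | h
  · exact Set.mem_union_left _ h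
  · exact absurd h hx
  · exact Set.mem_union_right _ h

lemma rhoA_mem (f : H →g G) {x : V} (hx : x ∈ A ∪ FixedSet φ) : rhoA A φ f x = f x :=
  hn.gl_apply_mem (hn.hag_tau f) hx

lemma rhoA_B (f : H →g G) {x : V} (hx : x ∈ B) : rhoA A φ f x = f (φ x) := by
  rw [rhoA, hn.gl_apply_not (hn.hag_tau f) (hn.not_S_of_B hx), tauHom_apply]

lemma rhoB_A (f : H →g G) {x : V} (hx : x ∈ A) : rhoB A φ f x = f (φ x) := by
  rw [rhoB, hn.gl_apply_mem (hn.hag_tau' f) (Set.mem_union_left _ hx), tauHom_apply]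

lemma rhoB_F (f : H →g G) {x : V} (hx : x ∈ FixedSet φ) : rhoB A φ f x = f x := by
  rw [rhoB, hn.gl_apply_mem (hn.hag_tau' f) (Set.mem_union_right _ hx), tauHom_apply]
  have h : φ x = x := hx
  rw [h]

lemma rhoB_B (f : H →g G) {x : V} (hx : x ∈ B) : rhoB A φ f x = f x := by
  rw [rhoB, hn.gl_apply_not (hn.hag_tau' f) (hn.not_S_of_B hx)]

end IsNiceTriple

open Finset in
lemma step_ineq {V : Type} [Fintype V] {H : SimpleGraph V} {n : ℕ} {G : SimpleGraph (Fin n)}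
    {A B : Set V} {φ : H ≃g H} (hn : IsNiceTriple H A B φ) {R : Set V}
    (h1 : (R ∩ (A ∪ FixedSet φ)).Nonempty) (h2 : (R ∩ (B ∪ FixedSet φ)).Nonempty) :
    homCountOn H G R ^ 2 ≤ homCountOn H G (psiSet A φ R) * homCount H G := by
  classical
  obtain ⟨r₀, hr₀⟩ := h1
  obtain ⟨r₁, hr₁⟩ := h2
  set F : Set V := FixedSet φ with hFdef
  let I := ((↥F → Fin n) × Fin n)
  let idx : (H →g G) → I := fun f => (fun x => f ↑x, f r₀)
  let sR : Finset (H →g G) := univ.filter (fun f => ∃ w, ∀ x ∈ R, f x = w)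
  let sPsi : Finset (H →g G) := univ.filter (fun f => ∃ w, ∀ x ∈ psiSet A φ R, f x = w)
  let sa : I → Finset (H →g G) := fun i => univ.filter
    (fun f => (∀ x : ↥F, f ↑x = i.1 x) ∧ (∀ x ∈ R ∩ (A ∪ F), f x = i.2) ∧
      (∀ x ∈ B, f x = f (φ x)))
  let sb : I → Finset (H →g G) := fun i => univ.filter
    (fun f => (∀ x : ↥F, f ↑x = i.1 x) ∧ (∀ x ∈ R ∩ (B ∪ F), f x = i.2) ∧
      (∀ x ∈ A, f x = f (φ x)))
  have hcR : homCountOn H G R = sR.card := by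
    rw [homCountOn, Nat.card_eq_fintype_card, Fintype.card_subtype]
  have hcPsi : homCountOn H G (psiSet A φ R) = sPsi.card := by
    rw [homCountOn, Nat.card_eq_fintype_card, Fintype.card_subtype]
  have hcH : homCount H G = (univ : Finset (H →g G)).card := by
    rw [homCount, Nat.card_eq_fintype_card, card_univ]
  -- key 1 : sR.card ≤ ∑ a·b
  have key1 : sR.card ≤ ∑ i : I, (sa i).card * (sb i).card := by
    rw [card_eq_sum_card_fiberwise (f := idx) (t := univ) (fun x _ => mem_univ _)]
    apply sum_le_sum
    intro i _
    rw [← card_product]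
    apply card_le_card_of_injOn (fun f => (rhoA A φ f, rhoB A φ f))
    · intro f hf
      simp only [sR, mem_coe, mem_filter, mem_univ, true_and, idx] at hf
      obtain ⟨⟨w, hw⟩, hidx⟩ := hf
      have hi1 : ∀ x : ↥F, f ↑x = i.1 x := by
        intro x; rw [← hidx]
      have hi2 : f r₀ = i.2 := by rw [← hidx]
      have hcomm : ∀ x ∈ R, f x = i.2 := by
        intro x hx; rw [hw x hx, ← hi2, hw r₀ hr₀.1]
      simp only [mem_coe, mem_product, sa, sb, mem_filter, mem_univ, true_and]
      refine ⟨⟨?_, ?_, ?_⟩, ?_, ?_, ?_⟩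
      · intro x; rw [hn.rhoA_mem f (Set.mem_union_right _ x.2)]; exact hi1 x
      · intro x hx; rw [hn.rhoA_mem f hx.2]; exact hcomm x hx.1
      · intro x hx
        rw [hn.rhoA_B f hx, hn.rhoA_mem f (Set.mem_union_left _ (hn.phi_mem_A hx))]
      · intro x; rw [hn.rhoB_F f x.2]; exact hi1 x
      · intro x hx
        rcases hx.2 with hB | hF
        · rw [hn.rhoB_B f hB]; exact hcomm x hx.1
        · rw [hn.rhoB_F f hF]; exact hcomm x hx.1
      · intro x hx
        rw [hn.rhoB_A f hx, hn.rhoB_B f (hn.phi_mem_B hx)]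
    · intro f _ f' _ heq
      simp only [Prod.mk.injEq] at heq
      apply RelHom.ext
      intro x
      by_cases hx : x ∈ A ∪ F
      · rw [← hn.rhoA_mem f hx, ← hn.rhoA_mem f' hx, heq.1]
      · have hxB := hn.mem_B_of_not hx
        rw [← hn.rhoB_B f hxB, ← hn.rhoB_B f' hxB, heq.2]
  -- key 2 : ∑ a² ≤ sPsi.card
  have key2 : ∑ i : I, (sa i).card * (sa i).card ≤ sPsi.card := by
    have hcs : (univ.sigma (fun i : I => sa i ×ˢ sa i)).card
        = ∑ i : I, (sa i).card * (sa i).card := by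
      rw [Finset.card_sigma]
      exact Finset.sum_congr rfl (fun i _ => card_product _ _)
    rw [← hcs]
    apply card_le_card_of_injOn (fun q => glHom (A ∪ F) q.2.1 (tauHom φ q.2.2))
    · rintro ⟨i, f₁, f₂⟩ hq
      simp only [mem_coe, Finset.mem_sigma, mem_product, sa, mem_filter, mem_univ, true_and] at hq
      obtain ⟨⟨hF1, hR1, hAs1⟩, hF2, hR2, hAs2⟩ := hq
      have hag : ∀ x ∈ F, f₁ x = tauHom φ f₂ x := by
        intro x hx
        have hphi : φ x = x := hx
        rw [tauHom_apply, hphi, hF1 ⟨x, hx⟩, hF2 ⟨x, hx⟩]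
      simp only [sPsi, mem_coe, mem_filter, mem_univ, true_and]
      refine ⟨i.2, ?_⟩
      intro x hx
      rcases hx with hx | hx
      · rw [hn.gl_apply_mem hag hx.2]; exact hR1 x hx
      · obtain ⟨r, hr, hrx⟩ := hx
        have hxB : x ∈ B := hrx ▸ hn.phi_mem_B hr.2
        rw [hn.gl_apply_not hag (hn.not_S_of_B hxB), tauHom_apply, ← hrx, hn.1 r]
        exact hR2 r ⟨hr.1, Set.mem_union_left _ hr.2⟩
    · rintro ⟨i, f₁, f₂⟩ hq ⟨i', f₁', f₂'⟩ hq' heq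
      simp only [mem_coe, Finset.mem_sigma, mem_product, sa, mem_filter, mem_univ,
        true_and] at hq hq'
      obtain ⟨⟨hF1, hR1, hAs1⟩, hF2, hR2, hAs2⟩ := hq
      obtain ⟨⟨hF1', hR1', hAs1'⟩, hF2', hR2', hAs2'⟩ := hq'
      have hag : ∀ x ∈ F, f₁ x = tauHom φ f₂ x := by
        intro x hx
        have hphi : φ x = x := hx
        rw [tauHom_apply, hphi, hF1 ⟨x, hx⟩, hF2 ⟨x, hx⟩]
      have hag' : ∀ x ∈ F, f₁' x = tauHom φ f₂' x := by
        intro x hx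
        have hphi : φ x = x := hx
        rw [tauHom_apply, hphi, hF1' ⟨x, hx⟩, hF2' ⟨x, hx⟩]
      simp only at heq
      have recA : ∀ (g₁ g₂ : H →g G) (hg : ∀ x ∈ F, g₁ x = tauHom φ g₂ x)
          (_ : ∀ x ∈ B, g₁ x = g₁ (φ x)) (x : V),
          g₁ x = glHom (A ∪ F) g₁ (tauHom φ g₂) (if x ∈ A ∪ F then x else φ x) := by
        intro g₁ g₂ hg hAs x
        by_cases hx : x ∈ A ∪ F
        · rw [if_pos hx, hn.gl_apply_mem hg hx]
        · have hxB := hn.mem_B_of_not hx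
          rw [if_neg hx,
            hn.gl_apply_mem hg (Set.mem_union_left _ (hn.phi_mem_A hxB))]
          exact hAs x hxB
      have recB : ∀ (g₁ g₂ : H →g G) (hg : ∀ x ∈ F, g₁ x = tauHom φ g₂ x)
          (_ : ∀ x ∈ B, g₂ x = g₂ (φ x)) (x : V),
          g₂ x = glHom (A ∪ F) g₁ (tauHom φ g₂) (if x ∈ A ∪ F then φ x else x) := by
        intro g₁ g₂ hg hAs x
        by_cases hx : x ∈ A ∪ F
        · rw [if_pos hx]
          rcases hx with hxA | hxF
          · rw [hn.gl_apply_not hg (hn.not_S_of_B (hn.phi_mem_B hxA)), tauHom_apply,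
              hn.1 x]
          · have hphi : φ x = x := hxF
            rw [hphi, hn.gl_apply_mem hg (Set.mem_union_right _ hxF), hg x hxF,
              tauHom_apply, hphi]
        · have hxB := hn.mem_B_of_not hx
          rw [if_neg hx, hn.gl_apply_not hg hx, tauHom_apply]
          exact hAs x hxB
      have e1 : f₁ = f₁' := by
        apply RelHom.ext; intro x
        rw [recA f₁ f₂ hag hAs1 x, recA f₁' f₂' hag' hAs1' x, heq]
      have e2 : f₂ = f₂' := by
        apply RelHom.ext; intro x
        rw [recB f₁ f₂ hag hAs2 x, recB f₁' f₂' hag' hAs2' x, heq]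
      have ei : i = i' := by
        apply Prod.ext
        · funext x
          rw [← hF1 x, ← hF1' x, e1]
        · rw [← hR1 r₀ hr₀, ← hR1' r₀ hr₀, e1]
      subst ei; subst e1; subst e2
      rfl
  -- key 3 : ∑ b² ≤ total number of homs
  have key3 : ∑ i : I, (sb i).card * (sb i).card ≤ (univ : Finset (H →g G)).card := by
    have hcs : (univ.sigma (fun i : I => sb i ×ˢ sb i)).card
        = ∑ i : I, (sb i).card * (sb i).card := by
      rw [Finset.card_sigma]
      exact Finset.sum_congr rfl (fun i _ => card_product _ _)
    rw [← hcs]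
    apply card_le_card_of_injOn (fun q => glHom (A ∪ F) (tauHom φ q.2.2) q.2.1)
    · exact fun q _ => mem_univ _
    · rintro ⟨i, f₁, f₂⟩ hq ⟨i', f₁', f₂'⟩ hq' heq
      simp only [mem_coe, Finset.mem_sigma, mem_product, sb, mem_filter, mem_univ,
        true_and] at hq hq'
      obtain ⟨⟨hF1, hR1, hBs1⟩, hF2, hR2, hBs2⟩ := hq
      obtain ⟨⟨hF1', hR1', hBs1'⟩, hF2', hR2', hBs2'⟩ := hq'
      have hag : ∀ x ∈ F, tauHom φ f₂ x = f₁ x := by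
        intro x hx
        have hphi : φ x = x := hx
        rw [tauHom_apply, hphi, hF1 ⟨x, hx⟩, hF2 ⟨x, hx⟩]
      have hag' : ∀ x ∈ F, tauHom φ f₂' x = f₁' x := by
        intro x hx
        have hphi : φ x = x := hx
        rw [tauHom_apply, hphi, hF1' ⟨x, hx⟩, hF2' ⟨x, hx⟩]
      simp only at heq
      have rec1 : ∀ (g₁ g₂ : H →g G) (hg : ∀ x ∈ F, tauHom φ g₂ x = g₁ x)
          (_ : ∀ x ∈ A, g₁ x = g₁ (φ x)) (hFF : ∀ x : ↥F, g₁ ↑x = g₂ ↑x) (x : V),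
          g₁ x = glHom (A ∪ F) (tauHom φ g₂) g₁ (if x ∈ A then φ x else x) := by
        intro g₁ g₂ hg hBs hFF x
        by_cases hx : x ∈ A
        · rw [if_pos hx, hn.gl_apply_not hg (hn.not_S_of_B (hn.phi_mem_B hx))]
          exact hBs x hx
        · rw [if_neg hx]
          by_cases hxF : x ∈ F
          · rw [hn.gl_apply_mem hg (Set.mem_union_right _ hxF), tauHom_apply]
            have hphi : φ x = x := hxF
            rw [hphi, ← hFF ⟨x, hxF⟩]
          · have hxB : x ∈ B := hn.mem_B_of_not (by
              rintro (h | h)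
              · exact hx h
              · exact hxF h)
            rw [hn.gl_apply_not hg (hn.not_S_of_B hxB)]
      have rec2 : ∀ (g₁ g₂ : H →g G) (hg : ∀ x ∈ F, tauHom φ g₂ x = g₁ x)
          (_ : ∀ x ∈ A, g₂ x = g₂ (φ x)) (x : V),
          g₂ x = glHom (A ∪ F) (tauHom φ g₂) g₁ (if x ∈ B then φ x else x) := by
        intro g₁ g₂ hg hBs x
        by_cases hx : x ∈ B
        · rw [if_pos hx,
            hn.gl_apply_mem hg (Set.mem_union_left _ (hn.phi_mem_A hx)), tauHom_apply,
            hn.1 x]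
        · rw [if_neg hx]
          have hxS := hn.mem_S_of_not_B hx
          rw [hn.gl_apply_mem hg hxS, tauHom_apply]
          rcases hxS with hxA | hxF
          · exact hBs x hxA
          · have hphi : φ x = x := hxF
            rw [hphi]
      have hFF : ∀ x : ↥F, f₁ ↑x = f₂ ↑x := by
        intro x; rw [hF1 x, hF2 x]
      have hFF' : ∀ x : ↥F, f₁' ↑x = f₂' ↑x := by
        intro x; rw [hF1' x, hF2' x]
      have e1 : f₁ = f₁' := by
        apply RelHom.ext; intro x
        rw [rec1 f₁ f₂ hag hBs1 hFF x, rec1 f₁' f₂' hag' hBs1' hFF' x, heq]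
      have e2 : f₂ = f₂' := by
        apply RelHom.ext; intro x
        rw [rec2 f₁ f₂ hag hBs2 x, rec2 f₁' f₂' hag' hBs2' x, heq]
      have ei : i = i' := by
        apply Prod.ext
        · funext x
          rw [← hF1 x, ← hF1' x, e1]
        · rw [← hR1 r₁ hr₁, ← hR1' r₁ hr₁, e1]
      subst ei; subst e1; subst e2
      rfl
  -- combine via Cauchy–Schwarz
  rw [hcR, hcPsi, hcH]
  calc sR.card ^ 2 ≤ (∑ i : I, (sa i).card * (sb i).card) ^ 2 :=
        Nat.pow_le_pow_left key1 2
    _ ≤ (∑ i : I, (sa i).card ^ 2) * (∑ i : I, (sb i).card ^ 2) :=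
        Finset.sum_mul_sq_le_sq_mul_sq univ _ _
    _ ≤ sPsi.card * (univ : Finset (H →g G)).card := by
        apply Nat.mul_le_mul
        · simpa only [pow_two] using key2
        · simpa only [pow_two] using key3

end Step
section Count

variable {V : Type} [Fintype V] {n : ℕ} {H : SimpleGraph V} {G : SimpleGraph (Fin n)}

lemma homCountOn_le (S : Set V) : homCountOn H G S ≤ homCount H G := by
  rw [homCountOn, homCount]
  exact Nat.card_le_card_of_injective Subtype.val Subtype.val_injective

lemma chain_ineq (m : ℕ) (Rs : ℕ → Set V)
    (h : ∀ j < m, homCountOn H G (Rs j) ^ 2 ≤ homCountOn H G (Rs (j + 1)) * homCount H G) :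
    homCountOn H G (Rs 0) ^ (2 ^ m) ≤
      homCountOn H G (Rs m) * homCount H G ^ (2 ^ m - 1) := by
  induction m generalizing Rs with
  | zero => simpa using le_refl _
  | succ m ih =>
    have h0 := h 0 (Nat.succ_pos m)
    have ihs := ih (fun j => Rs (j + 1)) (fun j hj => h (j + 1) (Nat.succ_lt_succ hj))
    have e1 : homCountOn H G (Rs 0) ^ 2 ^ (m + 1)
        = (homCountOn H G (Rs 0) ^ 2) ^ 2 ^ m := by
      rw [← pow_mul, pow_succ']
    rw [e1]
    calc (homCountOn H G (Rs 0) ^ 2) ^ 2 ^ m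
        ≤ (homCountOn H G (Rs 1) * homCount H G) ^ 2 ^ m := Nat.pow_le_pow_left h0 _
      _ = homCountOn H G (Rs 1) ^ 2 ^ m * homCount H G ^ 2 ^ m := mul_pow _ _ _
      _ ≤ (homCountOn H G (Rs (m + 1)) * homCount H G ^ (2 ^ m - 1)) * homCount H G ^ 2 ^ m :=
          Nat.mul_le_mul_right _ ihs
      _ = homCountOn H G (Rs (m + 1)) * homCount H G ^ (2 ^ m - 1 + 2 ^ m) := by
          rw [mul_assoc, ← pow_add]
      _ = homCountOn H G (Rs (m + 1)) * homCount H G ^ (2 ^ (m + 1) - 1) := by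
          have h1 : (1 : ℕ) ≤ 2 ^ m := Nat.one_le_two_pow
          have : 2 ^ m - 1 + 2 ^ m = 2 ^ (m + 1) - 1 := by
            rw [pow_succ]; omega
          rw [this]

lemma homOn_part_le (X Y : Set V) (hne : X.Nonempty) (hcov : ∀ x : V, x ∈ X ∨ x ∈ Y)
    (hnbr : ∀ y : V, y ∈ Y → ∃ x ∈ X, H.Adj y x) :
    homCountOn H G X ≤ ∑ w : Fin n, deg G w ^ Y.ncard := by
  classical
  obtain ⟨x₀, hx₀⟩ := hne
  rw [homCountOn, Nat.card_eq_fintype_card, Fintype.card_subtype]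
  rw [Finset.card_eq_sum_card_fiberwise (f := fun f : H →g G => f x₀) (t := Finset.univ)
    (fun _ _ => Finset.mem_univ _)]
  apply Finset.sum_le_sum
  intro w _
  rw [Finset.filter_filter]
  have hsub : (Finset.filter
      (fun f : H →g G => (∃ v, ∀ u ∈ X, f u = v) ∧ f x₀ = w) Finset.univ).card
      = Nat.card {f : H →g G // (∃ v, ∀ u ∈ X, f u = v) ∧ f x₀ = w} := by
    rw [Nat.card_eq_fintype_card, Fintype.card_subtype]
  rw [hsub]
  have hcard : deg G w ^ Y.ncard = Nat.card (↥Y → ↥(G.neighborSet w)) := by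
    rw [Nat.card_fun, deg, Nat.card_coe_set_eq, Nat.card_coe_set_eq]
  rw [hcard]
  have hXval : ∀ (fp : {f : H →g G // (∃ v, ∀ u ∈ X, f u = v) ∧ f x₀ = w}),
      ∀ x ∈ X, fp.1 x = w := by
    rintro ⟨f, ⟨v₀, hv₀⟩, hfx₀⟩ x hx
    rw [hv₀ x hx, ← hv₀ x₀ hx₀, hfx₀]
  apply Nat.card_le_card_of_injective
    (fun fp => fun y : ↥Y => (⟨fp.1 ↑y, by
      obtain ⟨x, hxX, hadj⟩ := hnbr ↑y y.2
      have h1 : G.Adj (fp.1 ↑y) (fp.1 x) := fp.1.map_adj hadj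
      rw [hXval fp x hxX] at h1
      exact h1.symm⟩ : ↥(G.neighborSet w)))
  intro fp fp' heq
  apply Subtype.ext
  apply RelHom.ext
  intro x
  rcases hcov x with hx | hx
  · rw [hXval fp x hx, hXval fp' x hx]
  · have := congrFun heq ⟨x, hx⟩
    simpa using this

/-- parity of walks in a "bipartite-like" graph -/
lemma walk_parity {β : Type} {Gb : SimpleGraph β} (X : Set β)
    (hX : ∀ ⦃u v⦄, Gb.Adj u v → (u ∈ X ↔ v ∉ X)) :
    ∀ {a b : β} (w : Gb.Walk a b), Even w.length ↔ (a ∈ X ↔ b ∈ X) := by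
  intro a b w
  induction w with
  | nil => simp
  | @cons u v b h p ih =>
    have hcross := hX h
    rw [SimpleGraph.Walk.length_cons, Nat.even_add_one, ih]
    by_cases hu : u ∈ X <;> by_cases hv : v ∈ X <;> by_cases hb : b ∈ X <;>
      simp_all

lemma same_part {X₁ X₂ : Set V} (hbip : IsBipartitionOf H X₁ X₂) (hconn : H.Connected)
    (hGb : _root_.IsBipartite G) (f : H →g G) {u v : V} (huv : f u = f v) :
    u ∈ X₁ ↔ v ∈ X₁ := by
  obtain ⟨X, hX⟩ := hGb
  have hXH : ∀ ⦃a b : V⦄, H.Adj a b → (a ∈ X₁ ↔ b ∉ X₁) := by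
    intro a b hadj
    rcases hbip.2.2 hadj with ⟨ha, hb⟩ | ⟨ha, hb⟩
    · exact ⟨fun _ => Set.disjoint_right.mp hbip.1 hb, fun _ => ha⟩
    · constructor
      · intro h; exact absurd h (Set.disjoint_right.mp hbip.1 ha)
      · intro h; exact absurd hb h
  by_contra hne
  have hw : H.Reachable u v := hconn.preconnected u v
  obtain ⟨w⟩ := hw
  have hodd : ¬ Even w.length := by
    rw [walk_parity X₁ hXH w]; exact hne
  have heven : Even w.length := by
    have h2 := (walk_parity X hX ((SimpleGraph.Walk.map f w).copy rfl huv.symm)).mpr Iff.rfl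
    rwa [SimpleGraph.Walk.length_copy, SimpleGraph.Walk.length_map] at h2
  exact hodd heven

open Classical in
/-- same-part ordered pairs of distinct vertices -/
noncomputable def pairsF (X₁ X₂ : Set V) : Finset (V × V) :=
  Finset.univ.filter (fun uv =>
    uv.1 ≠ uv.2 ∧ ((uv.1 ∈ X₁ ∧ uv.2 ∈ X₁) ∨ (uv.1 ∈ X₂ ∧ uv.2 ∈ X₂)))

open Classical in
lemma noninj_le {X₁ X₂ : Set V} (hbip : IsBipartitionOf H X₁ X₂) (hconn : H.Connected)
    (hGb : _root_.IsBipartite G) :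
    (Finset.univ.filter (fun f : H →g G => ¬ Function.Injective ⇑f)).card ≤
      ∑ uv ∈ pairsF X₁ X₂, homCountOn H G {uv.1, uv.2} := by
  classical
  have hsub : (Finset.univ.filter (fun f : H →g G => ¬ Function.Injective ⇑f)) ⊆
      (pairsF X₁ X₂).biUnion (fun uv =>
        Finset.univ.filter (fun f : H →g G => ∃ w, ∀ x ∈ ({uv.1, uv.2} : Set V), f x = w)) := by
    intro f hf
    simp only [Finset.mem_filter, Finset.mem_univ, true_and] at hf
    rw [Function.not_injective_iff] at hf
    obtain ⟨u, v, hfe, hne⟩ := hf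
    rw [Finset.mem_biUnion]
    refine ⟨(u, v), ?_, ?_⟩
    · simp only [pairsF, Finset.mem_filter, Finset.mem_univ, true_and]
      refine ⟨hne, ?_⟩
      have hp := same_part hbip hconn hGb f hfe
      have hu12 : u ∈ X₁ ∪ X₂ := hbip.2.1 ▸ Set.mem_univ u
      rcases hu12 with h1 | h2
      · exact Or.inl ⟨h1, hp.mp h1⟩
      · right
        refine ⟨h2, ?_⟩
        have hv12 : v ∈ X₁ ∪ X₂ := hbip.2.1 ▸ Set.mem_univ v
        rcases hv12 with h1 | h2'
        · exact absurd (hp.mpr h1) (Set.disjoint_right.mp hbip.1 h2)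
        · exact h2'
    · simp only [Finset.mem_filter, Finset.mem_univ, true_and]
      refine ⟨f u, ?_⟩
      rintro x (rfl | rfl)
      · rfl
      · exact hfe.symm
  calc (Finset.univ.filter (fun f : H →g G => ¬ Function.Injective ⇑f)).card
      ≤ _ := Finset.card_le_card hsub
    _ ≤ ∑ uv ∈ pairsF X₁ X₂, (Finset.univ.filter
          (fun f : H →g G => ∃ w, ∀ x ∈ ({uv.1, uv.2} : Set V), f x = w)).card :=
        Finset.card_biUnion_le
    _ = ∑ uv ∈ pairsF X₁ X₂, homCountOn H G {uv.1, uv.2} := by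
        apply Finset.sum_congr rfl
        intro uv _
        rw [homCountOn, Nat.card_eq_fintype_card, Fintype.card_subtype]

end Count
section Copy

instance finiteSubgraph {β : Type} [Finite β] (G : SimpleGraph β) : Finite G.Subgraph :=
  Finite.of_injective (fun G' => (G'.verts, G'.Adj))
    (fun a b h => SimpleGraph.Subgraph.ext (congrArg Prod.fst h) (congrArg Prod.snd h))

variable {V : Type} [Fintype V] {n : ℕ} {H : SimpleGraph V} {G : SimpleGraph (Fin n)}

/-- the subgraph of `G` which is the image of a hom `f : H →g G`. -/
def homSub (f : H →g G) : G.Subgraph where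
  verts := Set.range f
  Adj := fun a b => ∃ x y, H.Adj x y ∧ f x = a ∧ f y = b
  adj_sub := by rintro a b ⟨x, y, h, rfl, rfl⟩; exact f.map_adj h
  edge_vert := by rintro a b ⟨x, y, h, rfl, rfl⟩; exact ⟨x, rfl⟩
  symm := ⟨by rintro a b ⟨x, y, h, rfl, rfl⟩; exact ⟨y, x, h.symm, rfl, rfl⟩⟩

noncomputable def homIso (f : H →g G) (hf : Function.Injective ⇑f) :
    H ≃g (homSub f).coe where
  toEquiv := Equiv.ofInjective ⇑f hf
  map_rel_iff' := by
    intro a b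
    simp only [SimpleGraph.Subgraph.coe_adj, Equiv.ofInjective_apply]
    constructor
    · rintro ⟨x, y, h, hx, hy⟩
      rw [hf hx, hf hy] at h
      exact h
    · intro h
      exact ⟨a, b, h, rfl, rfl⟩

open Classical in
lemma inj_card_le_copy :
    (Finset.univ.filter (fun f : H →g G => Function.Injective ⇑f)).card ≤
      (Fintype.card V) ^ (Fintype.card V) * _root_.copyCount H G := by
  classical
  set s := Finset.univ.filter (fun f : H →g G => Function.Injective ⇑f) with hs
  have h1 : s.card ≤ (Fintype.card V) ^ (Fintype.card V) * (s.image homSub).card := by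
    apply Finset.card_le_mul_card_image
    intro G' hG'
    obtain ⟨f₀, hf₀s, hf₀⟩ := Finset.mem_image.mp hG'
    -- replace G' by homSub f₀
    have hf₀i : Function.Injective ⇑f₀ := by
      simp only [hs, Finset.mem_filter] at hf₀s; exact hf₀s.2
    subst hf₀
    have hfib : (Finset.filter (fun f => homSub f = homSub f₀) s).card
        = Nat.card {f : H →g G // (Function.Injective ⇑f ∧ homSub f = homSub f₀)} := by
      rw [Nat.card_eq_fintype_card, Fintype.card_subtype, hs, Finset.filter_filter]
    rw [hfib]
    have hvc : Nat.card (V → ↥((homSub f₀).verts)) = (Fintype.card V) ^ (Fintype.card V) := by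
      rw [Nat.card_fun, Nat.card_eq_fintype_card (α := V)]
      have h3 : Nat.card ↥((homSub f₀).verts) = Fintype.card V := by
        show Nat.card ↥(Set.range ⇑f₀) = Fintype.card V
        rw [Nat.card_range_of_injective hf₀i, Nat.card_eq_fintype_card]
      rw [h3]
    rw [← hvc]
    apply Nat.card_le_card_of_injective
      (fun fp => fun x : V => (⟨fp.1 x, by
        rw [show (homSub f₀).verts = (homSub fp.1).verts from
          (congrArg SimpleGraph.Subgraph.verts fp.2.2).symm]
        exact ⟨x, rfl⟩⟩ : ↥((homSub f₀).verts)))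
    intro fp fp' heq
    apply Subtype.ext
    apply RelHom.ext
    intro x
    have := congrFun heq x
    simpa using this
  have h2 : (s.image homSub).card ≤ _root_.copyCount H G := by
    rw [_root_.copyCount, ← Set.ncard_coe_finset]
    apply Set.ncard_le_ncard
    · intro G' hG'
      simp only [Finset.coe_image, Set.mem_image, Finset.mem_coe] at hG'
      obtain ⟨f, hfs, rfl⟩ := hG'
      have hfi : Function.Injective ⇑f := by
        simp only [hs, Finset.mem_filter] at hfs; exact hfs.2
      exact ⟨homIso f hfi⟩
    · exact Set.toFinite _
  calc s.card ≤ _ := h1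
    _ ≤ _ := Nat.mul_le_mul_left _ h2

end Copy
section Helpers

variable {V : Type} {H : SimpleGraph V}

lemma exists_adj (hconn : H.Connected) {u z : V} (hne : z ≠ u) : ∃ y, H.Adj u y := by
  obtain ⟨w⟩ := hconn.preconnected u z
  cases w with
  | nil => exact absurd rfl hne
  | cons h _ => exact ⟨_, h⟩

lemma edge_pos (hconn : H.Connected) {a b : V} (hne : a ≠ b) : H.edgeSet.Nonempty := by
  obtain ⟨y, hy⟩ := exists_adj hconn hne.symm
  exact ⟨s(a, y), hy⟩

lemma sum_deg {n : ℕ} (G : SimpleGraph (Fin n)) :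
    ∑ w : Fin n, deg G w = 2 * G.edgeSet.ncard := by
  classical
  letI : DecidableRel G.Adj := Classical.decRel _
  have h1 : ∀ w, deg G w = G.degree w := by
    intro w
    rw [deg, ← Nat.card_coe_set_eq, Nat.card_eq_fintype_card]
    exact SimpleGraph.card_neighborSet_eq_degree G w
  rw [Finset.sum_congr rfl (fun w _ => h1 w), SimpleGraph.sum_degrees_eq_twice_card_edges]
  congr 1
  rw [← Set.ncard_coe_finset, SimpleGraph.coe_edgeFinset]

end Helpers
set_option maxHeartbeats 2000000 in
/-- Let `H` be a reflective connected bipartite graph satisfying Sidorenko's conjecture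
and let `K ≥ 1`. Then there are positive constants `c, C` such that every `K`-almost
regular bipartite `n`-vertex graph `G` with edge density `p` satisfying
`n^(v(H)) · p^(e(H)) ≥ C · n · (pn)^t`, where `t` is the size of the larger part of the
bipartition of `H`, contains at least `c · n^(v(H)) · p^(e(H))` copies of `H`. -/
theorem reflective_supersaturation_almost_regular {V : Type} [Fintype V]
    (H : SimpleGraph V) (X₁ X₂ : Set V) (hbip : IsBipartitionOf H X₁ X₂)
    (hconn : H.Connected) (hrefl : IsReflective H X₁ X₂)
    (hsid : SatisfiesSidorenko H) (K : ℝ) (hK : 1 ≤ K) :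
    ∃ c C : ℝ, 0 < c ∧ 0 < C ∧ ∀ (n : ℕ) (G : SimpleGraph (Fin n)) (p : ℝ),
      _root_.IsBipartite G →
      (∀ u v : Fin n, (deg G u : ℝ) ≤ K * (deg G v : ℝ)) →
      (G.edgeSet.ncard : ℝ) = p * (n : ℝ) ^ 2 / 2 →
      C * (n : ℝ) * (p * (n : ℝ)) ^ (max X₁.ncard X₂.ncard) ≤
        (n : ℝ) ^ (Fintype.card V) * p ^ (H.edgeSet.ncard) →
      c * (n : ℝ) ^ (Fintype.card V) * p ^ (H.edgeSet.ncard) ≤ (_root_.copyCount H G : ℝ) := by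
  classical
  have hVne : Nonempty V := hconn.nonempty
  have hK0 : (0 : ℝ) < K := lt_of_lt_of_le one_pos hK
  set v := Fintype.card V with hvdef
  have hv1 : 1 ≤ v := Fintype.card_pos
  set t := max X₁.ncard X₂.ncard with htdef
  -- choose reflection chains for each same-part pair
  have hchoice : ∀ uv : V × V, uv ∈ pairsF X₁ X₂ →
      ∃ (X : Set V) (m : ℕ) (A B : ℕ → Set V) (φ : ℕ → (H ≃g H)) (Rs : ℕ → Set V),
        (X = X₁ ∨ X = X₂) ∧ ({uv.1, uv.2} : Set V) ⊆ X ∧ Rs 0 = {uv.1, uv.2} ∧ Rs m = X ∧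
        ∀ j < m, IsNiceTriple H (A j) (B j) (φ j) ∧
          IsAdmissible X₁ X₂ (A j) (B j) (φ j) (Rs j) ∧
          Rs (j + 1) = psiSet (A j) (φ j) (Rs j) := by
    intro uv huv
    simp only [pairsF, Finset.mem_filter, Finset.mem_univ, true_and] at huv
    obtain ⟨hne, hcase⟩ := huv
    rcases hcase with ⟨h1, h2⟩ | ⟨h1, h2⟩
    · have hsub : ({uv.1, uv.2} : Set V) ⊆ X₁ := by
        rintro x (rfl | rfl) <;> assumption
      obtain ⟨m, A, B, φ, Rs, hh⟩ := hrefl X₁ (Or.inl rfl) _ hsub (Set.ncard_pair hne)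
      exact ⟨X₁, m, A, B, φ, Rs, Or.inl rfl, hsub, hh.1, hh.2.1, hh.2.2⟩
    · have hsub : ({uv.1, uv.2} : Set V) ⊆ X₂ := by
        rintro x (rfl | rfl) <;> assumption
      obtain ⟨m, A, B, φ, Rs, hh⟩ := hrefl X₂ (Or.inr rfl) _ hsub (Set.ncard_pair hne)
      exact ⟨X₂, m, A, B, φ, Rs, Or.inr rfl, hsub, hh.1, hh.2.1, hh.2.2⟩
  choose Xc mc Ac Bc φc Rsc hXor hXsub hR0 hRm hstepc using hchoice
  set M := (pairsF X₁ X₂).attach.sup (fun x => mc x.1 x.2) with hMdef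
  set P := (pairsF X₁ X₂).card with hPdef
  set C : ℝ := K ^ t * (2 * (P : ℝ) + 2) ^ (2 ^ M) with hCdef
  have hC0 : 0 < C := by positivity
  refine ⟨1 / (2 * (v : ℝ) ^ v), C, by positivity, hC0, ?_⟩
  intro n G p hGbip hreg hpn hcond
  -- trivial case n = 0
  rcases Nat.eq_zero_or_pos n with hn0 | hn1
  · subst hn0
    simp only [Nat.cast_zero]
    rw [zero_pow (by omega : v ≠ 0), mul_zero, zero_mul]
    exact Nat.cast_nonneg _
  have hn0R : (0 : ℝ) < n := by exact_mod_cast hn1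
  have hEcard : (0 : ℝ) ≤ p * (n : ℝ) ^ 2 / 2 := hpn ▸ Nat.cast_nonneg _
  have hn2 : (0 : ℝ) < (n : ℝ) ^ 2 := by positivity
  have hp0 : 0 ≤ p := by nlinarith [hEcard, hn2]
  have hsidG := hsid n G p hpn
  have hpairs_ne_imp : (pairsF X₁ X₂ : Finset (V × V)).Nonempty → 0 < H.edgeSet.ncard := by
    rintro ⟨uv, huv⟩
    simp only [pairsF, Finset.mem_filter, Finset.mem_univ, true_and] at huv
    rw [Set.ncard_pos (Set.toFinite _)]
    exact edge_pos hconn huv.1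
  by_cases hpz : p = 0 ∧ (pairsF X₁ X₂ : Finset (V × V)).Nonempty
  · obtain ⟨hp, hne⟩ := hpz
    have he := hpairs_ne_imp hne
    rw [hp, zero_pow (by omega : H.edgeSet.ncard ≠ 0), mul_zero]
    exact Nat.cast_nonneg _
  -- main case
  have hh0 : (0 : ℝ) ≤ (homCount H G : ℝ) := Nat.cast_nonneg _
  have hpair : ∀ uv ∈ pairsF X₁ X₂,
      2 * (P : ℝ) * ((homCountOn H G {uv.1, uv.2} : ℕ) : ℝ) ≤ (homCount H G : ℝ) := by
    intro uv huv
    have hppos : 0 < p := by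
      rcases lt_or_eq_of_le hp0 with h | h
      · exact h
      · exact absurd ⟨h.symm, ⟨uv, huv⟩⟩ hpz
    have hPpos : 0 < P := Finset.card_pos.mpr ⟨uv, huv⟩
    have hne12 : uv.1 ≠ uv.2 := by
      simp only [pairsF, Finset.mem_filter, Finset.mem_univ, true_and] at huv
      exact huv.1
    have hnt : Nontrivial V := ⟨⟨uv.1, uv.2, hne12⟩⟩
    -- degree facts
    have hsum : ∑ w : Fin n, (deg G w : ℝ) = p * (n : ℝ) ^ 2 := by
      have := sum_deg G
      have h2 : ((∑ w : Fin n, deg G w : ℕ) : ℝ) = 2 * (G.edgeSet.ncard : ℝ) := by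
        exact_mod_cast congrArg (Nat.cast : ℕ → ℝ) this
      push_cast at h2
      rw [h2, hpn]; ring
    have hdegle : ∀ w, (deg G w : ℝ) ≤ K * (p * n) := by
      intro w
      have h2 : ∑ _u : Fin n, (deg G w : ℝ) ≤ ∑ u : Fin n, K * (deg G u : ℝ) :=
        Finset.sum_le_sum (fun u _ => hreg w u)
      rw [Finset.sum_const, Finset.card_univ, Fintype.card_fin, ← Finset.mul_sum, hsum]
        at h2
      have h3 : (n : ℝ) * (deg G w : ℝ) ≤ K * (p * (n : ℝ) ^ 2) := by
        simpa using h2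
      nlinarith
    have hd1 : ∀ w, (1 : ℝ) ≤ (deg G w : ℝ) := by
      intro w
      by_contra hlt
      push_neg at hlt
      have hz : deg G w = 0 := by
        have : deg G w < 1 := by exact_mod_cast hlt
        omega
      have hall : ∀ u, (deg G u : ℝ) ≤ 0 := by
        intro u
        have := hreg u w
        rw [hz] at this
        simpa using this
      have hsum0 : ∑ w : Fin n, (deg G w : ℝ) ≤ 0 :=
        Finset.sum_nonpos (fun u _ => hall u)
      rw [hsum] at hsum0
      nlinarith
    have hpn1 : 1 ≤ p * n := by
      have h2 : (n : ℝ) ≤ p * (n : ℝ) ^ 2 := by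
        calc (n : ℝ) = ∑ _w : Fin n, (1 : ℝ) := by
              rw [Finset.sum_const, Finset.card_univ, Fintype.card_fin, nsmul_eq_mul]; ring
          _ ≤ ∑ w : Fin n, (deg G w : ℝ) := Finset.sum_le_sum (fun w _ => hd1 w)
          _ = p * (n : ℝ) ^ 2 := hsum
      nlinarith [hn0R, h2]
    -- the chain inequality
    have hch : ∀ j < mc uv huv, homCountOn H G (Rsc uv huv j) ^ 2 ≤
        homCountOn H G (Rsc uv huv (j + 1)) * homCount H G := by
      intro j hj
      obtain ⟨hnj, haj, hpsij⟩ := hstepc uv huv j hj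
      rw [hpsij]
      exact step_ineq hnj haj.2.1 haj.2.2
    have hchain := chain_ineq (mc uv huv) (Rsc uv huv) hch
    rw [hR0 uv huv, hRm uv huv] at hchain
    -- bounding homCountOn on the part
    have hpart : ∃ Y : Set V, Y.ncard ≤ t ∧ (∀ x, x ∈ Xc uv huv ∨ x ∈ Y) ∧
        (∀ y, y ∈ Y → ∃ x ∈ Xc uv huv, H.Adj y x) := by
      rcases hXor uv huv with hXe | hXe
      · refine ⟨X₂, le_max_right _ _, ?_, ?_⟩
        · intro x
          have : x ∈ X₁ ∪ X₂ := hbip.2.1 ▸ Set.mem_univ x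
          rw [hXe]; exact this
        · intro y hy
          obtain ⟨z, hz⟩ := exists_ne y
          obtain ⟨y', hadj⟩ := exists_adj hconn hz
          rcases hbip.2.2 hadj with ⟨h1, _⟩ | ⟨_, h2⟩
          · exact absurd hy (Set.disjoint_left.mp hbip.1 h1)
          · exact ⟨y', by rw [hXe]; exact h2, hadj⟩
      · refine ⟨X₁, le_max_left _ _, ?_, ?_⟩
        · intro x
          have : x ∈ X₁ ∪ X₂ := hbip.2.1 ▸ Set.mem_univ x
          rw [hXe]; exact this.symm
        · intro y hy
          obtain ⟨z, hz⟩ := exists_ne y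
          obtain ⟨y', hadj⟩ := exists_adj hconn hz
          rcases hbip.2.2 hadj with ⟨_, h2⟩ | ⟨h1, _⟩
          · exact ⟨y', by rw [hXe]; exact h2, hadj⟩
          · exact absurd hy (Set.disjoint_left.mp hbip.1.symm h1)
    obtain ⟨Y, hYt, hcovXY, hnbrY⟩ := hpart
    have hXne : (Xc uv huv).Nonempty :=
      ⟨uv.1, hXsub uv huv (by exact Set.mem_insert _ _)⟩
    have hEb := homOn_part_le (H := H) (G := G) (Xc uv huv) Y hXne hcovXY hnbrY
    -- pass to the reals
    have hK1pn : 1 ≤ K * (p * n) := by nlinarith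
    have hEreal : ((∑ w : Fin n, deg G w ^ Y.ncard : ℕ) : ℝ) ≤ K ^ t * ((n : ℝ) * (p * n) ^ t) := by
      push_cast
      have h2 : ∀ w : Fin n, (deg G w : ℝ) ^ Y.ncard ≤ (K * (p * n)) ^ Y.ncard :=
        fun w => pow_le_pow_left₀ (Nat.cast_nonneg _) (hdegle w) _
      calc ∑ w : Fin n, (deg G w : ℝ) ^ Y.ncard
          ≤ ∑ _w : Fin n, (K * (p * n)) ^ Y.ncard := Finset.sum_le_sum (fun w _ => h2 w)
        _ = (n : ℝ) * (K * (p * n)) ^ Y.ncard := by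
            rw [Finset.sum_const, Finset.card_univ, Fintype.card_fin, nsmul_eq_mul]
        _ ≤ (n : ℝ) * (K * (p * n)) ^ t := by
            apply mul_le_mul_of_nonneg_left _ (le_of_lt hn0R)
            exact pow_le_pow_right₀ hK1pn hYt
        _ = K ^ t * ((n : ℝ) * (p * n) ^ t) := by rw [mul_pow]; ring
    have hSC : (n : ℝ) * (p * n) ^ t ≤ (homCount H G : ℝ) / C := by
      rw [le_div_iff₀ hC0]
      calc (n : ℝ) * (p * n) ^ t * C = C * (n : ℝ) * (p * n) ^ t := by ring
        _ ≤ (n : ℝ) ^ v * p ^ H.edgeSet.ncard := hcond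
        _ ≤ _ := hsidG
    -- combine everything
    set q := 2 ^ (mc uv huv) with hqdef
    have hq1 : 1 ≤ q := Nat.one_le_two_pow
    have hcast : ((homCountOn H G {uv.1, uv.2} : ℕ) : ℝ) ^ q ≤
        (K ^ t / C) * (homCount H G : ℝ) ^ q := by
      have h1 : ((homCountOn H G {uv.1, uv.2} : ℕ) : ℝ) ^ q ≤
          ((homCountOn H G (Xc uv huv) : ℕ) : ℝ) * (homCount H G : ℝ) ^ (q - 1) := by
        exact_mod_cast hchain
      have h2 : ((homCountOn H G (Xc uv huv) : ℕ) : ℝ) ≤ K ^ t * ((n : ℝ) * (p * n) ^ t) := by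
        calc ((homCountOn H G (Xc uv huv) : ℕ) : ℝ)
            ≤ ((∑ w : Fin n, deg G w ^ Y.ncard : ℕ) : ℝ) := by exact_mod_cast hEb
          _ ≤ _ := hEreal
      have h3 : ((homCountOn H G (Xc uv huv) : ℕ) : ℝ) ≤ (K ^ t / C) * (homCount H G : ℝ) := by
        calc ((homCountOn H G (Xc uv huv) : ℕ) : ℝ) ≤ K ^ t * ((n : ℝ) * (p * n) ^ t) := h2
          _ ≤ K ^ t * ((homCount H G : ℝ) / C) := by
              apply mul_le_mul_of_nonneg_left hSC (by positivity)
          _ = (K ^ t / C) * (homCount H G : ℝ) := by ring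
      calc ((homCountOn H G {uv.1, uv.2} : ℕ) : ℝ) ^ q
          ≤ ((homCountOn H G (Xc uv huv) : ℕ) : ℝ) * (homCount H G : ℝ) ^ (q - 1) := h1
        _ ≤ ((K ^ t / C) * (homCount H G : ℝ)) * (homCount H G : ℝ) ^ (q - 1) := by
            apply mul_le_mul_of_nonneg_right h3 (by positivity)
        _ = (K ^ t / C) * ((homCount H G : ℝ) ^ (q - 1) * (homCount H G : ℝ)) := by ring
        _ = (K ^ t / C) * (homCount H G : ℝ) ^ q := by
            rw [← pow_succ]
            congr 2
            omega
    -- the constant comparison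
    have hmM : mc uv huv ≤ M := by
      have := Finset.le_sup (f := fun x : {x // x ∈ pairsF X₁ X₂} => mc x.1 x.2)
        (Finset.mem_attach _ ⟨uv, huv⟩)
      exact this
    have hPC : (2 * (P : ℝ)) ^ q * (K ^ t / C) ≤ 1 := by
      have h1 : (2 * (P : ℝ)) ^ q ≤ (2 * (P : ℝ) + 2) ^ (2 ^ M) := by
        calc (2 * (P : ℝ)) ^ q ≤ (2 * (P : ℝ) + 2) ^ q :=
              pow_le_pow_left₀ (by positivity) (by linarith) _
          _ ≤ (2 * (P : ℝ) + 2) ^ (2 ^ M) := by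
              apply pow_le_pow_right₀
                (by have h0 : (0:ℝ) ≤ (P:ℝ) := Nat.cast_nonneg _; linarith)
              rw [hqdef]
              exact Nat.pow_le_pow_right (by norm_num) hmM
      have hPP : (0 : ℝ) < (2 * (P : ℝ) + 2) ^ (2 ^ M) := by positivity
      have hKt : (0 : ℝ) < K ^ t := by positivity
      have hdiv : K ^ t / C = 1 / (2 * (P : ℝ) + 2) ^ (2 ^ M) := by
        rw [hCdef]
        field_simp
      rw [hdiv, mul_one_div, div_le_one hPP]
      exact h1
    -- conclude
    have hfin : (2 * (P : ℝ) * ((homCountOn H G {uv.1, uv.2} : ℕ) : ℝ)) ^ q ≤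
        (homCount H G : ℝ) ^ q := by
      calc (2 * (P : ℝ) * ((homCountOn H G {uv.1, uv.2} : ℕ) : ℝ)) ^ q
          = (2 * (P : ℝ)) ^ q * ((homCountOn H G {uv.1, uv.2} : ℕ) : ℝ) ^ q := mul_pow _ _ _
        _ ≤ (2 * (P : ℝ)) ^ q * ((K ^ t / C) * (homCount H G : ℝ) ^ q) := by
            apply mul_le_mul_of_nonneg_left hcast (by positivity)
        _ = ((2 * (P : ℝ)) ^ q * (K ^ t / C)) * (homCount H G : ℝ) ^ q := by ring
        _ ≤ 1 * (homCount H G : ℝ) ^ q := by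
            apply mul_le_mul_of_nonneg_right hPC (by positivity)
        _ = (homCount H G : ℝ) ^ q := one_mul _
    have := (pow_le_pow_iff_left₀ (by positivity) hh0 (by omega : q ≠ 0)).mp hfin
    exact this
  -- counting: noninjective homs are few
  have hnon := noninj_le (G := G) hbip hconn hGbip
  have htot : (Finset.univ.filter (fun f : H →g G => Function.Injective ⇑f)).card
      + (Finset.univ.filter (fun f : H →g G => ¬ Function.Injective ⇑f)).card
      = homCount H G := by
    rw [homCount, Nat.card_eq_fintype_card, ← Finset.card_univ]
    exact Finset.card_filter_add_card_filter_not _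
  have hnon2 : ((Finset.univ.filter (fun f : H →g G => ¬ Function.Injective ⇑f)).card : ℝ)
      ≤ (homCount H G : ℝ) / 2 := by
    rcases Finset.eq_empty_or_nonempty (pairsF X₁ X₂) with hPe | hPne
    · have h1 : (Finset.univ.filter (fun f : H →g G => ¬ Function.Injective ⇑f)).card = 0 := by
        have h2 := hnon
        rw [hPe, Finset.sum_empty] at h2
        omega
      rw [h1]
      simp only [Nat.cast_zero]
      positivity
    · have hPpos : 0 < P := Finset.card_pos.mpr hPne
      have h1 : ((Finset.univ.filter (fun f : H →g G => ¬ Function.Injective ⇑f)).card : ℝ)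
          ≤ ∑ uv ∈ pairsF X₁ X₂, ((homCountOn H G {uv.1, uv.2} : ℕ) : ℝ) := by
        have := hnon
        calc ((Finset.univ.filter (fun f : H →g G => ¬ Function.Injective ⇑f)).card : ℝ)
            ≤ ((∑ uv ∈ pairsF X₁ X₂, homCountOn H G {uv.1, uv.2} : ℕ) : ℝ) := by
              exact_mod_cast this
          _ = _ := by push_cast; rfl
      have h2 : ∑ uv ∈ pairsF X₁ X₂, ((homCountOn H G {uv.1, uv.2} : ℕ) : ℝ)
          ≤ ∑ _uv ∈ pairsF X₁ X₂, (homCount H G : ℝ) / (2 * (P : ℝ)) := by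
        apply Finset.sum_le_sum
        intro uv huv
        have := hpair uv huv
        rw [le_div_iff₀ (by positivity)]
        calc ((homCountOn H G {uv.1, uv.2} : ℕ) : ℝ) * (2 * (P : ℝ))
            = 2 * (P : ℝ) * ((homCountOn H G {uv.1, uv.2} : ℕ) : ℝ) := by ring
          _ ≤ _ := this
      have h3 : ∑ _uv ∈ pairsF X₁ X₂, (homCount H G : ℝ) / (2 * (P : ℝ))
          = (homCount H G : ℝ) / 2 := by
        rw [Finset.sum_const, ← hPdef, nsmul_eq_mul]
        field_simp
      linarith
  have hinj : (homCount H G : ℝ) / 2 ≤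
      ((Finset.univ.filter (fun f : H →g G => Function.Injective ⇑f)).card : ℝ) := by
    have hc : ((Finset.univ.filter (fun f : H →g G => Function.Injective ⇑f)).card : ℝ)
        + ((Finset.univ.filter (fun f : H →g G => ¬ Function.Injective ⇑f)).card : ℝ)
        = (homCount H G : ℝ) := by exact_mod_cast congrArg (Nat.cast : ℕ → ℝ) htot
    linarith
  have hcopy : ((Finset.univ.filter (fun f : H →g G => Function.Injective ⇑f)).card : ℝ)
      ≤ (v : ℝ) ^ v * (_root_.copyCount H G : ℝ) := by
    have := inj_card_le_copy (H := H) (G := G)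
    calc ((Finset.univ.filter (fun f : H →g G => Function.Injective ⇑f)).card : ℝ)
        ≤ ((v ^ v * _root_.copyCount H G : ℕ) : ℝ) := by exact_mod_cast this
      _ = (v : ℝ) ^ v * (_root_.copyCount H G : ℝ) := by push_cast; ring
  have hvv : (0 : ℝ) < (v : ℝ) ^ v := by positivity
  have hfinal : (n : ℝ) ^ v * p ^ H.edgeSet.ncard ≤
      2 * (v : ℝ) ^ v * (_root_.copyCount H G : ℝ) := by nlinarith [hsidG]
  rw [div_mul_eq_mul_div, div_mul_eq_mul_div, div_le_iff₀ (by positivity)]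
  calc 1 * (n : ℝ) ^ v * p ^ H.edgeSet.ncard
      = (n : ℝ) ^ v * p ^ H.edgeSet.ncard := by ring
    _ ≤ 2 * (v : ℝ) ^ v * (_root_.copyCount H G : ℝ) := hfinal
    _ = (_root_.copyCount H G : ℝ) * (2 * (v : ℝ) ^ v) := by ring
end

section
/- For any integer d ≥ 3, the d-dimensional hypercube Q_d is reflective. -/
open SimpleGraph

/-- The `d`-dimensional hypercube `Q_d`: vertices are `{0,1}^d`, two vertices being
adjacent iff they differ in exactly one coordinate. -/
def hypercube (d : ℕ) : SimpleGraph (Fin d → Bool) where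
  Adj x y := (Finset.univ.filter fun i => x i ≠ y i).card = 1
  symm := by
    constructor
    intro x y h
    try dsimp only at h ⊢
    have h' : (Finset.univ.filter fun i => y i ≠ x i)
        = (Finset.univ.filter fun i => x i ≠ y i) := by
      apply Finset.filter_congr
      intro i _
      exact ne_comm
    rw [h']
    exact h
  loopless := by
    constructor
    intro x h
    simp at h

namespace HypRefl

variable {d : ℕ}

/-- weight -/
def W (x : Fin d → Bool) : ℕ := (Finset.univ.filter fun i => x i = true).card

def eMap (k l : Fin d) (s : Bool) (x : Fin d → Bool) : Fin d → Bool :=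
  fun m => if m = k then xor (x l) s else if m = l then xor (x k) s else x m

variable {k l : Fin d} {s : Bool}

lemma eMap_k (hkl : k ≠ l) (x : Fin d → Bool) : eMap k l s x k = xor (x l) s := by
  simp [eMap]

lemma eMap_l (hkl : k ≠ l) (x : Fin d → Bool) : eMap k l s x l = xor (x k) s := by
  simp [eMap, hkl.symm]

lemma eMap_other {m : Fin d} (hk : m ≠ k) (hl : m ≠ l) (x : Fin d → Bool) :
    eMap k l s x m = x m := by
  simp [eMap, hk, hl]

lemma eMap_invol (hkl : k ≠ l) (x : Fin d → Bool) : eMap k l s (eMap k l s x) = x := by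
  funext m
  by_cases hk : m = k
  · rw [hk, eMap_k hkl, eMap_l hkl]
    cases x k <;> cases s <;> rfl
  · by_cases hl : m = l
    · rw [hl, eMap_l hkl, eMap_k hkl]
      cases x l <;> cases s <;> rfl
    · rw [eMap_other hk hl, eMap_other hk hl]

lemma xor_cancel_l {p q r t : Bool} (h : xor p q = xor r t) (h1 : p = r) : q = t := by
  cases p <;> cases q <;> cases r <;> cases t <;> simp_all

lemma xor_cancel_r {p q r t : Bool} (h : xor p q = xor r t) (h2 : q = t) : p = r := by
  cases p <;> cases q <;> cases r <;> cases t <;> simp_all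

lemma adj_coord {x y : Fin d → Bool} (hkl : k ≠ l) (h : (hypercube d).Adj x y) :
    x k = y k ∨ x l = y l := by
  by_contra hc
  push_neg at hc
  have hsub : ({k, l} : Finset (Fin d)) ⊆ Finset.univ.filter fun i => x i ≠ y i := by
    intro m hm
    simp only [Finset.mem_insert, Finset.mem_singleton] at hm
    rcases hm with rfl | rfl
    · simp [hc.1]
    · simp [hc.2]
  have hcard := Finset.card_le_card hsub
  rw [Finset.card_pair hkl] at hcard
  have : (Finset.univ.filter fun i => x i ≠ y i).card = 1 := h
  omega

lemma eMap_adj {x y : Fin d → Bool} (hkl : k ≠ l) (h : (hypercube d).Adj x y) :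
    (hypercube d).Adj (eMap k l s x) (eMap k l s y) := by
  have hset : (Finset.univ.filter fun m => eMap k l s x m ≠ eMap k l s y m)
      = (Finset.univ.filter fun m => x m ≠ y m).map (Equiv.swap k l).toEmbedding := by
    ext m
    rw [Finset.mem_map_equiv]
    simp only [Finset.mem_filter, Finset.mem_univ, true_and, Equiv.symm_swap]
    by_cases hk : m = k
    · subst hk
      rw [Equiv.swap_apply_left, eMap_k hkl, eMap_k hkl]
      cases x l <;> cases y l <;> cases s <;> simp
    · by_cases hl : m = l
      · subst hl
        rw [Equiv.swap_apply_right, eMap_l hkl, eMap_l hkl]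
        cases x k <;> cases y k <;> cases s <;> simp
      · rw [Equiv.swap_apply_of_ne_of_ne hk hl, eMap_other hk hl, eMap_other hk hl]
  show (Finset.univ.filter fun m => eMap k l s x m ≠ eMap k l s y m).card = 1
  rw [hset, Finset.card_map]
  exact h

def phi (k l : Fin d) (hkl : k ≠ l) (s : Bool) : hypercube d ≃g hypercube d where
  toFun := eMap k l s
  invFun := eMap k l s
  left_inv := eMap_invol hkl
  right_inv := eMap_invol hkl
  map_rel_iff' := by
    intro x y
    constructor
    · intro h
      have h' : (hypercube d).Adj (eMap k l s x) (eMap k l s y) := h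
      have := eMap_adj hkl (s := s) h'
      rwa [eMap_invol hkl, eMap_invol hkl] at this
    · exact eMap_adj hkl

lemma phi_apply (hkl : k ≠ l) (x : Fin d → Bool) : phi k l hkl s x = eMap k l s x := rfl

lemma fixedSet_phi (hkl : k ≠ l) (s : Bool) :
    FixedSet (phi k l hkl s) = {x | xor (x k) (x l) = s} := by
  ext x
  constructor
  · intro hx
    have hx' : eMap k l s x = x := hx
    have h := congrFun hx' k
    rw [eMap_k hkl] at h
    show xor (x k) (x l) = s
    cases hxk : x k <;> cases hxl : x l <;> cases s <;> simp_all
  · intro hx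
    have hx' : xor (x k) (x l) = s := hx
    show eMap k l s x = x
    funext m
    by_cases hk : m = k
    · rw [hk, eMap_k hkl]
      cases hxk : x k <;> cases hxl : x l <;> cases s <;> simp_all
    · by_cases hl : m = l
      · rw [hl, eMap_l hkl]
        cases hxk : x k <;> cases hxl : x l <;> cases s <;> simp_all
      · rw [eMap_other hk hl]

def Aset (k l : Fin d) (a b : Bool) : Set (Fin d → Bool) := {x | x k = a ∧ x l = b}

lemma walk_sep (hkl : k ≠ l) (a b : Bool) :
    ∀ {x y : Fin d → Bool} (w : (hypercube d).Walk x y),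
      x k = a → x l = b → y k = !a → y l = !b →
      ∃ v ∈ w.support, xor (v k) (v l) = !(xor a b) := by
  intro x y w
  induction w with
  | nil =>
    intro h1 _ h3 _
    rw [h1] at h3
    cases a <;> simp_all
  | @cons x z y h w ih =>
    intro hxk hxl hyk hyl
    by_cases hz : xor (z k) (z l) = !(xor a b)
    · exact ⟨z, by
        rw [SimpleGraph.Walk.support_cons]
        exact List.mem_cons_of_mem _ w.start_mem_support, hz⟩
    · have hz' : xor (z k) (z l) = xor a b := by
        cases hzk : z k <;> cases hzl : z l <;> cases a <;> cases b <;> simp_all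
      have hzA : z k = a ∧ z l = b := by
        rcases adj_coord hkl h with hk | hl
        · have h1 : z k = a := by rw [← hk, hxk]
          exact ⟨h1, xor_cancel_l hz' h1⟩
        · have h2 : z l = b := by rw [← hl, hxl]
          exact ⟨xor_cancel_r hz' h2, h2⟩
      obtain ⟨v, hv, hvf⟩ := ih hzA.1 hzA.2 hyk hyl
      exact ⟨v, by
        rw [SimpleGraph.Walk.support_cons]
        exact List.mem_cons_of_mem _ hv, hvf⟩

lemma nice (hkl : k ≠ l) (a b : Bool) :
    IsNiceTriple (hypercube d) (Aset k l a b) (Aset k l (!a) (!b))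
      (phi k l hkl (!(xor a b))) := by
  have hF := fixedSet_phi hkl (!(xor a b))
  refine ⟨?_, ?_, ?_, ?_, ?_, ?_, ?_⟩
  · intro v
    exact eMap_invol hkl v
  · rw [Set.disjoint_left]
    rintro x ⟨h1, h2⟩ ⟨h3, h4⟩
    rw [h1] at h3
    cases a <;> simp_all
  · rw [Set.disjoint_left, hF]
    rintro x ⟨h1, h2⟩ h3
    simp only [Set.mem_setOf_eq] at h3
    rw [h1, h2] at h3
    cases a <;> cases b <;> exact absurd h3 (by decide)
  · rw [Set.disjoint_left, hF]
    rintro x ⟨h1, h2⟩ h3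
    simp only [Set.mem_setOf_eq] at h3
    rw [h1, h2] at h3
    cases a <;> cases b <;> exact absurd h3 (by decide)
  · rw [hF]
    ext x
    simp only [Set.mem_univ, iff_true, Set.mem_union, Set.mem_setOf_eq, Aset]
    cases hxk : x k <;> cases hxl : x l <;> cases a <;> cases b <;> simp_all
  · intro p hp q hq w
    rw [hF]
    exact walk_sep hkl a b w hp.1 hp.2 hq.1 hq.2
  · ext y
    constructor
    · rintro ⟨x, ⟨hx1, hx2⟩, rfl⟩
      constructor
      · show eMap k l (!(xor a b)) x k = !a
        rw [eMap_k hkl, hx2]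
        cases a <;> cases b <;> rfl
      · show eMap k l (!(xor a b)) x l = !b
        rw [eMap_l hkl, hx1]
        cases a <;> cases b <;> rfl
    · rintro ⟨hy1, hy2⟩
      refine ⟨eMap k l (!(xor a b)) y, ⟨?_, ?_⟩, eMap_invol hkl y⟩
      · rw [eMap_k hkl, hy2]
        cases a <;> cases b <;> rfl
      · rw [eMap_l hkl, hy1]
        cases a <;> cases b <;> rfl

lemma parity_iff (hkl : k ≠ l) {x y : Fin d → Bool}
    (hoff : ∀ m, m ≠ k → m ≠ l → x m = y m) :
    W x % 2 = W y % 2 ↔ xor (x k) (x l) = xor (y k) (y l) := by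
  have key : ∀ z : Fin d → Bool, W z = (if z k = true then 1 else 0) +
      ((if z l = true then 1 else 0) +
        ∑ m ∈ (Finset.univ.erase k).erase l, (if z m = true then 1 else 0)) := by
    intro z
    rw [W, Finset.card_filter]
    rw [← Finset.add_sum_erase _ _ (Finset.mem_univ k)]
    congr 1
    rw [← Finset.add_sum_erase _ _ (Finset.mem_erase.mpr ⟨hkl.symm, Finset.mem_univ l⟩)]
  have hsum : ∑ m ∈ (Finset.univ.erase k).erase l, (if x m = true then 1 else 0)
      = ∑ m ∈ (Finset.univ.erase k).erase l, (if y m = true then 1 else 0) := by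
    apply Finset.sum_congr rfl
    intro m hm
    rw [Finset.mem_erase, Finset.mem_erase] at hm
    rw [hoff m hm.2.1 hm.1]
  rw [key x, key y, hsum]
  cases hxk : x k <;> cases hxl : x l <;> cases hyk : y k <;> cases hyl : y l <;>
    simp <;> omega

/-- parity is preserved by `eMap`. -/
lemma parity_eMap (hkl : k ≠ l) (x : Fin d → Bool) :
    W (eMap k l s x) % 2 = W x % 2 := by
  rw [parity_iff hkl (fun m hk hl => eMap_other hk hl x), eMap_k hkl, eMap_l hkl]
  cases x k <;> cases x l <;> cases s <;> rfl

def Step (X₁ X₂ : Set (Fin d → Bool)) (R R' : Set (Fin d → Bool)) : Prop :=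
  ∃ (A B : Set (Fin d → Bool)) (φ : hypercube d ≃g hypercube d),
    IsNiceTriple (hypercube d) A B φ ∧ IsAdmissible X₁ X₂ A B φ R ∧ R' = psiSet A φ R

lemma reach_chain {X₁ X₂ R X : Set (Fin d → Bool)}
    (h : Relation.ReflTransGen (Step X₁ X₂) R X) :
    ∃ (m : ℕ) (A B : ℕ → Set (Fin d → Bool)) (φ : ℕ → (hypercube d ≃g hypercube d))
      (Rs : ℕ → Set (Fin d → Bool)),
      Rs 0 = R ∧ Rs m = X ∧
      ∀ j < m, IsNiceTriple (hypercube d) (A j) (B j) (φ j) ∧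
        IsAdmissible X₁ X₂ (A j) (B j) (φ j) (Rs j) ∧
        Rs (j + 1) = psiSet (A j) (φ j) (Rs j) := by
  induction h using Relation.ReflTransGen.head_induction_on with
  | refl =>
    exact ⟨0, fun _ => ∅, fun _ => ∅, fun _ => ⟨Equiv.refl _, Iff.rfl⟩, fun _ => X,
      rfl, rfl, fun j hj => absurd hj (by omega)⟩
  | @head a c hstep htail ih =>
    obtain ⟨m, A, B, φ, Rs, h0, hm, hchain⟩ := ih
    obtain ⟨A₀, B₀, φ₀, h₁, h₂, h₃⟩ := hstep
    refine ⟨m + 1, fun j => if j = 0 then A₀ else A (j - 1),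
      fun j => if j = 0 then B₀ else B (j - 1),
      fun j => if j = 0 then φ₀ else φ (j - 1),
      fun j => if j = 0 then a else Rs (j - 1), by simp, by simp [hm], ?_⟩
    intro j hj
    cases j with
    | zero =>
      refine ⟨by simpa using h₁, by simpa using h₂, ?_⟩
      simpa [h0] using h₃
    | succ i =>
      have hi : i < m := by omega
      obtain ⟨c₁, c₂, c₃⟩ := hchain i hi
      refine ⟨by simpa using c₁, by simpa using c₂, ?_⟩
      simpa using c₃

lemma bool_ne_iff (t c : Bool) : t ≠ c ↔ t = !c := by cases t <;> cases c <;> simp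

variable {X X₁ X₂ : Set (Fin d → Bool)} {p : ℕ} {u : Fin d → Bool}

def cubeSet (X : Set (Fin d → Bool)) (S : Finset (Fin d)) (u : Fin d → Bool) :
    Set (Fin d → Bool) := {x | x ∈ X ∧ ∀ i, i ∉ S → x i = u i}

lemma exists_cubeSet (hX : ∀ x, x ∈ X ↔ W x % 2 = p) (hu : u ∈ X) {S : Finset (Fin d)}
    {l m : Fin d} (hl : l ∈ S) (hm : m ∈ S) (hlm : l ≠ m) (c : Bool) :
    ∃ x, x ∈ cubeSet X S u ∧ x l = c := by
  refine ⟨eMap l m (xor (u m) c) u, ⟨?_, ?_⟩, ?_⟩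
  · rw [hX, parity_eMap hlm, ← hX]
    exact hu
  · intro i hi
    exact eMap_other (fun h => hi (by rw [h]; exact hl)) (fun h => hi (by rw [h]; exact hm)) u
  · rw [eMap_k hlm]
    cases u m <;> cases c <;> rfl

lemma mem_cubeSet_self (hu : u ∈ X) (S : Finset (Fin d)) : u ∈ cubeSet X S u :=
  ⟨hu, fun _ _ => rfl⟩

lemma grow_step (hX : ∀ x, x ∈ X ↔ W x % 2 = p) (hsub : X ⊆ X₁ ∨ X ⊆ X₂)
    (hu : u ∈ X) {S : Finset (Fin d)} {k l : Fin d}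
    (hl : l ∈ S) (hk : k ∉ S) (hS : 2 ≤ S.card) :
    Relation.ReflTransGen (Step X₁ X₂) (cubeSet X S u) (cubeSet X (insert k S) u) := by
  have hkl : k ≠ l := fun h => hk (h ▸ hl)
  obtain ⟨m, hm, hml⟩ := Finset.exists_mem_ne (s := S) (by omega) l
  set R : Set (Fin d → Bool) := cubeSet X S u with hRdef
  set R1 : Set (Fin d → Bool) :=
    {x | x ∈ X ∧ (∀ i, i ∉ insert k S → x i = u i) ∧ (x k = u k ∨ x l = u k)} with hR1def
  have hRX : R ⊆ X := fun x hx => hx.1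
  have hR1X : R1 ⊆ X := fun x hx => hx.1
  have hRR1 : R ⊆ R1 := by
    rintro x ⟨hx1, hx2⟩
    exact ⟨hx1, fun i hi => hx2 i (fun h => hi (Finset.mem_insert_of_mem h)),
      Or.inl (hx2 k hk)⟩
  have huR : u ∈ R := mem_cubeSet_self hu S
  -- step 1 --
  have hF1 : FixedSet (phi k l hkl false) = {x | xor (x k) (x l) = false} :=
    fixedSet_phi hkl false
  have hnice1 := nice hkl (u k) (!(u k))
  rw [show (!(xor (u k) (!(u k)))) = false by cases u k <;> rfl] at hnice1
  have hRsub : ∀ x ∈ R, x ∈ Aset k l (u k) (!(u k)) ∪ FixedSet (phi k l hkl false) := by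
    intro x hx
    have hxk : x k = u k := hx.2 k hk
    by_cases hxl : x l = u k
    · right
      rw [hF1]
      show xor (x k) (x l) = false
      rw [hxk, hxl]
      cases u k <;> rfl
    · exact Or.inl ⟨hxk, (bool_ne_iff _ _).mp hxl⟩
  have step1 : Step X₁ X₂ R R1 := by
    refine ⟨Aset k l (u k) (!(u k)), _, phi k l hkl false, hnice1,
      ⟨hsub.imp (fun h => hRX.trans h) (fun h => hRX.trans h),
        ⟨u, huR, hRsub u huR⟩, ?_⟩, ?_⟩
    · obtain ⟨x, hxR, hxl⟩ := exists_cubeSet hX hu hl hm hml.symm (u k)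
      refine ⟨x, hxR, Or.inr ?_⟩
      rw [hF1]
      show xor (x k) (x l) = false
      rw [hxR.2 k hk, hxl]
      cases u k <;> rfl
    · ext x
      simp only [psiSet, Set.mem_union, Set.mem_inter_iff, Set.mem_image]
      constructor
      · rintro ⟨hxX, hagree, hor⟩
        by_cases hxk : x k = u k
        · have hxR : x ∈ R := by
            refine ⟨hxX, fun i hi => ?_⟩
            by_cases hik : i = k
            · rw [hik]; exact hxk
            · exact hagree i (by simp [Finset.mem_insert, hik, hi])
          exact Or.inl ⟨hxR, hRsub x hxR⟩
        · have hxk' : x k = !(u k) := (bool_ne_iff _ _).mp hxk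
          have hxl : x l = u k := hor.resolve_left hxk
          refine Or.inr ⟨eMap k l false x, ⟨⟨?_, ?_⟩, ?_, ?_⟩, ?_⟩
          · rw [hX, parity_eMap hkl]
            exact (hX x).mp hxX
          · intro i hi
            by_cases hik : i = k
            · rw [hik, eMap_k hkl, hxl]
              cases u k <;> rfl
            · have hil : i ≠ l := fun h => hi (h ▸ hl)
              rw [eMap_other hik hil]
              exact hagree i (by simp [Finset.mem_insert, hik, hi])
          · rw [eMap_k hkl, hxl]
            cases u k <;> rfl
          · rw [eMap_l hkl, hxk']
            cases u k <;> rfl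
          · show eMap k l false (eMap k l false x) = x
            exact eMap_invol hkl x
      · rintro (⟨hxR, -⟩ | ⟨x', ⟨hx'R, hx'A⟩, rfl⟩)
        · exact hRR1 hxR
        · refine ⟨?_, ?_, Or.inr ?_⟩
          · rw [hX]
            show W (eMap k l false x') % 2 = p
            rw [parity_eMap hkl]
            exact (hX _).mp hx'R.1
          · intro i hi
            have hik : i ≠ k := fun h => hi (h ▸ Finset.mem_insert_self k S)
            have hil : i ≠ l := fun h => hi (h ▸ Finset.mem_insert_of_mem hl)
            show eMap k l false x' i = u i
            rw [eMap_other hik hil]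
            exact hx'R.2 i (fun h => hi (Finset.mem_insert_of_mem h))
          · show eMap k l false x' l = u k
            rw [eMap_l hkl, hx'R.2 k hk]
            cases u k <;> rfl
  -- step 2 --
  have hF2 : FixedSet (phi k l hkl true) = {x | xor (x k) (x l) = true} :=
    fixedSet_phi hkl true
  have hnice2 := nice hkl (u k) (u k)
  rw [show (!(xor (u k) (u k))) = true by cases u k <;> rfl] at hnice2
  have hR1sub : ∀ x ∈ R1, x ∈ Aset k l (u k) (u k) ∪ FixedSet (phi k l hkl true) := by
    rintro x ⟨-, -, hor⟩
    by_cases hxk : x k = u k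
    · by_cases hxl : x l = u k
      · exact Or.inl ⟨hxk, hxl⟩
      · right
        rw [hF2]
        show xor (x k) (x l) = true
        rw [hxk, (bool_ne_iff _ _).mp hxl]
        cases u k <;> rfl
    · right
      rw [hF2]
      show xor (x k) (x l) = true
      rw [(bool_ne_iff _ _).mp hxk, hor.resolve_left hxk]
      cases u k <;> rfl
  have step2 : Step X₁ X₂ R1 (cubeSet X (insert k S) u) := by
    refine ⟨Aset k l (u k) (u k), _, phi k l hkl true, hnice2,
      ⟨hsub.imp (fun h => hR1X.trans h) (fun h => hR1X.trans h),
        ⟨u, hRR1 huR, hR1sub u (hRR1 huR)⟩, ?_⟩, ?_⟩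
    · obtain ⟨x, hxR, hxl⟩ := exists_cubeSet hX hu hl hm hml.symm (!(u k))
      refine ⟨x, hRR1 hxR, Or.inr ?_⟩
      rw [hF2]
      show xor (x k) (x l) = true
      rw [hxR.2 k hk, hxl]
      cases u k <;> rfl
    · ext x
      simp only [psiSet, Set.mem_union, Set.mem_inter_iff, Set.mem_image]
      constructor
      · rintro ⟨hxX, hagree⟩
        by_cases hxk : x k = u k
        · exact Or.inl ⟨⟨hxX, hagree, Or.inl hxk⟩, hR1sub x ⟨hxX, hagree, Or.inl hxk⟩⟩
        · by_cases hxl : x l = u k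
          · exact Or.inl ⟨⟨hxX, hagree, Or.inr hxl⟩, hR1sub x ⟨hxX, hagree, Or.inr hxl⟩⟩
          · have hxk' : x k = !(u k) := (bool_ne_iff _ _).mp hxk
            have hxl' : x l = !(u k) := (bool_ne_iff _ _).mp hxl
            refine Or.inr ⟨eMap k l true x, ⟨⟨?_, ?_, Or.inl ?_⟩, ?_, ?_⟩, ?_⟩
            · rw [hX, parity_eMap hkl]
              exact (hX x).mp hxX
            · intro i hi
              have hik : i ≠ k := fun h => hi (h ▸ Finset.mem_insert_self k S)
              have hil : i ≠ l := fun h => hi (h ▸ Finset.mem_insert_of_mem hl)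
              rw [eMap_other hik hil]
              exact hagree i hi
            · rw [eMap_k hkl, hxl']
              cases u k <;> rfl
            · rw [eMap_k hkl, hxl']
              cases u k <;> rfl
            · rw [eMap_l hkl, hxk']
              cases u k <;> rfl
            · show eMap k l true (eMap k l true x) = x
              exact eMap_invol hkl x
      · rintro (⟨hxR1, -⟩ | ⟨x', ⟨hx'R1, hx'A⟩, rfl⟩)
        · exact ⟨hxR1.1, hxR1.2.1⟩
        · refine ⟨?_, ?_⟩
          · rw [hX]
            show W (eMap k l true x') % 2 = p
            rw [parity_eMap hkl]
            exact (hX _).mp hx'R1.1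
          · intro i hi
            have hik : i ≠ k := fun h => hi (h ▸ Finset.mem_insert_self k S)
            have hil : i ≠ l := fun h => hi (h ▸ Finset.mem_insert_of_mem hl)
            show eMap k l true x' i = u i
            rw [eMap_other hik hil]
            exact hx'R1.2.1 i hi
  exact (Relation.ReflTransGen.single step1).trans (Relation.ReflTransGen.single step2)

lemma cubeSet_univ : cubeSet X Finset.univ u = X := by
  ext x
  exact ⟨fun h => h.1, fun h => ⟨h, fun i hi => absurd (Finset.mem_univ i) hi⟩⟩

lemma grow_all (hX : ∀ x, x ∈ X ↔ W x % 2 = p) (hsub : X ⊆ X₁ ∨ X ⊆ X₂) (hu : u ∈ X) :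
    ∀ (n : ℕ) (S : Finset (Fin d)), 2 ≤ S.card → (Finset.univ \ S).card = n →
      Relation.ReflTransGen (Step X₁ X₂) (cubeSet X S u) X := by
  have hcard : ∀ T : Finset (Fin d), (Finset.univ \ T).card = d - T.card := by
    intro T
    rw [Finset.card_sdiff_of_subset (Finset.subset_univ T), Finset.card_univ, Fintype.card_fin]
  intro n
  induction n with
  | zero =>
    intro S hS hn
    have hle := Finset.card_le_univ S
    rw [Fintype.card_fin] at hle
    rw [hcard S] at hn
    have hSuniv : S = Finset.univ := Finset.eq_univ_of_card S
      (by rw [Fintype.card_fin]; omega)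
    rw [hSuniv, cubeSet_univ]
  | succ n ih =>
    intro S hS hn
    have hne : (Finset.univ \ S).Nonempty := Finset.card_pos.mp (by omega)
    obtain ⟨k, hk⟩ := hne
    have hkS : k ∉ S := (Finset.mem_sdiff.mp hk).2
    obtain ⟨l, hl⟩ := Finset.card_pos.mp (by omega : 0 < S.card)
    refine (grow_step hX hsub hu hl hkS hS).trans (ih (insert k S) ?_ ?_)
    · rw [Finset.card_insert_of_notMem hkS]
      omega
    · rw [hcard] at hn ⊢
      rw [Finset.card_insert_of_notMem hkS]
      have hle := Finset.card_le_univ S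
      rw [Fintype.card_fin] at hle
      omega

lemma pair_eq_cubeSet (hX : ∀ x, x ∈ X ↔ W x % 2 = p) {k l : Fin d} (hkl : k ≠ l)
    (hu : u ∈ X) :
    cubeSet X {k, l} u = {u, eMap k l (!(xor (u k) (u l))) u} := by
  have hvk : eMap k l (!(xor (u k) (u l))) u k = !(u k) := by
    rw [eMap_k hkl]
    cases u k <;> cases u l <;> rfl
  have hvl : eMap k l (!(xor (u k) (u l))) u l = !(u l) := by
    rw [eMap_l hkl]
    cases u k <;> cases u l <;> rfl
  ext x
  simp only [Set.mem_insert_iff, Set.mem_singleton_iff]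
  constructor
  · rintro ⟨hxX, hagree⟩
    have hoff : ∀ m, m ≠ k → m ≠ l → x m = u m := fun m h1 h2 =>
      hagree m (by simp [h1, h2])
    have hpar : W x % 2 = W u % 2 := by rw [(hX x).mp hxX, (hX u).mp hu]
    have hxor := (parity_iff hkl hoff).mp hpar
    by_cases hxk : x k = u k
    · left
      funext i
      by_cases hik : i = k
      · rw [hik]; exact hxk
      · by_cases hil : i = l
        · rw [hil]; exact xor_cancel_l hxor hxk
        · exact hoff i hik hil
    · right
      have hxk' : x k = !(u k) := (bool_ne_iff _ _).mp hxk
      have hxl' : x l = !(u l) := (bool_ne_iff _ _).mp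
        (fun h => hxk (xor_cancel_r hxor h))
      funext i
      by_cases hik : i = k
      · rw [hik, hxk', hvk]
      · by_cases hil : i = l
        · rw [hil, hxl', hvl]
        · rw [hoff i hik hil, eMap_other hik hil u]
  · rintro (rfl | rfl)
    · exact mem_cubeSet_self hu _
    · refine ⟨?_, ?_⟩
      · rw [hX, parity_eMap hkl]
        exact (hX u).mp hu
      · intro i hi
        have hik : i ≠ k := fun h => hi (by simp [h])
        have hil : i ≠ l := fun h => hi (by simp [h])
        exact eMap_other hik hil u

lemma shrink (hd : 2 ≤ d) (hX : ∀ x, x ∈ X ↔ W x % 2 = p) (hsub : X ⊆ X₁ ∨ X ⊆ X₂)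
    {u v : Fin d → Bool} (hu : u ∈ X) (hv : v ∈ X) (huv : u ≠ v) :
    Relation.ReflTransGen (Step X₁ X₂) {u, v} X := by
  set D := Finset.univ.filter (fun i => u i ≠ v i) with hD
  have hDne : D.Nonempty := by
    by_contra h
    rw [Finset.not_nonempty_iff_eq_empty] at h
    apply huv
    funext i
    by_contra hne
    have : i ∈ D := by simp [hD, hne]
    rw [h] at this
    exact absurd this (Finset.notMem_empty i)
  have hpar : W u % 2 = W v % 2 := by rw [(hX u).mp hu, (hX v).mp hv]
  have hD1 : D.card ≠ 1 := by
    intro h1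
    obtain ⟨i, hi⟩ := Finset.card_eq_one.mp h1
    obtain ⟨j, hj⟩ := Fintype.exists_ne_of_one_lt_card
      (by rw [Fintype.card_fin]; omega) i
    have hij : i ≠ j := fun h => hj h.symm
    have hoff : ∀ m, m ≠ i → m ≠ j → u m = v m := by
      intro m h1' h2'
      by_contra hne
      have hm : m ∈ D := by simp [hD, hne]
      rw [hi, Finset.mem_singleton] at hm
      exact h1' hm
    have hxor := (parity_iff hij hoff).mp hpar
    have hjval : u j = v j := by
      by_contra hne
      have hm : j ∈ D := by simp [hD, hne]
      rw [hi, Finset.mem_singleton] at hm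
      exact hj hm
    have hieq : u i = v i := xor_cancel_r hxor hjval
    have : i ∈ D := by rw [hi]; exact Finset.mem_singleton_self i
    rw [hD, Finset.mem_filter] at this
    exact this.2 hieq
  have hD2 : 2 ≤ D.card := by
    have := Finset.card_pos.mpr hDne
    omega
  obtain ⟨i, hi⟩ := hDne
  obtain ⟨j, hj, hji⟩ := Finset.exists_mem_ne (s := D) (by omega) i
  have hij : i ≠ j := fun h => hji h.symm
  have hui : u i ≠ v i := by
    rw [hD, Finset.mem_filter] at hi
    exact hi.2
  have huj : u j ≠ v j := by
    rw [hD, Finset.mem_filter] at hj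
    exact hj.2
  have hpairX : ({u, v} : Set (Fin d → Bool)) ⊆ X := by
    rintro x hx
    rcases hx with rfl | rfl
    · exact hu
    · exact hv
  have hnice := nice hij (u i) (u j)
  obtain ⟨-, hAB, hAF, hBF, -, -, -⟩ := hnice
  have hvB : v ∈ Aset i j (!(u i)) (!(u j)) :=
    ⟨((bool_ne_iff _ _).mp hui.symm), ((bool_ne_iff _ _).mp huj.symm)⟩
  have huA : u ∈ Aset i j (u i) (u j) := ⟨rfl, rfl⟩
  have hvnA : v ∉ Aset i j (u i) (u j) := fun h => Set.disjoint_left.mp hAB h hvB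
  have hvnF : v ∉ FixedSet (phi i j hij (!(xor (u i) (u j)))) :=
    fun h => Set.disjoint_left.mp hBF hvB h
  have step : Step X₁ X₂ {u, v} {u, eMap i j (!(xor (u i) (u j))) u} := by
    refine ⟨Aset i j (u i) (u j), Aset i j (!(u i)) (!(u j)),
      phi i j hij (!(xor (u i) (u j))), nice hij (u i) (u j),
      ⟨hsub.imp (fun h => hpairX.trans h) (fun h => hpairX.trans h),
        ⟨u, Set.mem_insert u _, Or.inl huA⟩,
        ⟨v, Set.mem_insert_of_mem u rfl, Or.inl hvB⟩⟩, ?_⟩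
    ext x
    simp only [psiSet, Set.mem_union, Set.mem_inter_iff, Set.mem_image,
      Set.mem_insert_iff, Set.mem_singleton_iff]
    constructor
    · rintro (rfl | rfl)
      · exact Or.inl ⟨Or.inl rfl, Or.inl huA⟩
      · exact Or.inr ⟨u, ⟨Or.inl rfl, huA⟩, rfl⟩
    · rintro (⟨(rfl | rfl), hxAF⟩ | ⟨x', ⟨(rfl | rfl), hx'A⟩, rfl⟩)
      · exact Or.inl rfl
      · rcases hxAF with h | h
        · exact absurd h hvnA
        · exact absurd h hvnF
      · exact Or.inr rfl
      · exact absurd hx'A hvnA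
  have hwX : eMap i j (!(xor (u i) (u j))) u ∈ X := by
    rw [hX, parity_eMap hij]
    exact (hX u).mp hu
  have hpair := pair_eq_cubeSet (k := i) (l := j) hX hij hu
  refine Relation.ReflTransGen.head step ?_
  rw [← hpair]
  exact grow_all hX hsub hu _ _ (by rw [Finset.card_pair hij]) rfl

end HypRefl

/-- For any integer `d ≥ 3`, the hypercube `Q_d` is reflective (with respect to its
bipartition into vertices of even and odd coordinate sum). -/
theorem hypercube_reflective (d : ℕ) (hd : 3 ≤ d) :
    IsReflective (hypercube d)
      {x : Fin d → Bool | Even ((Finset.univ.filter fun i => x i = true).card)}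
      {x : Fin d → Bool | Odd ((Finset.univ.filter fun i => x i = true).card)} := by
  intro X hX12 R hRX hR2
  obtain ⟨u, v, huv, rfl⟩ := Set.ncard_eq_two.mp hR2
  have hu : u ∈ X := hRX (Set.mem_insert u {v})
  have hv : v ∈ X := hRX (Set.mem_insert_of_mem u rfl)
  have hd2 : 2 ≤ d := by omega
  obtain ⟨p, hX'⟩ : ∃ p, ∀ x, x ∈ X ↔ HypRefl.W x % 2 = p := by
    rcases hX12 with rfl | rfl
    · exact ⟨0, fun x => by simp [HypRefl.W, Nat.even_iff]⟩
    · exact ⟨1, fun x => by simp [HypRefl.W, Nat.odd_iff]⟩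
  have hsub : X ⊆ {x : Fin d → Bool | Even ((Finset.univ.filter fun i => x i = true).card)}
      ∨ X ⊆ {x : Fin d → Bool | Odd ((Finset.univ.filter fun i => x i = true).card)} := by
    rcases hX12 with rfl | rfl
    · exact Or.inl subset_rfl
    · exact Or.inr subset_rfl
  exact HypRefl.reach_chain (HypRefl.shrink hd2 hX' hsub hu hv huv)
end

section
/- For any integers 1 ≤ ℓ < k/2, the bipartite graph H_{ℓ,k} is reflective. -/
open SimpleGraph

/-- The bipartite graph `H_{ℓ,k}` whose parts are the `ℓ`-element subsets of `[k]` and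
the `(k-ℓ)`-element subsets of `[k]`, with `S` joined to `T` iff `S ⊆ T`. -/
def setGraph (ℓ k : ℕ) :
    SimpleGraph ({S : Finset (Fin k) // S.card = ℓ} ⊕ {T : Finset (Fin k) // T.card = k - ℓ}) where
  Adj x y :=
    ∃ (S : {S : Finset (Fin k) // S.card = ℓ}) (T : {T : Finset (Fin k) // T.card = k - ℓ}),
      S.1 ⊆ T.1 ∧ ((x = Sum.inl S ∧ y = Sum.inr T) ∨ (x = Sum.inr T ∧ y = Sum.inl S))
  symm := by
    constructor
    rintro x y ⟨S, T, hST, (⟨rfl, rfl⟩ | ⟨rfl, rfl⟩)⟩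
    · exact ⟨S, T, hST, Or.inr ⟨rfl, rfl⟩⟩
    · exact ⟨S, T, hST, Or.inl ⟨rfl, rfl⟩⟩
  loopless := by
    constructor
    rintro x ⟨S, T, hST, (⟨rfl, h⟩ | ⟨rfl, h⟩)⟩ <;> simp at h

namespace SetGraphAux

lemma mem_map_swap {k : ℕ} {s : Finset (Fin k)} {a b x : Fin k} :
    x ∈ s.map (Equiv.swap a b).toEmbedding ↔ Equiv.swap a b x ∈ s := by
  rw [Finset.mem_map_equiv, Equiv.symm_swap]

lemma map_swap_eq_self_iff {k : ℕ} {s : Finset (Fin k)} {a b : Fin k} :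
    s.map (Equiv.swap a b).toEmbedding = s ↔ (a ∈ s ↔ b ∈ s) := by
  constructor
  · intro h
    have h1 : ∀ x, Equiv.swap a b x ∈ s ↔ x ∈ s := fun x => by
      conv_rhs => rw [← h]
      exact mem_map_swap.symm
    have := h1 b
    rwa [Equiv.swap_apply_right] at this
  · intro hiff
    ext x
    rw [mem_map_swap]
    rcases eq_or_ne x a with rfl | hxa
    · rw [Equiv.swap_apply_left]; exact hiff.symm
    rcases eq_or_ne x b with rfl | hxb
    · rw [Equiv.swap_apply_right]; exact hiff
    · rw [Equiv.swap_apply_of_ne_of_ne hxa hxb]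

lemma map_swap_of_mem {k : ℕ} {s : Finset (Fin k)} {a b : Fin k}
    (hb : b ∈ s) (ha : a ∉ s) :
    s.map (Equiv.swap a b).toEmbedding = insert a (s.erase b) := by
  ext x
  rw [mem_map_swap, Finset.mem_insert, Finset.mem_erase]
  rcases eq_or_ne x a with rfl | hxa
  · simp [Equiv.swap_apply_left, hb]
  rcases eq_or_ne x b with rfl | hxb
  · rw [Equiv.swap_apply_right]
    simp [ha, hxa]
  · rw [Equiv.swap_apply_of_ne_of_ne hxa hxb]
    simp [hxa, hxb]

section Graph

variable {ℓ k : ℕ}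

lemma adj_inl_inr {S : {S : Finset (Fin k) // S.card = ℓ}}
    {T : {T : Finset (Fin k) // T.card = k - ℓ}} :
    (setGraph ℓ k).Adj (Sum.inl S) (Sum.inr T) ↔ S.1 ⊆ T.1 := by
  constructor
  · rintro ⟨S', T', h, (⟨hS, hT⟩ | ⟨hS, hT⟩)⟩
    · obtain rfl : S = S' := by simpa using hS
      obtain rfl : T = T' := by simpa using hT
      exact h
    · simp at hS
  · intro h; exact ⟨S, T, h, Or.inl ⟨rfl, rfl⟩⟩

lemma adj_inr_inl {S : {S : Finset (Fin k) // S.card = ℓ}}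
    {T : {T : Finset (Fin k) // T.card = k - ℓ}} :
    (setGraph ℓ k).Adj (Sum.inr T) (Sum.inl S) ↔ S.1 ⊆ T.1 := by
  constructor
  · rintro ⟨S', T', h, (⟨hS, hT⟩ | ⟨hS, hT⟩)⟩
    · simp at hS
    · obtain rfl : T = T' := by simpa using hS
      obtain rfl : S = S' := by simpa using hT
      exact h
  · intro h; exact ⟨S, T, h, Or.inr ⟨rfl, rfl⟩⟩

lemma not_adj_inl_inl {S S' : {S : Finset (Fin k) // S.card = ℓ}} :
    ¬ (setGraph ℓ k).Adj (Sum.inl S) (Sum.inl S') := by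
  rintro ⟨S₀, T₀, h, (⟨h1, h2⟩ | ⟨h1, h2⟩)⟩ <;> simp at h1 h2

lemma not_adj_inr_inr {T T' : {T : Finset (Fin k) // T.card = k - ℓ}} :
    ¬ (setGraph ℓ k).Adj (Sum.inr T) (Sum.inr T') := by
  rintro ⟨S₀, T₀, h, (⟨h1, h2⟩ | ⟨h1, h2⟩)⟩ <;> simp at h1 h2

def subMapEquiv (r : ℕ) (σ : Equiv.Perm (Fin k)) :
    {S : Finset (Fin k) // S.card = r} ≃ {S : Finset (Fin k) // S.card = r} where
  toFun S := ⟨S.1.map σ.toEmbedding, by rw [Finset.card_map]; exact S.2⟩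
  invFun S := ⟨S.1.map σ.symm.toEmbedding, by rw [Finset.card_map]; exact S.2⟩
  left_inv S := Subtype.ext (by ext x; simp [Finset.mem_map_equiv])
  right_inv S := Subtype.ext (by ext x; simp [Finset.mem_map_equiv])

def permIso (σ : Equiv.Perm (Fin k)) : setGraph ℓ k ≃g setGraph ℓ k where
  toEquiv := Equiv.sumCongr (subMapEquiv ℓ σ) (subMapEquiv (k - ℓ) σ)
  map_rel_iff' := by
    intro x y
    cases x <;> cases y <;>
      simp [Equiv.sumCongr, adj_inl_inr, adj_inr_inl, not_adj_inl_inl, not_adj_inr_inr,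
        subMapEquiv, Finset.map_subset_map]

def vset (v : ({S : Finset (Fin k) // S.card = ℓ} ⊕ {T : Finset (Fin k) // T.card = k - ℓ})) :
    Finset (Fin k) := Sum.elim Subtype.val Subtype.val v

lemma vset_permIso (σ : Equiv.Perm (Fin k))
    (v : ({S : Finset (Fin k) // S.card = ℓ} ⊕ {T : Finset (Fin k) // T.card = k - ℓ})) :
    vset ((permIso σ : setGraph ℓ k ≃g setGraph ℓ k) v) = (vset v).map σ.toEmbedding := by
  cases v <;> rfl


lemma permIso_inl (σ : Equiv.Perm (Fin k)) (S : {S : Finset (Fin k) // S.card = ℓ}) :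
    (permIso σ : setGraph ℓ k ≃g setGraph ℓ k) (Sum.inl S) = Sum.inl (subMapEquiv ℓ σ S) := rfl

lemma permIso_inr (σ : Equiv.Perm (Fin k)) (T : {T : Finset (Fin k) // T.card = k - ℓ}) :
    (permIso σ : setGraph ℓ k ≃g setGraph ℓ k) (Sum.inr T) = Sum.inr (subMapEquiv (k - ℓ) σ T) := rfl

lemma mem_vset_swap {a b x : Fin k}
    {v : ({S : Finset (Fin k) // S.card = ℓ} ⊕ {T : Finset (Fin k) // T.card = k - ℓ})} :
    x ∈ vset ((permIso (Equiv.swap a b) : setGraph ℓ k ≃g setGraph ℓ k) v) ↔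
      Equiv.swap a b x ∈ vset v := by
  rw [vset_permIso, mem_map_swap]

lemma permIso_swap_invol (a b : Fin k)
    (v : ({S : Finset (Fin k) // S.card = ℓ} ⊕ {T : Finset (Fin k) // T.card = k - ℓ})) :
    (permIso (Equiv.swap a b) : setGraph ℓ k ≃g setGraph ℓ k)
      ((permIso (Equiv.swap a b) : setGraph ℓ k ≃g setGraph ℓ k) v) = v := by
  cases v with
  | inl S =>
    rw [permIso_inl, permIso_inl]
    refine congrArg _ (Subtype.ext ?_)
    ext x
    simp only [subMapEquiv, Equiv.coe_fn_mk]
    rw [mem_map_swap, mem_map_swap, Equiv.swap_apply_self]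
  | inr T =>
    rw [permIso_inr, permIso_inr]
    refine congrArg _ (Subtype.ext ?_)
    ext x
    simp only [subMapEquiv, Equiv.coe_fn_mk]
    rw [mem_map_swap, mem_map_swap, Equiv.swap_apply_self]

lemma mem_fixedSet_swap {a b : Fin k}
    {v : ({S : Finset (Fin k) // S.card = ℓ} ⊕ {T : Finset (Fin k) // T.card = k - ℓ})} :
    v ∈ FixedSet (permIso (Equiv.swap a b) : setGraph ℓ k ≃g setGraph ℓ k) ↔
      (a ∈ vset v ↔ b ∈ vset v) := by
  cases v with
  | inl S =>
    show (permIso (Equiv.swap a b) : setGraph ℓ k ≃g setGraph ℓ k) (Sum.inl S) = Sum.inl S ↔ _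
    rw [permIso_inl, Sum.inl.injEq, Subtype.ext_iff]
    exact map_swap_eq_self_iff
  | inr T =>
    show (permIso (Equiv.swap a b) : setGraph ℓ k ≃g setGraph ℓ k) (Sum.inr T) = Sum.inr T ↔ _
    rw [permIso_inr, Sum.inr.injEq, Subtype.ext_iff]
    exact map_swap_eq_self_iff

lemma permIso_range_inl {σ : Equiv.Perm (Fin k)}
    {v : ({S : Finset (Fin k) // S.card = ℓ} ⊕ {T : Finset (Fin k) // T.card = k - ℓ})} :
    (permIso σ : setGraph ℓ k ≃g setGraph ℓ k) v ∈ Set.range Sum.inl ↔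
      v ∈ Set.range Sum.inl := by
  cases v <;> simp [permIso_inl, permIso_inr]

lemma permIso_range_inr {σ : Equiv.Perm (Fin k)}
    {v : ({S : Finset (Fin k) // S.card = ℓ} ⊕ {T : Finset (Fin k) // T.card = k - ℓ})} :
    (permIso σ : setGraph ℓ k ≃g setGraph ℓ k) v ∈ Set.range Sum.inr ↔
      v ∈ Set.range Sum.inr := by
  cases v <;> simp [permIso_inl, permIso_inr]

def sideA (a b : Fin k) :
    Set ({S : Finset (Fin k) // S.card = ℓ} ⊕ {T : Finset (Fin k) // T.card = k - ℓ}) :=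
  {v | a ∈ vset v ∧ b ∉ vset v}

lemma mem_sideA {a b : Fin k}
    {v : ({S : Finset (Fin k) // S.card = ℓ} ⊕ {T : Finset (Fin k) // T.card = k - ℓ})} :
    v ∈ (sideA a b : Set _) ↔ a ∈ vset v ∧ b ∉ vset v := Iff.rfl

lemma cover (a b : Fin k)
    (v : ({S : Finset (Fin k) // S.card = ℓ} ⊕ {T : Finset (Fin k) // T.card = k - ℓ})) :
    v ∈ (sideA a b : Set _) ∨ v ∈ (sideA b a : Set _) ∨ (a ∈ vset v ↔ b ∈ vset v) := by
  rw [mem_sideA, mem_sideA]; tauto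

lemma no_adj_AB {a b : Fin k} {u v} (h : (setGraph ℓ k).Adj u v)
    (hu : u ∈ (sideA a b : Set _)) (hv : v ∈ (sideA b a : Set _)) : False := by
  obtain ⟨S, T, hST, (⟨rfl, rfl⟩ | ⟨rfl, rfl⟩)⟩ := h
  · exact hv.2 (hST hu.1)
  · exact hu.2 (hST hv.1)

lemma walk_meets {a b : Fin k} :
    ∀ {x y : ({S : Finset (Fin k) // S.card = ℓ} ⊕ {T : Finset (Fin k) // T.card = k - ℓ})}
      (w : (setGraph ℓ k).Walk x y), x ∈ (sideA a b : Set _) → y ∈ (sideA b a : Set _) →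
      ∃ v ∈ w.support, v ∈ FixedSet (permIso (Equiv.swap a b) : setGraph ℓ k ≃g setGraph ℓ k) := by
  intro x y w
  induction w with
  | nil =>
    intro hx hy
    exact absurd hx.1 hy.2
  | @cons x u y h p ih =>
    intro hx hy
    rcases cover a b u with hu | hu | hu
    · obtain ⟨z, hz, hzF⟩ := ih hu hy
      exact ⟨z, by simp [hz], hzF⟩
    · exact (no_adj_AB h hx hu).elim
    · exact ⟨u, by simp, mem_fixedSet_swap.mpr hu⟩

lemma nice_swap (a b : Fin k) :
    IsNiceTriple (setGraph ℓ k) (sideA a b) (sideA b a) (permIso (Equiv.swap a b)) := by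
  refine ⟨permIso_swap_invol a b, ?_, ?_, ?_, ?_, ?_, ?_⟩
  · rw [Set.disjoint_left]
    rintro v ⟨h1, h2⟩ ⟨h3, h4⟩
    exact h2 h3
  · rw [Set.disjoint_left]
    rintro v ⟨h1, h2⟩ hF
    exact h2 ((mem_fixedSet_swap.mp hF).mp h1)
  · rw [Set.disjoint_left]
    rintro v ⟨h1, h2⟩ hF
    exact h2 ((mem_fixedSet_swap.mp hF).mpr h1)
  · ext v
    simp only [Set.mem_union, Set.mem_univ, iff_true]
    rcases cover a b v with h | h | h
    · exact Or.inl (Or.inl h)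
    · exact Or.inl (Or.inr h)
    · exact Or.inr (mem_fixedSet_swap.mpr h)
  · intro x hx y hy w
    exact walk_meets w hx hy
  · ext v
    simp only [Set.mem_image]
    constructor
    · rintro ⟨u, hu, rfl⟩
      refine ⟨?_, ?_⟩
      · rw [mem_vset_swap, Equiv.swap_apply_right]; exact hu.1
      · rw [mem_vset_swap, Equiv.swap_apply_left]; exact hu.2
    · intro hv
      refine ⟨(permIso (Equiv.swap a b) : setGraph ℓ k ≃g setGraph ℓ k) v,
        ⟨?_, ?_⟩, permIso_swap_invol a b v⟩
      · rw [mem_vset_swap, Equiv.swap_apply_left]; exact hv.1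
      · rw [mem_vset_swap, Equiv.swap_apply_right]; exact hv.2


abbrev Vt (ℓ k : ℕ) := ({S : Finset (Fin k) // S.card = ℓ} ⊕ {T : Finset (Fin k) // T.card = k - ℓ})

def ChainTo (R X : Set (Vt ℓ k)) : Prop :=
  ∃ (m : ℕ) (A B : ℕ → Set (Vt ℓ k)) (φ : ℕ → (setGraph ℓ k ≃g setGraph ℓ k))
    (Rs : ℕ → Set (Vt ℓ k)),
      Rs 0 = R ∧ Rs m = X ∧
      ∀ j < m, IsNiceTriple (setGraph ℓ k) (A j) (B j) (φ j) ∧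
        IsAdmissible (Set.range Sum.inl) (Set.range Sum.inr) (A j) (B j) (φ j) (Rs j) ∧
        Rs (j + 1) = psiSet (A j) (φ j) (Rs j)

lemma chain_refl (X : Set (Vt ℓ k)) : ChainTo X X :=
  ⟨0, fun _ => ∅, fun _ => ∅, fun _ => permIso 1, fun _ => X, rfl, rfl,
    fun j hj => absurd hj (Nat.not_lt_zero j)⟩

lemma chain_cons {R X A₀ B₀ : Set (Vt ℓ k)} {φ₀ : setGraph ℓ k ≃g setGraph ℓ k}
    (h1 : IsNiceTriple (setGraph ℓ k) A₀ B₀ φ₀)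
    (h2 : IsAdmissible (Set.range Sum.inl) (Set.range Sum.inr) A₀ B₀ φ₀ R)
    (h3 : ChainTo (psiSet A₀ φ₀ R) X) : ChainTo R X := by
  obtain ⟨m, A, B, φ, Rs, h0, hm, hstep⟩ := h3
  refine ⟨m + 1, fun j => if j = 0 then A₀ else A (j - 1),
    fun j => if j = 0 then B₀ else B (j - 1),
    fun j => if j = 0 then φ₀ else φ (j - 1),
    fun j => if j = 0 then R else Rs (j - 1), by simp, by simp [hm], ?_⟩
  intro j hj
  cases j with
  | zero =>
    refine ⟨by simpa using h1, by simpa using h2, ?_⟩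
    simpa using h0
  | succ i =>
    have hi : i < m := by omega
    obtain ⟨t1, t2, t3⟩ := hstep i hi
    refine ⟨by simpa using t1, by simpa using t2, ?_⟩
    simpa using t3

def famSet (X : Set (Vt ℓ k)) (P : Finset (Fin k) → Prop) : Set (Vt ℓ k) :=
  {v | v ∈ X ∧ P (vset v)}

lemma mem_famSet {X : Set (Vt ℓ k)} {P : Finset (Fin k) → Prop} {v : Vt ℓ k} :
    v ∈ famSet X P ↔ v ∈ X ∧ P (vset v) := Iff.rfl

section Part

variable {X : Set (Vt ℓ k)} {r : ℕ}
variable (hX : (X = Set.range Sum.inl ∧ r = ℓ) ∨ (X = Set.range Sum.inr ∧ r = k - ℓ))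
include hX

lemma part_card : ∀ v ∈ X, (vset v).card = r := by
  rcases hX with ⟨rfl, rfl⟩ | ⟨rfl, rfl⟩ <;> rintro v ⟨w, rfl⟩ <;> exact w.2

lemma part_exists : ∀ s : Finset (Fin k), s.card = r → ∃ v ∈ X, vset v = s := by
  rcases hX with ⟨rfl, rfl⟩ | ⟨rfl, rfl⟩ <;> intro s hs
  · exact ⟨Sum.inl ⟨s, hs⟩, ⟨⟨s, hs⟩, rfl⟩, rfl⟩
  · exact ⟨Sum.inr ⟨s, hs⟩, ⟨⟨s, hs⟩, rfl⟩, rfl⟩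

lemma part_inj : ∀ u ∈ X, ∀ v ∈ X, vset u = vset v → u = v := by
  rcases hX with ⟨rfl, rfl⟩ | ⟨rfl, rfl⟩ <;> rintro u ⟨u', rfl⟩ v ⟨v', rfl⟩ h <;>
    exact congrArg _ (Subtype.ext h)

lemma part_swap_mem {a b : Fin k} {v : Vt ℓ k} :
    (permIso (Equiv.swap a b) : setGraph ℓ k ≃g setGraph ℓ k) v ∈ X ↔ v ∈ X := by
  rcases hX with ⟨rfl, rfl⟩ | ⟨rfl, rfl⟩
  · exact permIso_range_inl
  · exact permIso_range_inr

lemma part_sub : X = Set.range Sum.inl ∨ X = Set.range Sum.inr := by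
  rcases hX with ⟨rfl, _⟩ | ⟨rfl, _⟩
  · exact Or.inl rfl
  · exact Or.inr rfl

lemma chain_step (a b : Fin k) (P Q : Finset (Fin k) → Prop)
    (hAF : ∃ s : Finset (Fin k), s.card = r ∧ P s ∧ ¬(b ∈ s ∧ a ∉ s))
    (hBF : ∃ s : Finset (Fin k), s.card = r ∧ P s ∧ ¬(a ∈ s ∧ b ∉ s))
    (hQ : ∀ s : Finset (Fin k), s.card = r →
      (Q s ↔ ((P s ∧ ¬(b ∈ s ∧ a ∉ s)) ∨
        (P (s.map (Equiv.swap a b).toEmbedding) ∧ (b ∈ s ∧ a ∉ s)))))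
    (hchain : ChainTo (famSet X Q) X) : ChainTo (famSet X P) X := by
  have hpsi : psiSet (sideA a b) (permIso (Equiv.swap a b)) (famSet X P) = famSet X Q := by
    ext v
    simp only [psiSet, Set.mem_union, Set.mem_inter_iff, Set.mem_image, mem_famSet]
    constructor
    · rintro (⟨⟨hvX, hP⟩, hAorF⟩ | ⟨u, ⟨⟨huX, hPu⟩, huA⟩, rfl⟩)
      · refine ⟨hvX, (hQ _ (part_card hX v hvX)).mpr (Or.inl ⟨hP, ?_⟩)⟩
        rcases hAorF with hA | hF
        · exact fun hB => hB.2 hA.1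
        · exact fun hB => hB.2 ((mem_fixedSet_swap.mp hF).mpr hB.1)
      · have huX' : (permIso (Equiv.swap a b) : setGraph ℓ k ≃g setGraph ℓ k) u ∈ X :=
          (part_swap_mem hX).mpr huX
        refine ⟨huX', ?_⟩
        rw [hQ _ (part_card hX _ huX')]
        right
        refine ⟨?_, ?_, ?_⟩
        · have hmm : (vset ((permIso (Equiv.swap a b) : setGraph ℓ k ≃g setGraph ℓ k) u)).map
              (Equiv.swap a b).toEmbedding = vset u := by
            ext x; rw [mem_map_swap, mem_vset_swap, Equiv.swap_apply_self]
          rw [hmm]; exact hPu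
        · rw [mem_vset_swap, Equiv.swap_apply_right]; exact huA.1
        · rw [mem_vset_swap, Equiv.swap_apply_left]; exact huA.2
    · rintro ⟨hvX, hQv⟩
      rcases (hQ _ (part_card hX v hvX)).mp hQv with ⟨hP, hnB⟩ | ⟨hPm, hB⟩
      · left
        refine ⟨⟨hvX, hP⟩, ?_⟩
        rcases cover a b v with h | h | h
        · exact Or.inl h
        · exact (hnB ⟨h.1, h.2⟩).elim
        · exact Or.inr (mem_fixedSet_swap.mpr h)
      · right
        refine ⟨(permIso (Equiv.swap a b) : setGraph ℓ k ≃g setGraph ℓ k) v,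
          ⟨⟨(part_swap_mem hX).mpr hvX, ?_⟩, ?_, ?_⟩, permIso_swap_invol a b v⟩
        · rw [vset_permIso]; exact hPm
        · rw [mem_vset_swap, Equiv.swap_apply_left]; exact hB.1
        · rw [mem_vset_swap, Equiv.swap_apply_right]; exact hB.2
  refine chain_cons (nice_swap a b) ⟨?_, ?_, ?_⟩ (by rw [hpsi]; exact hchain)
  · rcases part_sub hX with h | h
    · exact Or.inl (fun v hv => h ▸ hv.1)
    · exact Or.inr (fun v hv => h ▸ hv.1)
  · obtain ⟨s, hs, hPs, hnB⟩ := hAF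
    obtain ⟨v, hvX, hvs⟩ := part_exists hX s hs
    refine ⟨v, ⟨hvX, by rw [hvs]; exact hPs⟩, ?_⟩
    rcases cover a b v with h | h | h
    · exact Or.inl h
    · exact (hnB (by rw [← hvs]; exact ⟨h.1, h.2⟩)).elim
    · exact Or.inr (mem_fixedSet_swap.mpr h)
  · obtain ⟨s, hs, hPs, hnA⟩ := hBF
    obtain ⟨v, hvX, hvs⟩ := part_exists hX s hs
    refine ⟨v, ⟨hvX, by rw [hvs]; exact hPs⟩, ?_⟩
    rcases cover a b v with h | h | h
    · exact (hnA (by rw [← hvs]; exact ⟨h.1, h.2⟩)).elim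
    · exact Or.inl h
    · exact Or.inr (mem_fixedSet_swap.mpr h)


lemma phase3 (hr1 : 1 ≤ r) (hrk : r < k) :
    ∀ (n : ℕ) (M : Finset (Fin k)), r + 1 ≤ M.card → Mᶜ.card = n →
      ChainTo (famSet X (fun s => s ⊆ M)) X := by
  intro n
  induction n with
  | zero =>
    intro M hM hc
    have hMu : M = Finset.univ := by
      have h0 := Finset.card_eq_zero.mp hc
      rwa [Finset.compl_eq_empty_iff] at h0
    subst hMu
    have hfam : famSet X (fun s => s ⊆ Finset.univ) = X := by
      ext v; simp [mem_famSet]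
    rw [hfam]; exact chain_refl X
  | succ n ih =>
    intro M hM hc
    have hbne : Mᶜ.Nonempty := by rw [← Finset.card_pos, hc]; omega
    obtain ⟨b, hb⟩ := hbne
    have hbM : b ∉ M := Finset.mem_compl.mp hb
    have hkcard : Fintype.card (Fin k) = k := Fintype.card_fin k
    have hMcard : M.card + (n + 1) = k := by
      have := Finset.card_compl M
      rw [hkcard] at this
      have hle := Finset.card_le_univ M
      rw [hkcard] at hle
      omega
    have tail : ChainTo (famSet X
        (fun s => s ⊆ M ∨ (b ∈ s ∧ s.erase b ⊆ M ∧ ∃ x ∈ M, x ∉ s))) X := by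
      have h1 : famSet X (fun s => s ⊆ M ∨ (b ∈ s ∧ s.erase b ⊆ M ∧ ∃ x ∈ M, x ∉ s)) =
          famSet X (fun s => s ⊆ insert b M) := by
        ext v
        simp only [mem_famSet]
        constructor
        · rintro ⟨hvX, h⟩
          refine ⟨hvX, ?_⟩
          rcases h with h | ⟨hbs, hsub, -⟩
          · exact h.trans (Finset.subset_insert _ _)
          · intro x hx
            rcases eq_or_ne x b with rfl | hxb
            · exact Finset.mem_insert_self _ _
            · exact Finset.mem_insert_of_mem (hsub (Finset.mem_erase.mpr ⟨hxb, hx⟩))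
        · rintro ⟨hvX, h⟩
          refine ⟨hvX, ?_⟩
          by_cases hbs : b ∈ vset v
          · right
            have hsub : (vset v).erase b ⊆ M := by
              intro x hx
              rcases Finset.mem_insert.mp (h (Finset.mem_of_mem_erase hx)) with rfl | hxM
              · exact absurd rfl (Finset.ne_of_mem_erase hx)
              · exact hxM
            refine ⟨hbs, hsub, ?_⟩
            by_contra hcon
            push_neg at hcon
            have hMsub : M ⊆ (vset v).erase b := fun x hx =>
              Finset.mem_erase.mpr ⟨fun he => hbM (he ▸ hx), hcon x hx⟩
            have hcc := Finset.card_le_card hMsub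
            rw [Finset.card_erase_of_mem hbs, part_card hX v hvX] at hcc
            omega
          · left
            intro x hx
            rcases Finset.mem_insert.mp (h hx) with rfl | hxM
            · exact absurd hx hbs
            · exact hxM
      rw [h1]
      apply ih (insert b M)
      · rw [Finset.card_insert_of_notMem hbM]; omega
      · have := Finset.card_compl (insert b M)
        rw [hkcard, Finset.card_insert_of_notMem hbM] at this
        omega
    have inner : ∀ (j : ℕ) (P : Finset (Fin k)), P ⊆ M → (M \ P).card = j →
        ChainTo (famSet X
          (fun s => s ⊆ M ∨ (b ∈ s ∧ s.erase b ⊆ M ∧ ∃ x ∈ P, x ∉ s))) X := by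
      intro j
      induction j with
      | zero =>
        intro P hPM hPc
        have hPM' : P = M := Finset.Subset.antisymm hPM
          (Finset.sdiff_eq_empty_iff_subset.mp (Finset.card_eq_zero.mp hPc))
        rw [hPM']
        exact tail
      | succ j ihj =>
        intro P hPM hPc
        have hne : (M \ P).Nonempty := by rw [← Finset.card_pos, hPc]; omega
        obtain ⟨aa, ha⟩ := hne
        have haM : aa ∈ M := (Finset.mem_sdiff.mp ha).1
        have haP : aa ∉ P := (Finset.mem_sdiff.mp ha).2
        have hanb : aa ≠ b := fun h => hbM (h ▸ haM)
        apply chain_step hX aa b _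
          (fun s => s ⊆ M ∨ (b ∈ s ∧ s.erase b ⊆ M ∧ ∃ x ∈ insert aa P, x ∉ s))
        · -- hAF
          have hle : r - 1 ≤ (M.erase aa).card := by
            rw [Finset.card_erase_of_mem haM]; omega
          obtain ⟨t, hts, htc⟩ := Finset.exists_subset_card_eq hle
          have hat : aa ∉ t := fun h => (Finset.mem_erase.mp (hts h)).1 rfl
          refine ⟨insert aa t, ?_, ?_, ?_⟩
          · rw [Finset.card_insert_of_notMem hat, htc]; omega
          · exact Or.inl (Finset.insert_subset_iff.mpr
              ⟨haM, hts.trans (Finset.erase_subset _ _)⟩)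
          · exact fun h => h.2 (Finset.mem_insert_self _ _)
        · -- hBF
          have hle : r ≤ (M.erase aa).card := by
            rw [Finset.card_erase_of_mem haM]; omega
          obtain ⟨t, hts, htc⟩ := Finset.exists_subset_card_eq hle
          have hat : aa ∉ t := fun h => (Finset.mem_erase.mp (hts h)).1 rfl
          refine ⟨t, htc, Or.inl (hts.trans (Finset.erase_subset _ _)), fun h => hat h.1⟩
        · -- hQ
          intro s hs
          constructor
          · intro h
            by_cases hB : b ∈ s ∧ aa ∉ s
            · right
              refine ⟨?_, hB⟩
              rw [map_swap_of_mem hB.1 hB.2]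
              left
              rcases h with h | ⟨hbs, hsub, -⟩
              · exact absurd (h hB.1) hbM
              · exact Finset.insert_subset_iff.mpr ⟨haM, hsub⟩
            · left
              refine ⟨?_, hB⟩
              rcases h with h | ⟨hbs, hsub, hex⟩
              · exact Or.inl h
              · obtain ⟨x, hxP, hxs⟩ := hex
                rcases Finset.mem_insert.mp hxP with rfl | hxP'
                · exact absurd ⟨hbs, hxs⟩ hB
                · exact Or.inr ⟨hbs, hsub, ⟨x, hxP', hxs⟩⟩
          · rintro (⟨h, hB⟩ | ⟨h, hB⟩)
            · rcases h with h | ⟨hbs, hsub, x, hxP, hxs⟩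
              · exact Or.inl h
              · exact Or.inr ⟨hbs, hsub, x, Finset.mem_insert_of_mem hxP, hxs⟩
            · rw [map_swap_of_mem hB.1 hB.2] at h
              right
              refine ⟨hB.1, ?_, ⟨aa, Finset.mem_insert_self _ _, hB.2⟩⟩
              rcases h with h | ⟨hbs, hsub, hex⟩
              · exact fun x hx => h (Finset.mem_insert_of_mem hx)
              · rcases Finset.mem_insert.mp hbs with h' | h'
                · exact absurd h' hanb.symm
                · exact absurd h' (Finset.notMem_erase _ _)
        · -- tail chain
          apply ihj (insert aa P) (Finset.insert_subset_iff.mpr ⟨haM, hPM⟩)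
          rw [Finset.sdiff_insert, Finset.card_erase_of_mem ha, hPc]
          omega
    have h0 : famSet X (fun s => s ⊆ M) = famSet X
        (fun s => s ⊆ M ∨ (b ∈ s ∧ s.erase b ⊆ M ∧ ∃ x ∈ (∅ : Finset (Fin k)), x ∉ s)) := by
      ext v
      simp [mem_famSet]
    rw [h0]
    exact inner M.card ∅ (Finset.empty_subset M) (by simp)


lemma phase1b (hr1 : 1 ≤ r) (hrk : r < k) (S : Finset (Fin k)) (hS : S.card = r)
    (a b : Fin k) (haS : a ∈ S) (hbS : b ∉ S) :
    ∀ (j : ℕ) (D : Finset (Fin k)), D ⊆ S.erase a → ((S.erase a) \ D).card = j →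
      ChainTo (famSet X (fun s => ∃ d ∈ insert b (insert a D), s = (insert b S).erase d)) X := by
  have hMb : b ∈ insert b S := Finset.mem_insert_self b S
  have hMa : a ∈ insert b S := Finset.mem_insert_of_mem haS
  have hab : a ≠ b := fun h => hbS (h ▸ haS)
  have hMcard : (insert b S).card = r + 1 := by
    rw [Finset.card_insert_of_notMem hbS, hS]
  intro j
  induction j with
  | zero =>
    intro D hD hDc
    have hDeq : D = S.erase a := Finset.Subset.antisymm hD
      (Finset.sdiff_eq_empty_iff_subset.mp (Finset.card_eq_zero.mp hDc))
    subst hDeq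
    rw [Finset.insert_erase haS]
    have h1 : famSet X (fun s => ∃ d ∈ insert b S, s = (insert b S).erase d) =
        famSet X (fun s => s ⊆ insert b S) := by
      ext v
      simp only [mem_famSet]
      constructor
      · rintro ⟨hvX, d, hd, hvd⟩
        refine ⟨hvX, ?_⟩
        rw [hvd]
        exact Finset.erase_subset _ _
      · rintro ⟨hvX, hsub⟩
        refine ⟨hvX, ?_⟩
        have hvc := part_card hX v hvX
        have hne : ((insert b S) \ vset v).Nonempty := by
          rw [← Finset.card_pos, Finset.card_sdiff_of_subset hsub, hMcard, hvc]
          omega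
        obtain ⟨c, hc⟩ := hne
        have hcM : c ∈ insert b S := (Finset.mem_sdiff.mp hc).1
        have hcv : c ∉ vset v := (Finset.mem_sdiff.mp hc).2
        refine ⟨c, hcM, ?_⟩
        have hsub' : vset v ⊆ (insert b S).erase c := fun x hx =>
          Finset.mem_erase.mpr ⟨fun he => hcv (he ▸ hx), hsub hx⟩
        refine Finset.eq_of_subset_of_card_le hsub' ?_
        rw [Finset.card_erase_of_mem hcM, hMcard, hvc]
        omega
    rw [h1]
    exact phase3 hX hr1 hrk _ (insert b S) (le_of_eq hMcard.symm) rfl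
  | succ j ihj =>
    intro D hD hDc
    have hne : ((S.erase a) \ D).Nonempty := by rw [← Finset.card_pos, hDc]; omega
    obtain ⟨c, hc⟩ := hne
    have hcSa : c ∈ S.erase a := (Finset.mem_sdiff.mp hc).1
    have hcS : c ∈ S := Finset.mem_of_mem_erase hcSa
    have hca : c ≠ a := (Finset.mem_erase.mp hcSa).1
    have hcb : c ≠ b := fun h => hbS (h ▸ hcS)
    have hcM : c ∈ insert b S := Finset.mem_insert_of_mem hcS
    apply chain_step hX c b _
      (fun s => ∃ d ∈ insert b (insert a (insert c D)), s = (insert b S).erase d)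
    · -- hAF : witness (insert b S).erase b = S
      refine ⟨(insert b S).erase b, ?_, ⟨b, Finset.mem_insert_self _ _, rfl⟩, ?_⟩
      · rw [Finset.card_erase_of_mem hMb, hMcard]
        omega
      · exact fun h => (Finset.notMem_erase b _) h.1

    · -- hBF : witness (insert b S).erase a
      refine ⟨(insert b S).erase a, ?_, ⟨a, Finset.mem_insert_of_mem (Finset.mem_insert_self _ _), rfl⟩, ?_⟩
      · rw [Finset.card_erase_of_mem hMa, hMcard]
        omega
      · exact fun h => h.2 (Finset.mem_erase.mpr ⟨(Ne.symm hab), hMb⟩)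
    · -- hQ
      intro s hs
      constructor
      · rintro ⟨d, hd, rfl⟩
        rcases eq_or_ne d c with hdc | hdc
        · -- s = M.erase c : the B side
          rw [hdc]
          have hB : b ∈ (insert b S).erase c ∧ c ∉ (insert b S).erase c := by
            exact ⟨Finset.mem_erase.mpr ⟨Ne.symm hcb, hMb⟩, Finset.notMem_erase _ _⟩
          refine Or.inr ⟨?_, hB⟩
          rw [map_swap_of_mem hB.1 hB.2]
          refine ⟨b, Finset.mem_insert_self _ _, ?_⟩
          rw [Finset.erase_right_comm, Finset.insert_erase
            (Finset.mem_erase.mpr ⟨hcb, hcM⟩)]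
        · -- d ≠ c : the (A ∪ F) side
          have hdIdx : d ∈ insert b (insert a D) := by
            rcases Finset.mem_insert.mp hd with rfl | hd'
            · exact Finset.mem_insert_self _ _
            rcases Finset.mem_insert.mp hd' with rfl | hd''
            · exact Finset.mem_insert_of_mem (Finset.mem_insert_self _ _)
            rcases Finset.mem_insert.mp hd'' with rfl | hd3
            · exact absurd rfl hdc
            · exact Finset.mem_insert_of_mem (Finset.mem_insert_of_mem hd3)
          refine Or.inl ⟨⟨d, hdIdx, rfl⟩, ?_⟩
          exact fun h => h.2 (Finset.mem_erase.mpr ⟨Ne.symm hdc, hcM⟩)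
      · rintro (⟨⟨d, hd, rfl⟩, hnB⟩ | ⟨⟨d, hd, heq⟩, hB⟩)
        · -- monotone in index set
          refine ⟨d, ?_, rfl⟩
          rcases Finset.mem_insert.mp hd with rfl | hd'
          · exact Finset.mem_insert_self _ _
          rcases Finset.mem_insert.mp hd' with rfl | hd''
          · exact Finset.mem_insert_of_mem (Finset.mem_insert_self _ _)
          · exact Finset.mem_insert_of_mem
              (Finset.mem_insert_of_mem (Finset.mem_insert_of_mem hd''))
        · -- reflected element : s = M.erase c
          rw [map_swap_of_mem hB.1 hB.2] at heq
          have hdb : d = b := by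
            by_contra hdb
            have hbMd : b ∈ (insert b S).erase d := Finset.mem_erase.mpr ⟨Ne.symm hdb, hMb⟩
            rw [← heq] at hbMd
            rcases Finset.mem_insert.mp hbMd with h' | h'
            · exact hcb h'.symm
            · exact (Finset.notMem_erase b s) h'
          rw [hdb] at heq
          have hserase : s.erase b = ((insert b S).erase b).erase c := by
            rw [← heq, Finset.erase_insert (fun h => hB.2 (Finset.mem_of_mem_erase h))]
          refine ⟨c, Finset.mem_insert_of_mem
            (Finset.mem_insert_of_mem (Finset.mem_insert_self _ _)), ?_⟩
          have h1 : (insert b S).erase b = S := Finset.erase_insert hbS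
          have h2 : s = insert b (S.erase c) := by
            calc s = insert b (s.erase b) := (Finset.insert_erase hB.1).symm
            _ = insert b (((insert b S).erase b).erase c) := by rw [hserase]
            _ = insert b (S.erase c) := by rw [h1]
          rw [h2, Finset.erase_insert_of_ne (Ne.symm hcb)]
    · -- tail
      apply ihj (insert c D) (Finset.insert_subset_iff.mpr ⟨hcSa, hD⟩)
      rw [Finset.sdiff_insert, Finset.card_erase_of_mem hc, hDc]
      omega


lemma main_lemma (hr1 : 1 ≤ r) (hrk : r < k) (R : Set (Vt ℓ k))
    (hRX : R ⊆ X) (hR2 : R.ncard = 2) : ChainTo R X := by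
  obtain ⟨u, v, huv, rfl⟩ := Set.ncard_eq_two.mp hR2
  have huX : u ∈ X := hRX (by simp)
  have hvX : v ∈ X := hRX (by simp)
  have hS1 : (vset u).card = r := part_card hX u huX
  have hS2 : (vset v).card = r := part_card hX v hvX
  have hSne : vset u ≠ vset v := fun h => huv (part_inj hX u huX v hvX h)
  have hane : (vset u \ vset v).Nonempty := by
    by_contra h
    rw [Finset.not_nonempty_iff_eq_empty, Finset.sdiff_eq_empty_iff_subset] at h
    exact hSne (Finset.eq_of_subset_of_card_le h (by rw [hS1, hS2]))
  have hbne : (vset v \ vset u).Nonempty := by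
    by_contra h
    rw [Finset.not_nonempty_iff_eq_empty, Finset.sdiff_eq_empty_iff_subset] at h
    exact hSne (Finset.eq_of_subset_of_card_le h (by rw [hS1, hS2])).symm
  obtain ⟨a, ha⟩ := hane
  obtain ⟨b, hb⟩ := hbne
  have haS1 : a ∈ vset u := (Finset.mem_sdiff.mp ha).1
  have haS2 : a ∉ vset v := (Finset.mem_sdiff.mp ha).2
  have hbS2 : b ∈ vset v := (Finset.mem_sdiff.mp hb).1
  have hbS1 : b ∉ vset u := (Finset.mem_sdiff.mp hb).2
  have hab : a ≠ b := fun h => hbS1 (h ▸ haS1)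
  have hRfam : ({u, v} : Set (Vt ℓ k)) =
      famSet X (fun s => s = vset u ∨ s = vset v) := by
    ext w
    simp only [Set.mem_insert_iff, Set.mem_singleton_iff, mem_famSet]
    constructor
    · rintro (rfl | rfl)
      · exact ⟨huX, Or.inl rfl⟩
      · exact ⟨hvX, Or.inr rfl⟩
    · rintro ⟨hwX, (h | h)⟩
      · exact Or.inl (part_inj hX w hwX u huX h)
      · exact Or.inr (part_inj hX w hwX v hvX h)
  rw [hRfam]
  apply chain_step hX a b _
    (fun s => ∃ d ∈ insert b (insert a (∅ : Finset (Fin k))), s = (insert b (vset u)).erase d)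
  · exact ⟨vset u, hS1, Or.inl rfl, fun h => hbS1 h.1⟩
  · exact ⟨vset v, hS2, Or.inr rfl, fun h => haS2 h.1⟩
  · intro s hs
    constructor
    · rintro ⟨d, hd, rfl⟩
      rcases Finset.mem_insert.mp hd with hdb | hd'
      · rw [hdb, Finset.erase_insert hbS1]
        exact Or.inl ⟨Or.inl rfl, fun h => hbS1 h.1⟩
      rcases Finset.mem_insert.mp hd' with hda | hd''
      · rw [hda]
        have hB : b ∈ (insert b (vset u)).erase a ∧ a ∉ (insert b (vset u)).erase a :=
          ⟨Finset.mem_erase.mpr ⟨Ne.symm hab, Finset.mem_insert_self _ _⟩,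
            Finset.notMem_erase _ _⟩
        refine Or.inr ⟨?_, hB⟩
        rw [map_swap_of_mem hB.1 hB.2, Finset.erase_right_comm,
          Finset.erase_insert hbS1, Finset.insert_erase haS1]
        exact Or.inl rfl
      · exact absurd hd'' (Finset.notMem_empty d)
    · rintro (⟨(rfl | rfl), hnB⟩ | ⟨(h | h), hB⟩)
      · exact ⟨b, Finset.mem_insert_self _ _, (Finset.erase_insert hbS1).symm⟩
      · exact absurd ⟨hbS2, haS2⟩ hnB
      · rw [map_swap_of_mem hB.1 hB.2] at h
        have h1 : s.erase b = (vset u).erase a := by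
          rw [← h, Finset.erase_insert (fun hx => hB.2 (Finset.mem_of_mem_erase hx))]
        have h2 : s = insert b ((vset u).erase a) := by
          rw [← h1, Finset.insert_erase hB.1]
        refine ⟨a, Finset.mem_insert_of_mem (Finset.mem_insert_self _ _), ?_⟩
        rw [h2, Finset.erase_insert_of_ne (Ne.symm hab)]
      · rw [map_swap_of_mem hB.1 hB.2] at h
        exact absurd (h ▸ Finset.mem_insert_self a _) haS2
  · exact phase1b hX hr1 hrk (vset u) hS1 a b haS1 hbS1 ((vset u).erase a \ ∅).card ∅
      (Finset.empty_subset _) rfl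

end Part

end Graph

end SetGraphAux

/-- For any integers `1 ≤ ℓ < k/2`, the bipartite graph `H_{ℓ,k}` is reflective
(with respect to its bipartition into `ℓ`-sets and `(k-ℓ)`-sets). -/
theorem setGraph_reflective (ℓ k : ℕ) (hℓ : 1 ≤ ℓ) (hk : 2 * ℓ < k) :
    IsReflective (setGraph ℓ k) (Set.range Sum.inl) (Set.range Sum.inr) := by
  intro X hX12 R hRX hR2
  rcases hX12 with rfl | rfl
  · exact SetGraphAux.main_lemma (Or.inl ⟨rfl, rfl⟩) hℓ (by omega) R hRX hR2
  · exact SetGraphAux.main_lemma (Or.inr ⟨rfl, rfl⟩) (by omega) (by omega) R hRX hR2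
end
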